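/- arXiv:1912.12684 — 2 statements merged into one kernel-verified Lean document; each statement's English description precedes it below -/
import Mathlib

section
/- Let Σ and Λ be alphabets, let L be a positive integer, let A, B : Σ → Λ^L assign to each symbol a block of length L, and let a = a_1 ⋯ a_n ∈ Σ^n and b = b_1 ⋯ b_m ∈ Σ^m. Assume α ∈ (0, 1/7), β ∈ [0, 1/7), α ≥ β, R > 0, and that for all i ∈ {1,…,n}, j ∈ {1,…,m} and all substrings C of A(a_i) and D of B(b_j) consisting of consecutive symbols with |C|, |D| ≥ L/R: f̄(C, D) ≥ α if a_i ≠ b_j, and f̄(C, D) ≥ β if a_i = b_j. Let f̃ = f̃(a_1 a_2 ⋯ a_n, b_1 b_2 ⋯ b_m). Then f̄(A(a_1)A(a_2)⋯A(a_n), B(b_1)B(b_2)⋯B(b_m)) > α·f̃ + β·(1 − f̃) − 2/R. -/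
open MeasureTheory

namespace Paper

variable {σ : Type*}

/-- The concatenation of `t` copies of the string `w`. -/
def rep (w : List σ) (t : ℕ) : List σ := (List.replicate t w).flatten

/-- `I` is a match between the strings `a` and `b` (with 0-based indices):
a collection of pairs of indices, strictly increasing in both coordinates,
pairing equal symbols. -/
def IsMatch (a b : List σ) (I : List (ℕ × ℕ)) : Prop :=
  I.Chain' (fun p q => p.1 < q.1 ∧ p.2 < q.2) ∧
  ∀ p ∈ I, p.1 < a.length ∧ p.2 < b.length ∧ a[p.1]? = b[p.2]?

/-- The largest cardinality of a match between `a` and `b`. -/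
noncomputable def maxMatch (a b : List σ) : ℕ :=
  sSup {r | ∃ I, IsMatch a b I ∧ I.length = r}

/-- The `f̄` distance between two strings. -/
noncomputable def fbar (a b : List σ) : ℝ :=
  1 - 2 * (maxMatch a b : ℝ) / (a.length + b.length)

/-- `I` is an approximate match between the strings `a` and `b` (0-based indices):
pairs of indices, nondecreasing in each coordinate and strictly increasing as pairs,
pairing equal symbols, such that the set of indices paired with any given index is
contained in a set of three consecutive indices. -/
def IsApproxMatch (a b : List σ) (I : List (ℕ × ℕ)) : Prop :=
  I.Chain' (fun p q => p.1 ≤ q.1 ∧ p.2 ≤ q.2 ∧ p ≠ q) ∧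
  (∀ p ∈ I, p.1 < a.length ∧ p.2 < b.length ∧ a[p.1]? = b[p.2]?) ∧
  (∀ p ∈ I, (∃ s, ∀ q ∈ I, q.1 = p.1 → q.2 ∈ ({s, s+1, s+2} : Set ℕ)) ∧
            (∃ t, ∀ q ∈ I, q.2 = p.2 → q.1 ∈ ({t, t+1, t+2} : Set ℕ)))

/-- The largest cardinality of an approximate match between `a` and `b`. -/
noncomputable def maxApproxMatch (a b : List σ) : ℕ :=
  sSup {r | ∃ I, IsApproxMatch a b I ∧ I.length = r}

/-- The approximate distance `f̃` between two strings. -/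
noncomputable def ftilde (a b : List σ) : ℝ :=
  max 0 (1 - 2 * (maxApproxMatch a b : ℝ) / (a.length + b.length))

end Paper

open Paper List



open Paper List

section Basics

variable {σ : Type*}

/-- a strictly increasing list of naturals bounded by n has length ≤ n -/
lemma length_le_of_sorted_lt {l : List ℕ} (hs : l.Pairwise (· < ·)) {n : ℕ}
    (hb : ∀ x ∈ l, x < n) : l.length ≤ n := by
  have hnd : l.Nodup := hs.imp (fun h => Nat.ne_of_lt h)
  have : l.toFinset ⊆ Finset.range n := by
    intro x hx
    simp only [List.mem_toFinset] at hx
    exact Finset.mem_range.2 (hb x hx)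
  have := Finset.card_le_card this
  rwa [List.toFinset_card_of_nodup hnd, Finset.card_range] at this

instance matchRelTrans : IsTrans (ℕ × ℕ) (fun p q : ℕ × ℕ => p.1 < q.1 ∧ p.2 < q.2) :=
  ⟨fun _ _ _ h1 h2 => ⟨h1.1.trans h2.1, h1.2.trans h2.2⟩⟩

instance approxRelTrans :
    IsTrans (ℕ × ℕ) (fun p q : ℕ × ℕ => p.1 ≤ q.1 ∧ p.2 ≤ q.2 ∧ p ≠ q) := by
  refine ⟨fun p q r h1 h2 => ⟨h1.1.trans h2.1, h1.2.1.trans h2.2.1, ?_⟩⟩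
  rintro rfl
  have h11 : p.1 = q.1 := le_antisymm h1.1 h2.1
  have h12 : p.2 = q.2 := le_antisymm h1.2.1 h2.2.1
  exact h1.2.2 (Prod.ext h11 h12)

lemma isMatch_pairwise {a b : List σ} {I : List (ℕ × ℕ)} (h : IsMatch a b I) :
    I.Pairwise (fun p q => p.1 < q.1 ∧ p.2 < q.2) :=
  (List.isChain_iff_pairwise.mp h.1)

lemma isMatch_length_le_left {a b : List σ} {I : List (ℕ × ℕ)} (h : IsMatch a b I) :
    I.length ≤ a.length := by
  have hp : (I.map Prod.fst).Pairwise (· < ·) := (isMatch_pairwise h).map _ (fun _ _ h12 => h12.1)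
  have := length_le_of_sorted_lt hp (n := a.length) (by
    intro x hx
    rcases List.mem_map.mp hx with ⟨p, hp', rfl⟩
    exact (h.2 p hp').1)
  simpa using this

lemma matchSet_nonempty (a b : List σ) :
    {r | ∃ I, IsMatch a b I ∧ I.length = r}.Nonempty :=
  ⟨0, [], ⟨List.isChain_nil, by simp⟩, rfl⟩

lemma matchSet_bddAbove (a b : List σ) :
    BddAbove {r | ∃ I, IsMatch a b I ∧ I.length = r} := by
  refine ⟨a.length, ?_⟩
  rintro r ⟨I, hI, rfl⟩
  exact isMatch_length_le_left hI

lemma exists_maxMatch (a b : List σ) :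
    ∃ I, IsMatch a b I ∧ I.length = maxMatch a b :=
  Nat.sSup_mem (matchSet_nonempty a b) (matchSet_bddAbove a b)

lemma le_maxMatch {a b : List σ} {I : List (ℕ × ℕ)} (h : IsMatch a b I) :
    I.length ≤ maxMatch a b :=
  le_csSup (matchSet_bddAbove a b) ⟨I, h, rfl⟩

/-- from a lower bound on fbar, get an upper bound on match sizes -/
lemma two_mul_le_of_fbar_ge {a b : List σ} {γ : ℝ} (hγ : γ ≤ fbar a b)
    (hlen : 0 < (a.length : ℝ) + b.length) {I : List (ℕ × ℕ)} (h : IsMatch a b I) :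
    2 * (I.length : ℝ) ≤ (1 - γ) * ((a.length : ℝ) + b.length) := by
  have h1 : 2 * (maxMatch a b : ℝ) / ((a.length : ℝ) + b.length) ≤ 1 - γ := by
    have := hγ; unfold fbar at this; linarith
  have h2 : 2 * (maxMatch a b : ℝ) ≤ (1 - γ) * ((a.length : ℝ) + b.length) := by
    rw [div_le_iff₀ hlen] at h1; linarith
  have h3 : (I.length : ℝ) ≤ (maxMatch a b : ℝ) := by
    exact_mod_cast le_maxMatch h
  linarith

lemma isApproxMatch_length_le {a b : List σ} {I : List (ℕ × ℕ)}
    (h : IsApproxMatch a b I) : I.length ≤ a.length * b.length := by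
  have hp : I.Pairwise (fun p q : ℕ × ℕ => p.1 ≤ q.1 ∧ p.2 ≤ q.2 ∧ p ≠ q) :=
    (List.isChain_iff_pairwise.mp h.1)
  have hnd : I.Nodup := hp.imp (fun h => h.2.2)
  have hsub : I.toFinset ⊆ Finset.range a.length ×ˢ Finset.range b.length := by
    intro p hp'
    simp only [List.mem_toFinset] at hp'
    have := h.2.1 p hp'
    simp only [Finset.mem_product, Finset.mem_range]
    exact ⟨this.1, this.2.1⟩
  have := Finset.card_le_card hsub
  rwa [List.toFinset_card_of_nodup hnd, Finset.card_product, Finset.card_range,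
    Finset.card_range] at this

lemma approxSet_bddAbove (a b : List σ) :
    BddAbove {r | ∃ I, IsApproxMatch a b I ∧ I.length = r} := by
  refine ⟨a.length * b.length, ?_⟩
  rintro r ⟨I, hI, rfl⟩
  exact isApproxMatch_length_le hI

lemma le_maxApproxMatch {a b : List σ} {I : List (ℕ × ℕ)} (h : IsApproxMatch a b I) :
    I.length ≤ maxApproxMatch a b :=
  le_csSup (approxSet_bddAbove a b) ⟨I, h, rfl⟩

lemma maxMatch_eq_zero_right (a : List σ) : maxMatch a ([] : List σ) = 0 := by
  unfold maxMatch
  refine (congrArg sSup (?_ : _ = ({0} : Set ℕ))).trans (csSup_singleton 0)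
  ext r
  simp only [Set.mem_setOf_eq, Set.mem_singleton_iff]
  constructor
  · rintro ⟨I, hI, rfl⟩
    rcases I with _ | ⟨p, I⟩
    · rfl
    · exact absurd (hI.2 p (by simp)).2.1 (by simp)
  · rintro rfl
    exact ⟨[], ⟨List.isChain_nil, by simp⟩, rfl⟩

lemma maxMatch_eq_zero_left (b : List σ) : maxMatch ([] : List σ) b = 0 := by
  unfold maxMatch
  refine (congrArg sSup (?_ : _ = ({0} : Set ℕ))).trans (csSup_singleton 0)
  ext r
  simp only [Set.mem_setOf_eq, Set.mem_singleton_iff]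
  constructor
  · rintro ⟨I, hI, rfl⟩
    rcases I with _ | ⟨p, I⟩
    · rfl
    · exact absurd (hI.2 p (by simp)).1 (by simp)
  · rintro rfl
    exact ⟨[], ⟨List.isChain_nil, by simp⟩, rfl⟩

end Basics

section Flatten

variable {σ Λ : Type*}

lemma flatten_length (f : σ → List Λ) (L : ℕ) (hf : ∀ s, (f s).length = L)
    (l : List σ) : ((l.map f).flatten).length = l.length * L := by
  induction l with
  | nil => simp
  | cons s t ih => simp [ih, hf, Nat.succ_mul, Nat.add_comm]

lemma flatten_getElem? (f : σ → List Λ) (L : ℕ) (hL : 0 < L) (hf : ∀ s, (f s).length = L)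
    (l : List σ) (p r : ℕ) (hp : p < l.length) (hr : r < L) :
    ((l.map f).flatten)[p * L + r]? = (f (l[p]'hp))[r]? := by
  induction l generalizing p with
  | nil => simp at hp
  | cons s t ih =>
    rcases p with _ | p
    · simp only [List.map_cons, List.flatten_cons]
      rw [List.getElem?_append]
      simp only [hf s, Nat.zero_mul, Nat.zero_add]
      rw [if_pos hr]
      simp
    · simp only [List.map_cons, List.flatten_cons]
      have hlen : (f s).length = L := hf s
      rw [List.getElem?_append_right (by rw [hlen]; push_cast; ring_nf; omega)]
      have harith : (p+1) * L + r - (f s).length = p * L + r := by rw [hlen]; ring_nf; omega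
      rw [harith, ih p (by simpa using hp)]
      congr 1

end Flatten


namespace Core

/-! ### Greedy selection of an approximate-match skeleton -/

def compatB (t : ℕ × ℕ) (acc : List (ℕ × ℕ)) : Bool :=
  acc.all fun u => (decide (u.1 = t.1 → t.2 ≤ u.2 + 2)) && (decide (u.2 = t.2 → t.1 ≤ u.1 + 2))

lemma compatB_eq_false {t : ℕ × ℕ} {acc : List (ℕ × ℕ)} (h : compatB t acc = false) :
    ∃ u ∈ acc, (u.1 = t.1 ∧ u.2 + 2 < t.2) ∨ (u.2 = t.2 ∧ u.1 + 2 < t.1) := by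
  unfold compatB at h
  rw [Bool.eq_false_iff] at h
  rw [ne_eq, List.all_eq_true] at h
  push_neg at h
  rcases h with ⟨u, hu, hviol⟩
  refine ⟨u, hu, ?_⟩
  rw [ne_eq, Bool.and_eq_true, not_and_or] at hviol
  simp only [decide_eq_true_eq] at hviol
  rcases hviol with hv | hv
  · left
    push_neg at hv
    exact ⟨hv.1, by omega⟩
  · right
    push_neg at hv
    exact ⟨hv.1, by omega⟩

lemma compatB_true_spec {t : ℕ × ℕ} {acc : List (ℕ × ℕ)} (h : compatB t acc = true) :
    ∀ u ∈ acc, (u.1 = t.1 → t.2 ≤ u.2 + 2) ∧ (u.2 = t.2 → t.1 ≤ u.1 + 2) := by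
  unfold compatB at h
  rw [List.all_eq_true] at h
  intro u hu
  have := h u hu
  simp only [Bool.and_eq_true, decide_eq_true_eq] at this
  exact this

def greedy : List (ℕ × ℕ) → List (ℕ × ℕ) → List (ℕ × ℕ)
  | acc, [] => acc
  | acc, t :: ts => greedy (if compatB t acc then acc ++ [t] else acc) ts

lemma greedy_eq (l : List (ℕ × ℕ)) : ∀ acc, ∃ l', List.Sublist l' l ∧ greedy acc l = acc ++ l' := by
  induction l with
  | nil => intro acc; exact ⟨[], List.nil_sublist _, by simp [greedy]⟩
  | cons t ts ih =>
    intro acc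
    by_cases h : compatB t acc
    · rcases ih (acc ++ [t]) with ⟨l', hl', he⟩
      exact ⟨t :: l', List.cons_sublist_cons.2 hl', by simp [greedy, h, he]⟩
    · rcases ih acc with ⟨l', hl', he⟩
      exact ⟨l', hl'.cons _, by simp [greedy, h, he]⟩

lemma greedy_sublist (l : List (ℕ × ℕ)) : List.Sublist (greedy [] l) l := by
  rcases greedy_eq l [] with ⟨l', hl', he⟩
  simpa [he] using hl'

lemma acc_subset_greedy (l : List (ℕ × ℕ)) (acc : List (ℕ × ℕ)) :
    ∀ u ∈ acc, u ∈ greedy acc l := by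
  rcases greedy_eq l acc with ⟨l', _, he⟩
  intro u hu; rw [he]; exact List.mem_append_left _ hu

lemma greedy_discard (l : List (ℕ × ℕ)) : ∀ acc (t : ℕ × ℕ), t ∈ l → t ∉ greedy acc l →
    ∃ u ∈ greedy acc l, (u.1 = t.1 ∧ u.2 + 2 < t.2) ∨ (u.2 = t.2 ∧ u.1 + 2 < t.1) := by
  induction l with
  | nil => intro acc t ht; simp at ht
  | cons s ts ih =>
    intro acc t ht hnot
    rcases List.mem_cons.1 ht with rfl | hts
    · by_cases h : compatB t acc
      · exfalso
        apply hnot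
        simp only [greedy, if_pos h]
        exact acc_subset_greedy ts (acc ++ [t]) t (by simp)
      · rw [Bool.not_eq_true] at h
        rcases compatB_eq_false h with ⟨u, hu, hviol⟩
        refine ⟨u, ?_, hviol⟩
        simp only [greedy, h, Bool.false_eq_true, if_false]
        exact acc_subset_greedy ts acc u hu
    · simp only [greedy] at hnot ⊢
      exact ih _ t hts hnot

/-- relation for the chain of cells -/
def R (u v : ℕ × ℕ) : Prop := u.1 ≤ v.1 ∧ u.2 ≤ v.2 ∧ u ≠ v

def Good (acc : List (ℕ × ℕ)) : Prop :=
  ∀ u ∈ acc, ∀ v ∈ acc, (u.1 = v.1 → v.2 ≤ u.2 + 2) ∧ (u.2 = v.2 → v.1 ≤ u.1 + 2)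

lemma greedy_good (l : List (ℕ × ℕ)) : ∀ acc, l.Pairwise R →
    (∀ u ∈ acc, ∀ v ∈ l, R u v) → Good acc → Good (greedy acc l) := by
  induction l with
  | nil => intro acc _ _ h; exact h
  | cons t ts ih =>
    intro acc hpw hacc hgood
    simp only [greedy]
    by_cases h : compatB t acc
    · rw [if_pos h]
      apply ih
      · exact hpw.of_cons
      · intro u hu v hv
        rcases List.mem_append.1 hu with hu | hu
        · exact hacc u hu v (List.mem_cons_of_mem _ hv)
        · simp only [List.mem_singleton] at hu; subst hu
          exact List.rel_of_pairwise_cons hpw hv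
      · -- Good (acc ++ [t])
        intro u hu v hv
        rcases List.mem_append.1 hu with hu' | hu' <;> rcases List.mem_append.1 hv with hv' | hv'
        · exact hgood u hu' v hv'
        · -- u ∈ acc, v = t
          simp only [List.mem_singleton] at hv'; subst hv'
          exact compatB_true_spec h u hu'
        · -- u = t, v ∈ acc : use chain order : R v u
          simp only [List.mem_singleton] at hu'; subst hu'
          obtain ⟨h1, h2, _⟩ := hacc v hv' u (List.mem_cons_self)
          exact ⟨fun _ => by omega, fun _ => by omega⟩
        · simp only [List.mem_singleton] at hu' hv'; subst hu'; subst hv'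
          exact ⟨fun _ => by omega, fun _ => by omega⟩
    · rw [if_neg h]
      apply ih
      · exact hpw.of_cons
      · intro u hu v hv; exact hacc u hu v (List.mem_cons_of_mem _ hv)
      · exact hgood

lemma greedy_window (l : List (ℕ × ℕ)) (hpw : l.Pairwise R) : Good (greedy [] l) :=
  greedy_good l [] hpw (by simp) (by intro u hu; simp at hu)

end Core

namespace Core

/-- The key convexity estimate for the pool of an uncovered row. `f w = max 0 (3L/7 - 4w/7)`. -/
lemma claim2 (L : ℝ) (hL : 0 < L) (T : Finset ℕ) (w : ℕ → ℝ)
    (hw0 : ∀ i ∈ T, 0 ≤ w i) (hsum : ∑ i ∈ T, w i ≤ L)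
    (r1 r2 : ℕ) (h1 : r1 ∈ T) (h2 : r2 ∈ T) (hne : r1 ≠ r2) :
    L/7 + (4/21) * ∑ i ∈ (T.erase r1).erase r2, w i ≤
      ∑ i ∈ T, max 0 (3/7*L - 4/7 * w i) := by
  set f : ℕ → ℝ := fun i => max 0 (3/7*L - 4/7 * w i) with hf
  have hfnn : ∀ i, 0 ≤ f i := fun i => le_max_left _ _
  have hflb : ∀ i, 3/7*L - 4/7 * w i ≤ f i := fun i => le_max_right _ _
  have h2' : r2 ∈ T.erase r1 := Finset.mem_erase.2 ⟨fun h => hne h.symm, h2⟩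
  have hsw : w r1 + (w r2 + ∑ i ∈ (T.erase r1).erase r2, w i) = ∑ i ∈ T, w i := by
    rw [Finset.add_sum_erase _ w h2', Finset.add_sum_erase _ w h1]
  have hsf : f r1 + (f r2 + ∑ i ∈ (T.erase r1).erase r2, f i) = ∑ i ∈ T, f i := by
    rw [Finset.add_sum_erase _ f h2', Finset.add_sum_erase _ f h1]
  have hw0' : ∀ i ∈ (T.erase r1).erase r2, 0 ≤ w i := fun i hi =>
    hw0 i (Finset.mem_of_mem_erase (Finset.mem_of_mem_erase hi))
  have hT'nn : 0 ≤ ∑ i ∈ (T.erase r1).erase r2, w i := Finset.sum_nonneg hw0'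
  have hwle : ∀ i ∈ T, w i ≤ ∑ j ∈ T, w j := fun i hi =>
    Finset.single_le_sum hw0 hi
  by_cases hbig : ∃ r ∈ T, 9/16*L < w r
  · rcases hbig with ⟨r, hrT, hwr⟩
    have hother : ∀ i ∈ T, i ≠ r → w i ≤ 7/16*L := by
      intro i hi hir
      have hi' : i ∈ T.erase r := Finset.mem_erase.2 ⟨hir, hi⟩
      have h1' : w i ≤ ∑ j ∈ T.erase r, w j :=
        Finset.single_le_sum (fun j hj => hw0 j (Finset.mem_of_mem_erase hj)) hi'
      have h2'' : w r + ∑ j ∈ T.erase r, w j = ∑ j ∈ T, w j :=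
        Finset.add_sum_erase _ w hrT
      linarith
    by_cases hr12 : r = r1 ∨ r = r2
    · -- the big row is one of the two special rows
      have hsmallT' : ∀ i ∈ (T.erase r1).erase r2, w i ≤ 7/16*L := by
        intro i hi
        have hiT : i ∈ T := Finset.mem_of_mem_erase (Finset.mem_of_mem_erase hi)
        have : i ≠ r := by
          rcases hr12 with rfl | rfl
          · exact (Finset.mem_erase.1 (Finset.mem_of_mem_erase hi)).1
          · exact (Finset.mem_erase.1 hi).1
        exact hother i hiT this
      have hsumT' : (4/21) * ∑ i ∈ (T.erase r1).erase r2, w i ≤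
          ∑ i ∈ (T.erase r1).erase r2, f i := by
        rw [Finset.mul_sum]
        apply Finset.sum_le_sum
        intro i hi
        have := hsmallT' i hi
        have := hw0' i hi
        have := hflb i
        linarith
      -- the other special row has w ≤ 7L/16 so f ≥ 5L/28 ≥ L/7
      rcases hr12 with rfl | rfl
      · have : w r2 ≤ 7/16*L := hother r2 h2 (fun h => hne h.symm)
        have hfr2 : L/7 ≤ f r2 := by have := hflb r2; linarith
        have := hfnn r
        linarith [hsf]
      · have : w r1 ≤ 7/16*L := hother r1 h1 hne
        have hfr1 : L/7 ≤ f r1 := by have := hflb r1; linarith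
        have := hfnn r
        linarith [hsf]
    · -- the big row is in T'
      push_neg at hr12
      have hrT' : r ∈ (T.erase r1).erase r2 :=
        Finset.mem_erase.2 ⟨hr12.2, Finset.mem_erase.2 ⟨hr12.1, hrT⟩⟩
      have hw1 : w r1 ≤ 7/16*L := hother r1 h1 (fun h => hr12.1 h.symm)
      have hw2 : w r2 ≤ 7/16*L := hother r2 h2 (fun h => hr12.2 h.symm)
      have hwrL : w r ≤ L := le_trans (hwle r hrT) hsum
      -- split T' at r
      have hsw' : w r + ∑ i ∈ ((T.erase r1).erase r2).erase r, w i
          = ∑ i ∈ (T.erase r1).erase r2, w i := Finset.add_sum_erase _ w hrT'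
      have hsf' : f r + ∑ i ∈ ((T.erase r1).erase r2).erase r, f i
          = ∑ i ∈ (T.erase r1).erase r2, f i := Finset.add_sum_erase _ f hrT'
      have hsmall : ∀ i ∈ ((T.erase r1).erase r2).erase r, w i ≤ 7/16*L := by
        intro i hi
        exact hother i
          (Finset.mem_of_mem_erase (Finset.mem_of_mem_erase (Finset.mem_of_mem_erase hi)))
          (Finset.mem_erase.1 hi).1
      have hsumT'' : (4/21) * ∑ i ∈ ((T.erase r1).erase r2).erase r, w i ≤
          ∑ i ∈ ((T.erase r1).erase r2).erase r, f i := by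
        rw [Finset.mul_sum]
        apply Finset.sum_le_sum
        intro i hi
        have := hsmall i hi
        have := hw0 i (Finset.mem_of_mem_erase (Finset.mem_of_mem_erase (Finset.mem_of_mem_erase hi)))
        have := hflb i
        linarith
      -- f r1 + f r2 ≥ 17L/28 ≥ L/7 + (4/21) w r
      have hfr1 : 3/7*L - 4/7*w r1 ≤ f r1 := hflb r1
      have hfr2 : 3/7*L - 4/7*w r2 ≤ f r2 := hflb r2
      have hfr : 0 ≤ f r := hfnn r
      have key : L/7 + (4/21) * w r ≤ f r1 + f r2 := by
        have hw12 : w r1 + w r2 ≤ 7/16*L + 7/16*L := by linarith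
        nlinarith
      linarith [hsf, hsf', hsw']
  · push_neg at hbig
    have hsumT' : (4/21) * ∑ i ∈ (T.erase r1).erase r2, w i ≤
        ∑ i ∈ (T.erase r1).erase r2, f i := by
      rw [Finset.mul_sum]
      apply Finset.sum_le_sum
      intro i hi
      have := hbig i (Finset.mem_of_mem_erase (Finset.mem_of_mem_erase hi))
      have := hw0' i hi
      have := hflb i
      linarith
    have hw12 : w r1 + w r2 ≤ L := by linarith [hsw, hT'nn]
    have hfr1 : 3/7*L - 4/7*w r1 ≤ f r1 := hflb r1
    have hfr2 : 3/7*L - 4/7*w r2 ≤ f r2 := hflb r2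
    linarith [hsf]

/-- availability estimate for an exclusive row containing a balanced (H⁺) cell -/
lemma avail_Hp (L α xx yy cc : ℝ) (hL : 0 < L) (hα : 0 < α) (hα7 : α ≤ 1/7)
    (hc : 0 ≤ cc) (hcx : cc ≤ xx) (hcy : cc ≤ yy) (hxL : xx ≤ L)
    (hbal : (1 - α) * (xx + yy) < 2 * cc) :
    max 0 (3/7*L - 4/7 * yy) ≤ (1 - α) * (L - xx) := by
  have hy0 : 0 ≤ yy := le_trans hc hcy
  have hx0 : 0 ≤ xx := le_trans hc hcx
  have hxy : (1 - α) * xx ≤ (1 + α) * yy := by nlinarith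
  apply max_le
  · nlinarith
  · by_cases hyy : yy ≤ 3/4*L
    · nlinarith
    · nlinarith

/-- availability estimate for an exclusive row containing a non-H⁺ cell, with half its bonus -/
lemma avail_nonHp (L α xx yy cc : ℝ) (hL : 0 < L) (hα : 0 < α) (hα7 : α ≤ 1/7)
    (hc : 0 ≤ cc) (hcx : cc ≤ xx) (hcy : cc ≤ yy) (hxL : xx ≤ L) :
    max 0 (3/7*L - 4/7 * yy) ≤ (1 - α) * (L - xx)
      + (1/2) * max 0 ((1 - α) * (xx + yy) - 2 * cc) := by
  have hy0 : 0 ≤ yy := le_trans hc hcy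
  have hx0 : 0 ≤ xx := le_trans hc hcx
  have hB : (1 - α) * (xx + yy) - 2 * cc ≤ max 0 ((1 - α) * (xx + yy) - 2 * cc) :=
    le_max_right _ _
  have hB0 : (0:ℝ) ≤ max 0 ((1 - α) * (xx + yy) - 2 * cc) := le_max_left _ _
  apply max_le
  · nlinarith
  · nlinarith

/-- trivial availability for an empty row -/
lemma avail_empty (L α : ℝ) (hL : 0 < L) (hα : 0 < α) (hα7 : α ≤ 1/7) :
    max 0 (3/7*L - 4/7 * (0:ℝ)) ≤ (1 - α) * (L - 0) := by
  apply max_le <;> nlinarith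

/-- The pool inequality: the total (α-β)-charge of the uncovered rows blocked in one column
is covered by the availability of the pool rows. -/
lemma poolbound (L ab : ℝ) (hL : 0 < L) (hab : 0 ≤ ab) (hab7 : ab ≤ 1/7)
    (UR : Finset ℕ) (p0 pk : ℕ) (hpkmem : pk ∈ UR)
    (X w avail : ℕ → ℝ)
    (hXL : X pk ≤ L)
    (hp03 : ∀ p ∈ UR, p0 + 3 ≤ p)
    (hXw : ∀ p ∈ UR.erase pk, X p ≤ 4/3 * w p)
    (hw0 : ∀ p, 0 ≤ w p)
    (hwsum : ∑ p ∈ insert (p0+1) (insert (p0+2) (UR.erase pk)), w p ≤ L)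
    (havail : ∀ p ∈ insert (p0+1) (insert (p0+2) (UR.erase pk)),
      max 0 (3/7*L - 4/7 * w p) ≤ avail p) :
    ab * ∑ p ∈ UR, X p ≤
      ∑ p ∈ insert (p0+1) (insert (p0+2) (UR.erase pk)), avail p := by
  set T := insert (p0+1) (insert (p0+2) (UR.erase pk)) with hT
  have hmemT1 : p0 + 1 ∈ T := Finset.mem_insert_self _ _
  have hmemT2 : p0 + 2 ∈ T := Finset.mem_insert_of_mem (Finset.mem_insert_self _ _)
  have hne12 : p0 + 1 ≠ p0 + 2 := by omega
  -- T' := (T.erase (p0+1)).erase (p0+2) = UR.erase pk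
  have hnotin1 : p0+1 ∉ insert (p0+2) (UR.erase pk) := by
    intro h
    rcases Finset.mem_insert.1 h with h | h
    · omega
    · exact absurd (hp03 _ (Finset.mem_of_mem_erase h)) (by omega)
  have hnotin2 : p0+2 ∉ UR.erase pk := by
    intro h
    exact absurd (hp03 _ (Finset.mem_of_mem_erase h)) (by omega)
  have hT' : (T.erase (p0+1)).erase (p0+2) = UR.erase pk := by
    rw [hT, Finset.erase_insert hnotin1, Finset.erase_insert hnotin2]
  have key := claim2 L hL T w (fun i _ => hw0 i) hwsum (p0+1) (p0+2) hmemT1 hmemT2 hne12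
  rw [hT'] at key
  have hXsum : ∑ p ∈ UR, X p = X pk + ∑ p ∈ UR.erase pk, X p :=
    (Finset.add_sum_erase _ X hpkmem).symm
  have hXb : ∑ p ∈ UR.erase pk, X p ≤ 4/3 * ∑ p ∈ UR.erase pk, w p := by
    rw [Finset.mul_sum]; exact Finset.sum_le_sum hXw
  have havs : ∑ p ∈ T, max 0 (3/7*L - 4/7 * w p) ≤ ∑ p ∈ T, avail p :=
    Finset.sum_le_sum havail
  have hwT' : 0 ≤ ∑ p ∈ UR.erase pk, w p := Finset.sum_nonneg (fun p _ => hw0 p)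
  have e1 : ab * X pk ≤ (1/7) * L := by nlinarith
  have e2a : ab * ∑ p ∈ UR.erase pk, X p ≤ ab * (4/3 * ∑ p ∈ UR.erase pk, w p) :=
    mul_le_mul_of_nonneg_left hXb hab
  have e2b : ab * (4/3 * ∑ p ∈ UR.erase pk, w p) ≤ (1/7) * (4/3 * ∑ p ∈ UR.erase pk, w p) :=
    mul_le_mul_of_nonneg_right hab7 (by linarith)
  have final : ab * ∑ p ∈ UR, X p ≤ L/7 + (4/21) * ∑ p ∈ UR.erase pk, w p := by
    rw [hXsum, mul_add]
    linarith
  linarith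

end Core

namespace Core

/-- total length is the sum of fiber lengths -/
lemma length_eq_sum_filter {A : Type*} [DecidableEq (ℕ × ℕ)] (I : List A) (f : A → ℕ × ℕ)
    (s : Finset (ℕ × ℕ)) (h : ∀ u ∈ I, f u ∈ s) :
    ∑ k ∈ s, (I.filter (fun u => f u = k)).length = I.length := by
  induction I with
  | nil => simp
  | cons a t ih =>
    have hat : ∀ u ∈ t, f u ∈ s := fun u hu => h u (List.mem_cons_of_mem _ hu)
    have hsum : ∑ k ∈ s, (t.filter (fun u => f u = k)).length = t.length := ih hat
    have hfa : f a ∈ s := h a (List.mem_cons_self)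
    calc ∑ k ∈ s, ((a :: t).filter (fun u => f u = k)).length
        = ∑ k ∈ s, ((if f a = k then 1 else 0) + (t.filter (fun u => f u = k)).length) := by
          apply Finset.sum_congr rfl
          intro k _
          rw [List.filter_cons]
          by_cases hak : f a = k
          · simp [hak]; omega
          · simp [hak]
      _ = (∑ k ∈ s, if f a = k then 1 else 0) + ∑ k ∈ s, (t.filter (fun u => f u = k)).length :=
          Finset.sum_add_distrib
      _ = 1 + t.length := by
          rw [hsum, Finset.sum_ite_eq s (f a) (fun _ => 1), if_pos hfa]
      _ = (a :: t).length := by simp [Nat.add_comm]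

/-- head is a lower bound in a pairwise list -/
lemma pairwise_head {A : Type*} {r : A → A → Prop} {l : List A} (hpw : l.Pairwise r)
    (h : l ≠ []) : ∀ u ∈ l, u = l.head h ∨ r (l.head h) u := by
  cases l with
  | nil => exact absurd rfl h
  | cons a t =>
    intro u hu
    rcases List.mem_cons.1 hu with rfl | hu
    · exact Or.inl rfl
    · exact Or.inr (List.rel_of_pairwise_cons hpw hu)

/-- getLast is an upper bound in a pairwise list -/
lemma pairwise_getLast {A : Type*} {r : A → A → Prop} {l : List A} (hpw : l.Pairwise r)
    (h : l ≠ []) : ∀ u ∈ l, u = l.getLast h ∨ r u (l.getLast h) := by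
  induction l with
  | nil => exact absurd rfl h
  | cons a t ih =>
    intro u hu
    rcases List.mem_cons.1 hu with rfl | hu
    · cases t with
      | nil => simp [List.getLast]
      | cons b t' =>
        right
        rw [List.getLast_cons (by simp)]
        exact List.rel_of_pairwise_cons hpw (List.getLast_mem _)
    · have ht : t ≠ [] := List.ne_nil_of_mem hu
      rw [List.getLast_cons ht]
      exact ih hpw.of_cons ht u hu

/-- a (drop i).take j is an infix -/
lemma drop_take_infix {Λ : Type*} (l : List Λ) (i j : ℕ) : (l.drop i).take j <:+: l := by
  refine ⟨l.take i, (l.drop i).drop j, ?_⟩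
  rw [List.append_assoc, List.take_append_drop, List.take_append_drop]

/-- count of a strictly increasing nat list within an interval is at most the interval length -/
lemma length_le_span {l : List ℕ} (hpw : l.Pairwise (· < ·)) (lo hi : ℕ)
    (hlo : ∀ v ∈ l, lo ≤ v) (hhi : ∀ v ∈ l, v ≤ hi) : l.length ≤ hi + 1 - lo := by
  have hmap : (l.map (fun v => v - lo)).Pairwise (· < ·) := by
    rw [List.pairwise_map]
    refine hpw.imp_of_mem ?_
    intro a b ha hb hab
    have := hlo a ha
    omega
  have hb : ∀ w ∈ l.map (fun v => v - lo), w < hi + 1 - lo := by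
    intro w hw
    rcases List.mem_map.1 hw with ⟨v, hv, rfl⟩
    have := hhi v hv
    have := hlo v hv
    omega
  have hnd : (l.map (fun v => v - lo)).Nodup := hmap.imp (fun h => Nat.ne_of_lt h)
  have hsub : (l.map (fun v => v - lo)).toFinset ⊆ Finset.range (hi + 1 - lo) := by
    intro w hw
    simp only [List.mem_toFinset] at hw
    exact Finset.mem_range.2 (hb w hw)
  have := Finset.card_le_card hsub
  rw [List.toFinset_card_of_nodup hnd, Finset.card_range] at this
  simpa using this

/-- row-interval packing: disjoint ordered intervals within a block -/
lemma sum_spans_le (F : Finset (ℕ × ℕ)) (ilo ihi : ℕ × ℕ → ℕ) (lo Len : ℕ) (hLen : 1 ≤ Len)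
    (hbound : ∀ k ∈ F, lo ≤ ilo k ∧ ilo k ≤ ihi k ∧ ihi k < lo + Len)
    (hord : ∀ k ∈ F, ∀ k' ∈ F, k ≠ k' → ihi k < ilo k' ∨ ihi k' < ilo k) :
    ∑ k ∈ F, (ihi k + 1 - ilo k) ≤ Len := by
  classical
  have hdisj : (↑F : Set (ℕ × ℕ)).PairwiseDisjoint (fun k => Finset.Icc (ilo k) (ihi k)) := by
    intro k hk k' hk' hne
    simp only [Function.onFun]
    rw [Finset.disjoint_left]
    intro v hv hv'
    rcases Finset.mem_Icc.1 hv with ⟨h1, h2⟩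
    rcases Finset.mem_Icc.1 hv' with ⟨h3, h4⟩
    rcases hord k hk k' hk' hne with h | h <;> omega
  have hcard : ∑ k ∈ F, (ihi k + 1 - ilo k) = (F.biUnion (fun k => Finset.Icc (ilo k) (ihi k))).card := by
    rw [Finset.card_biUnion (fun k hk k' hk' hne => hdisj hk hk' hne)]
    apply Finset.sum_congr rfl
    intro k hk
    rw [Nat.card_Icc]
  rw [hcard]
  have hsub : F.biUnion (fun k => Finset.Icc (ilo k) (ihi k)) ⊆ Finset.Icc lo (lo + Len - 1) := by
    intro v hv
    rcases Finset.mem_biUnion.1 hv with ⟨k, hk, hvk⟩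
    rcases Finset.mem_Icc.1 hvk with ⟨h1, h2⟩
    rcases hbound k hk with ⟨h3, h4, h5⟩
    exact Finset.mem_Icc.2 ⟨by omega, by omega⟩
  have := Finset.card_le_card hsub
  rw [Nat.card_Icc] at this
  omega

/-- a staircase of comparable distinct cells has at most n+m-1 cells -/
lemma cells_card_le (n m : ℕ) (hn : 1 ≤ n) (hm : 1 ≤ m) (cells : Finset (ℕ × ℕ))
    (hmem : ∀ k ∈ cells, k.1 < n ∧ k.2 < m)
    (hcomp : ∀ k ∈ cells, ∀ k' ∈ cells, (k.1 ≤ k'.1 ∧ k.2 ≤ k'.2) ∨ (k'.1 ≤ k.1 ∧ k'.2 ≤ k.2)) :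
    cells.card ≤ n + m - 1 := by
  classical
  have hinj : Set.InjOn (fun k : ℕ × ℕ => k.1 + k.2) ↑cells := by
    intro k hk k' hk' he
    simp only at he
    by_contra hne
    rcases hcomp k hk k' hk' with ⟨h1, h2⟩ | ⟨h1, h2⟩
    · have : k.1 = k'.1 := by omega
      have : k.2 = k'.2 := by omega
      exact hne (Prod.ext (by omega) (by omega))
    · exact hne (Prod.ext (by omega) (by omega))
  have h1 : cells.card = (cells.image (fun k => k.1 + k.2)).card :=
    (Finset.card_image_of_injOn hinj).symm
  have h2 : cells.image (fun k => k.1 + k.2) ⊆ Finset.range (n + m - 1) := by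
    intro v hv
    rcases Finset.mem_image.1 hv with ⟨k, hk, rfl⟩
    rcases hmem k hk with ⟨ha, hb⟩
    exact Finset.mem_range.2 (by omega)
  have := Finset.card_le_card h2
  rw [Finset.card_range] at this
  omega

end Core

namespace Core

set_option maxHeartbeats 1000000

lemma rowside (n m : ℕ) (L α β : ℝ) (hL : 0 < L) (hα : 0 < α) (hα7 : α ≤ 1/7)
    (hβ0 : 0 ≤ β) (hβα : β ≤ α)
    (cells : Finset (ℕ × ℕ)) (c x y : ℕ × ℕ → ℝ)
    (hmem : ∀ k ∈ cells, k.1 < n ∧ k.2 < m)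
    (hcomp : ∀ k ∈ cells, ∀ k' ∈ cells, (k.1 ≤ k'.1 ∧ k.2 ≤ k'.2) ∨ (k'.1 ≤ k.1 ∧ k'.2 ≤ k.2))
    (hc0 : ∀ k ∈ cells, 0 ≤ c k) (hcx : ∀ k ∈ cells, c k ≤ x k) (hcy : ∀ k ∈ cells, c k ≤ y k)
    (hxL : ∀ k ∈ cells, x k ≤ L)
    (hrow : ∀ p, ∑ k ∈ cells.filter (fun k => k.1 = p), x k ≤ L)
    (hcol : ∀ q, ∑ k ∈ cells.filter (fun k => k.2 = q), y k ≤ L)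
    (Hp : Finset (ℕ × ℕ)) (hHsub : Hp ⊆ cells)
    (hHbal : ∀ k ∈ Hp, (1 - α) * (x k + y k) < 2 * c k)
    (kept : Finset (ℕ × ℕ)) (hk1 : kept ⊆ Hp)
    (hk3 : ∀ t ∈ Hp, t ∉ kept → ∃ u ∈ kept,
        (u.1 = t.1 ∧ u.2 + 2 < t.2) ∨ (u.2 = t.2 ∧ u.1 + 2 < t.1)) :
    (α - β) * ∑ k ∈ Hp, x k ≤
      (α - β) * L * kept.card
      + (1 - α) * ∑ p ∈ Finset.range n, (L - ∑ k ∈ cells.filter (fun k => k.1 = p), x k)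
      + (1/2) * ∑ k ∈ cells, max 0 ((1 - α) * (x k + y k) - 2 * c k) := by
  classical
  have hab : 0 ≤ α - β := by linarith
  have hab7 : α - β ≤ 1/7 := by linarith
  have hx0 : ∀ k ∈ cells, 0 ≤ x k := fun k hk => le_trans (hc0 k hk) (hcx k hk)
  have hy0 : ∀ k ∈ cells, 0 ≤ y k := fun k hk => le_trans (hc0 k hk) (hcy k hk)
  set BB : ℕ × ℕ → ℝ := fun k => max 0 ((1 - α) * (x k + y k) - 2 * c k) with hBB
  set Xf : ℕ → ℝ := fun p => ∑ k ∈ cells.filter (fun k => k.1 = p), x k with hXf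
  set gf : ℕ → ℝ := fun p => ∑ k ∈ Hp.filter (fun k => k.1 = p), x k with hgf
  set wf : ℕ → ℝ := fun p => ∑ k ∈ cells.filter (fun k => k.1 = p), y k with hwf
  set av : ℕ → ℝ :=
    fun p => (1 - α) * (L - Xf p) + (1/2) * ∑ k ∈ cells.filter (fun k => k.1 = p), BB k
    with hav
  have hBB0 : ∀ k, 0 ≤ BB k := fun k => le_max_left _ _
  have hgf0 : ∀ p, 0 ≤ gf p :=
    fun p => Finset.sum_nonneg (fun k hk => hx0 k (hHsub (Finset.mem_filter.1 hk).1))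
  have hwf0 : ∀ p, 0 ≤ wf p :=
    fun p => Finset.sum_nonneg (fun k hk => hy0 k (Finset.mem_filter.1 hk).1)
  have hgX : ∀ p, gf p ≤ Xf p := by
    intro p
    apply Finset.sum_le_sum_of_subset_of_nonneg (Finset.filter_subset_filter _ hHsub)
    intro k hk _
    exact hx0 k (Finset.mem_filter.1 hk).1
  have hXfL : ∀ p, Xf p ≤ L := hrow
  have hav0 : ∀ p, 0 ≤ av p := by
    intro p
    simp only [hav]
    have h1 : Xf p ≤ L := hXfL p
    have h2 : (0:ℝ) ≤ ∑ k ∈ cells.filter (fun k => k.1 = p), BB k :=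
      Finset.sum_nonneg (fun k _ => hBB0 k)
    have h3 : (0:ℝ) ≤ 1 - α := by linarith
    nlinarith
  -- fiberwise decomposition of the H⁺ x-mass over rows
  have hfib : ∑ p ∈ Finset.range n, gf p = ∑ k ∈ Hp, x k :=
    Finset.sum_fiberwise_of_maps_to (fun k hk => Finset.mem_range.2 (hmem k (hHsub hk)).1) x
  -- split into covered and uncovered rows
  have hsplit : ∑ p ∈ Finset.range n, gf p =
      ∑ p ∈ (Finset.range n).filter (fun p => ∃ u ∈ kept, u.1 = p), gf p
      + ∑ p ∈ (Finset.range n).filter (fun p => ¬∃ u ∈ kept, u.1 = p), gf p :=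
    (Finset.sum_filter_add_sum_filter_not _ _ _).symm
  -- covered rows bound
  have hCR : ∑ p ∈ (Finset.range n).filter (fun p => ∃ u ∈ kept, u.1 = p), gf p
      ≤ L * kept.card := by
    have h1 := Finset.sum_le_card_nsmul
      ((Finset.range n).filter (fun p => ∃ u ∈ kept, u.1 = p)) gf L
      (fun p _ => le_trans (hgX p) (hXfL p))
    rw [nsmul_eq_mul] at h1
    have h2 : ((Finset.range n).filter (fun p => ∃ u ∈ kept, u.1 = p)).card ≤ kept.card := by
      refine le_trans (Finset.card_le_card ?_) (Finset.card_image_le (f := Prod.fst))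
      intro p hp
      rcases Finset.mem_filter.1 hp with ⟨_, u, hu, hup⟩
      exact Finset.mem_image.2 ⟨u, hu, hup⟩
    have h3 : ((( (Finset.range n).filter (fun p => ∃ u ∈ kept, u.1 = p)).card : ℝ))
        ≤ (kept.card : ℝ) := by exact_mod_cast h2
    nlinarith
  -- uncovered rows
  set URs : Finset ℕ :=
    ((Finset.range n).filter (fun p => ¬∃ u ∈ kept, u.1 = p)).filter
      (fun p => ∃ k ∈ Hp, k.1 = p) with hURs
  have hUR0 : ∑ p ∈ (Finset.range n).filter (fun p => ¬∃ u ∈ kept, u.1 = p), gf p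
      = ∑ p ∈ URs, gf p := by
    rw [hURs]
    rw [← Finset.sum_filter_add_sum_filter_not
      ((Finset.range n).filter (fun p => ¬∃ u ∈ kept, u.1 = p))
      (fun p => ∃ k ∈ Hp, k.1 = p) gf]
    have hz : ∑ p ∈ ((Finset.range n).filter (fun p => ¬∃ u ∈ kept, u.1 = p)).filter
        (fun p => ¬∃ k ∈ Hp, k.1 = p), gf p = 0 := by
      apply Finset.sum_eq_zero
      intro p hp
      rcases Finset.mem_filter.1 hp with ⟨_, hno⟩
      push_neg at hno
      have : Hp.filter (fun k => k.1 = p) = ∅ :=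
        Finset.filter_eq_empty_iff.2 (fun k hk => hno k hk)
      simp only [hgf, this, Finset.sum_empty]
    linarith
  -- choice of a blocked H⁺ cell and its blocker column for each uncovered row
  have hblocker : ∀ p ∈ URs, ∃ qq, (p, qq) ∈ Hp ∧ ∃ u ∈ kept, u.2 = qq ∧ u.1 + 2 < p := by
    intro p hp
    rcases Finset.mem_filter.1 hp with ⟨hp1, k, hkHp, hk1⟩
    rcases Finset.mem_filter.1 hp1 with ⟨_, hnokept⟩
    have hknot : k ∉ kept := fun hc => hnokept ⟨k, hc, hk1⟩
    rcases hk3 k hkHp hknot with ⟨u, hu, hviol | hviol⟩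
    · exact absurd ⟨u, hu, by rw [hviol.1, hk1]⟩ hnokept
    · refine ⟨k.2, ?_, u, hu, hviol.1, ?_⟩
      · rwa [show (p, k.2) = k from Prod.ext hk1.symm rfl]
      · omega
  set colOf : ℕ → ℕ := fun p =>
    if h : ∃ qq, (p, qq) ∈ Hp ∧ ∃ u ∈ kept, u.2 = qq ∧ u.1 + 2 < p
    then Classical.choose h else 0 with hcolOf
  have hcolspec : ∀ p ∈ URs,
      (p, colOf p) ∈ Hp ∧ ∃ u ∈ kept, u.2 = colOf p ∧ u.1 + 2 < p := by
    intro p hp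
    have h := hblocker p hp
    simp only [hcolOf, dif_pos h]
    exact Classical.choose_spec h
  have hURfib : ∑ p ∈ URs, gf p
      = ∑ q ∈ Finset.range m, ∑ p ∈ URs.filter (fun p => colOf p = q), gf p :=
    (Finset.sum_fiberwise_of_maps_to
      (fun p hp => Finset.mem_range.2 (hmem _ (hHsub (hcolspec p hp).1)).2) gf).symm
  set p0f : ℕ → ℕ := fun q => sInf {p | (p, q) ∈ kept} with hp0f
  set pkf : ℕ → ℕ := fun q => sSup {p | p ∈ URs.filter (fun p => colOf p = q)} with hpkf
  set pool : ℕ → Finset ℕ := fun q =>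
    if (URs.filter (fun p => colOf p = q)).Nonempty
    then insert (p0f q + 1) (insert (p0f q + 2)
      ((URs.filter (fun p => colOf p = q)).erase (pkf q)))
    else ∅ with hpool
  -- per-column facts
  have perq : ∀ q, (URs.filter (fun p => colOf p = q)).Nonempty →
      ((α - β) * ∑ p ∈ URs.filter (fun p => colOf p = q), gf p ≤ ∑ p ∈ pool q, av p)
      ∧ (∀ p ∈ pool q, p0f q < p ∧ p < pkf q)
      ∧ ((p0f q, q) ∈ cells ∧ (pkf q, q) ∈ cells) := by
    intro q hqne
    set URq := URs.filter (fun p => colOf p = q) with hURq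
    have hURqmem : ∀ p ∈ URq, p ∈ URs ∧ colOf p = q := by
      intro p hp; exact ⟨(Finset.mem_filter.1 hp).1, (Finset.mem_filter.1 hp).2⟩
    -- kept column q is nonempty
    have hkne : {p | (p, q) ∈ kept}.Nonempty := by
      obtain ⟨pw, hpw⟩ := hqne
      obtain ⟨hpwU, hpwq⟩ := hURqmem pw hpw
      obtain ⟨_, u, hu, hu2, _⟩ := hcolspec pw hpwU
      refine ⟨u.1, ?_⟩
      have : (u.1, q) = u := Prod.ext rfl (by rw [hu2, hpwq])
      simpa [this] using hu
    have hp0mem : (p0f q, q) ∈ kept := Nat.sInf_mem hkne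
    have hp0le : ∀ u ∈ kept, u.2 = q → p0f q ≤ u.1 := by
      intro u hu h2
      apply Nat.sInf_le
      show (u.1, q) ∈ kept
      rwa [show (u.1, q) = u from Prod.ext rfl h2.symm]
    have hp03 : ∀ p ∈ URq, p0f q + 3 ≤ p := by
      intro p hp
      obtain ⟨hpU, hpq⟩ := hURqmem p hp
      obtain ⟨_, u, hu, hu2, hu3⟩ := hcolspec p hpU
      have := hp0le u hu (by rw [hu2, hpq])
      omega
    have hbdd : BddAbove {p | p ∈ URq} := (URq.finite_toSet).bddAbove
    have hpkmem : pkf q ∈ URq := Nat.sSup_mem (by exact hqne) hbdd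
    have hpkmax : ∀ p ∈ URq, p ≤ pkf q := fun p hp => le_csSup hbdd hp
    have hcell0 : (p0f q, q) ∈ cells := hHsub (hk1 hp0mem)
    have hcellk : (pkf q, q) ∈ cells := by
      obtain ⟨hpU, hpq⟩ := hURqmem _ hpkmem
      have := (hcolspec _ hpU).1
      rw [hpq] at this
      exact hHsub this
    have hexcl : ∀ p', p0f q < p' → p' < pkf q → ∀ k ∈ cells, k.1 = p' → k.2 = q := by
      intro p' h1 h2 k hk hk1'
      rcases hcomp k hk (p0f q, q) hcell0 with ⟨ha, hb⟩ | ⟨ha, hb⟩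
      · simp only at ha; omega
      · simp only at ha hb
        rcases hcomp k hk (pkf q, q) hcellk with ⟨hc, hd⟩ | ⟨hc, hd⟩
        · simp only at hd; omega
        · simp only at hc; omega
    have hfibsub : ∀ p', p0f q < p' → p' < pkf q →
        cells.filter (fun k => k.1 = p') ⊆ {(p', q)} := by
      intro p' h1 h2 k hk
      rcases Finset.mem_filter.1 hk with ⟨hkc, hk1'⟩
      have := hexcl p' h1 h2 k hkc hk1'
      simp only [Finset.mem_singleton]
      exact Prod.ext hk1' this
    have hpk3 : p0f q + 3 ≤ pkf q := hp03 _ hpkmem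
    have hpoolmem : ∀ p ∈ pool q, p0f q < p ∧ p < pkf q := by
      intro p hp
      rw [hpool] at hp
      simp only [← hURq, if_pos hqne] at hp
      rcases Finset.mem_insert.1 hp with rfl | hp
      · omega
      rcases Finset.mem_insert.1 hp with rfl | hp
      · omega
      · rcases Finset.mem_erase.1 hp with ⟨hne', hp'⟩
        have h1 := hp03 p hp'
        have h2 := hpkmax p hp'
        omega
    refine ⟨?_, hpoolmem, hcell0, hcellk⟩
    -- now the poolbound application
    have hTpool : pool q = insert (p0f q + 1) (insert (p0f q + 2) (URq.erase (pkf q))) := by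
      rw [hpool]; simp only [← hURq, if_pos hqne]
    have hXw : ∀ p ∈ URq.erase (pkf q), gf p ≤ 4/3 * wf p := by
      intro p hp
      rcases Finset.mem_erase.1 hp with ⟨hne', hp'⟩
      have h1 : p0f q < p := by have := hp03 p hp'; omega
      have h2 : p < pkf q := lt_of_le_of_ne (hpkmax p hp') hne'
      have hsub : Hp.filter (fun k => k.1 = p) ⊆ {(p, q)} :=
        subset_trans (Finset.filter_subset_filter _ hHsub) (hfibsub p h1 h2)
      rcases Finset.subset_singleton_iff.1 hsub with he | he
      · simp only [hgf, he, Finset.sum_empty]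
        have := hwf0 p
        linarith
      · have hk0mem : (p, q) ∈ Hp := by
          have : (p, q) ∈ Hp.filter (fun k => k.1 = p) := by
            rw [he]; exact Finset.mem_singleton_self _
          exact (Finset.mem_filter.1 this).1
        have hk0c : (p, q) ∈ cells := hHsub hk0mem
        have hgfp : gf p = x (p, q) := by
          simp only [hgf, he, Finset.sum_singleton]
        have hbal := hHbal _ hk0mem
        have hxy : x (p, q) ≤ 4/3 * y (p, q) := by
          have h3 := hcy _ hk0c
          have h4 := hx0 _ hk0c
          have h5 := hy0 _ hk0c
          nlinarith
        have hwge : y (p, q) ≤ wf p := by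
          apply Finset.single_le_sum (f := y) (fun k hk => hy0 k (Finset.mem_filter.1 hk).1)
          exact Finset.mem_filter.2 ⟨hk0c, rfl⟩
        rw [hgfp]
        linarith
    have hwsum : ∑ p ∈ insert (p0f q + 1) (insert (p0f q + 2) (URq.erase (pkf q))), wf p
        ≤ L := by
      rw [← hTpool]
      set T := pool q with hT
      have hTmem : ∀ p ∈ T, p0f q < p ∧ p < pkf q := hpoolmem
      have step1 : ∀ p ∈ T, wf p ≤ (if (p, q) ∈ cells then y (p, q) else 0) := by
        intro p hp
        obtain ⟨h1, h2⟩ := hTmem p hp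
        have hsub := hfibsub p h1 h2
        rcases Finset.subset_singleton_iff.1 hsub with he | he
        · simp only [hwf, he, Finset.sum_empty]
          split
          next h => exact hy0 _ h
          next => exact le_refl 0
        · have hk0c : (p, q) ∈ cells := by
            have : (p, q) ∈ cells.filter (fun k => k.1 = p) := by
              rw [he]; exact Finset.mem_singleton_self _
            exact (Finset.mem_filter.1 this).1
          simp only [hwf, he, Finset.sum_singleton, if_pos hk0c]
          exact le_rfl
      have step2 : ∑ p ∈ T, wf p ≤ ∑ p ∈ T, (if (p, q) ∈ cells then y (p, q) else 0) :=
        Finset.sum_le_sum step1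
      have step3 : ∑ p ∈ T, (if (p, q) ∈ cells then y (p, q) else 0)
          = ∑ p ∈ T.filter (fun p => (p, q) ∈ cells), y (p, q) :=
        (Finset.sum_filter _ _).symm
      have step4 : ∑ p ∈ T.filter (fun p => (p, q) ∈ cells), y (p, q)
          = ∑ k ∈ (T.filter (fun p => (p, q) ∈ cells)).image (fun p => (p, q)), y k := by
        rw [Finset.sum_image]
        intro a _ b _ hab2
        have := congrArg Prod.fst hab2
        simpa using this
      have step5 : (T.filter (fun p => (p, q) ∈ cells)).image (fun p => (p, q))
          ⊆ cells.filter (fun k => k.2 = q) := by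
        intro k hk
        rcases Finset.mem_image.1 hk with ⟨p, hp, rfl⟩
        exact Finset.mem_filter.2 ⟨(Finset.mem_filter.1 hp).2, rfl⟩
      have step6 : ∑ k ∈ (T.filter (fun p => (p, q) ∈ cells)).image (fun p => (p, q)), y k
          ≤ ∑ k ∈ cells.filter (fun k => k.2 = q), y k := by
        apply Finset.sum_le_sum_of_subset_of_nonneg step5
        intro k hk _
        exact hy0 k (Finset.mem_filter.1 hk).1
      calc ∑ p ∈ T, wf p ≤ _ := step2
        _ = _ := step3
        _ = _ := step4
        _ ≤ _ := step6
        _ ≤ L := hcol q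
    have havail : ∀ p ∈ insert (p0f q + 1) (insert (p0f q + 2) (URq.erase (pkf q))),
        max 0 (3/7*L - 4/7 * wf p) ≤ av p := by
      rw [← hTpool]
      intro p hp
      obtain ⟨h1, h2⟩ := hpoolmem p hp
      have hsub := hfibsub p h1 h2
      rcases Finset.subset_singleton_iff.1 hsub with he | he
      · have hXf0 : Xf p = 0 := by simp only [hXf, he, Finset.sum_empty]
        have hwf0' : wf p = 0 := by simp only [hwf, he, Finset.sum_empty]
        have hBBs : ∑ k ∈ cells.filter (fun k => k.1 = p), BB k = 0 := by
          rw [he, Finset.sum_empty]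
        simp only [hav, hXf0, hwf0', hBBs]
        apply max_le
        · nlinarith
        · nlinarith
      · have hk0c : (p, q) ∈ cells := by
          have : (p, q) ∈ cells.filter (fun k => k.1 = p) := by
            rw [he]; exact Finset.mem_singleton_self _
          exact (Finset.mem_filter.1 this).1
        have hXfp : Xf p = x (p, q) := by simp only [hXf, he, Finset.sum_singleton]
        have hwfp : wf p = y (p, q) := by simp only [hwf, he, Finset.sum_singleton]
        have hBBs : ∑ k ∈ cells.filter (fun k => k.1 = p), BB k = BB (p, q) := by
          rw [he, Finset.sum_singleton]
        simp only [hav, hXfp, hwfp, hBBs]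
        by_cases hk0Hp : (p, q) ∈ Hp
        · have hmain := avail_Hp L α (x (p,q)) (y (p,q)) (c (p,q)) hL hα hα7
            (hc0 _ hk0c) (hcx _ hk0c) (hcy _ hk0c) (hxL _ hk0c) (hHbal _ hk0Hp)
          have := hBB0 (p, q)
          linarith
        · exact avail_nonHp L α (x (p,q)) (y (p,q)) (c (p,q)) hL hα hα7
            (hc0 _ hk0c) (hcx _ hk0c) (hcy _ hk0c) (hxL _ hk0c)
    have happ := poolbound L (α - β) hL hab hab7 URq (p0f q) (pkf q) hpkmem
      gf wf av (le_trans (hgX _) (hXfL _)) hp03 hXw hwf0 hwsum havail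
    rw [hTpool]
    exact happ
  -- summing over all columns
  have hqall : ∀ q ∈ Finset.range m,
      (α - β) * ∑ p ∈ URs.filter (fun p => colOf p = q), gf p ≤ ∑ p ∈ pool q, av p := by
    intro q _
    by_cases hqne : (URs.filter (fun p => colOf p = q)).Nonempty
    · exact (perq q hqne).1
    · rw [Finset.not_nonempty_iff_eq_empty] at hqne
      rw [hqne, Finset.sum_empty, mul_zero]
      have : pool q = ∅ := by
        rw [hpool]
        simp only [hqne]
        simp
      rw [this, Finset.sum_empty]
  have hdisj : (↑(Finset.range m) : Set ℕ).PairwiseDisjoint pool := by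
    intro q _ q' _ hne
    simp only [Function.onFun]
    rw [Finset.disjoint_left]
    intro p hp hp'
    by_cases hqne : (URs.filter (fun p => colOf p = q)).Nonempty
    · by_cases hqne' : (URs.filter (fun p => colOf p = q')).Nonempty
      · obtain ⟨hb1, hb2⟩ := (perq q hqne).2.1 p hp
        obtain ⟨hb1', hb2'⟩ := (perq q' hqne').2.1 p hp'
        obtain ⟨hc0q, hckq⟩ := (perq q hqne).2.2
        obtain ⟨hc0q', hckq'⟩ := (perq q' hqne').2.2
        rcases Nat.lt_or_ge q q' with hlt | hge
        · rcases hcomp _ hckq _ hc0q' with ⟨ha, hb⟩ | ⟨ha, hb⟩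
          · simp only at ha; omega
          · simp only at ha hb; omega
        · have hlt : q' < q := by omega
          rcases hcomp _ hckq' _ hc0q with ⟨ha, hb⟩ | ⟨ha, hb⟩
          · simp only at ha; omega
          · simp only at ha hb; omega
      · rw [Finset.not_nonempty_iff_eq_empty] at hqne'
        have : pool q' = ∅ := by rw [hpool]; simp only [hqne']; simp
        rw [this] at hp'
        exact absurd hp' (Finset.notMem_empty p)
    · rw [Finset.not_nonempty_iff_eq_empty] at hqne
      have : pool q = ∅ := by rw [hpool]; simp only [hqne]; simp
      rw [this] at hp
      exact absurd hp (Finset.notMem_empty p)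
  have hpoolsub : (Finset.range m).biUnion pool ⊆ Finset.range n := by
    intro p hp
    rcases Finset.mem_biUnion.1 hp with ⟨q, _, hpq⟩
    by_cases hqne : (URs.filter (fun p => colOf p = q)).Nonempty
    · obtain ⟨_, hb2⟩ := (perq q hqne).2.1 p hpq
      have hpk : pkf q ∈ URs.filter (fun p => colOf p = q) :=
        Nat.sSup_mem hqne ((URs.filter (fun p => colOf p = q)).finite_toSet.bddAbove)
      have : pkf q ∈ URs := (Finset.mem_filter.1 hpk).1
      have : pkf q < n := by
        have h' := Finset.mem_filter.1 this
        exact Finset.mem_range.1 (Finset.mem_filter.1 h'.1).1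
      exact Finset.mem_range.2 (by omega)
    · rw [Finset.not_nonempty_iff_eq_empty] at hqne
      have : pool q = ∅ := by rw [hpool]; simp only [hqne]; simp
      rw [this] at hpq
      exact absurd hpq (Finset.notMem_empty p)
  have hbig : ∑ q ∈ Finset.range m, ∑ p ∈ pool q, av p ≤ ∑ p ∈ Finset.range n, av p := by
    rw [← Finset.sum_biUnion hdisj]
    exact Finset.sum_le_sum_of_subset_of_nonneg hpoolsub (fun p _ _ => hav0 p)
  have havtotal : ∑ p ∈ Finset.range n, av p
      = (1 - α) * ∑ p ∈ Finset.range n, (L - Xf p)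
        + (1/2) * ∑ k ∈ cells, BB k := by
    have h1 : ∑ p ∈ Finset.range n, ∑ k ∈ cells.filter (fun k => k.1 = p), BB k
        = ∑ k ∈ cells, BB k :=
      Finset.sum_fiberwise_of_maps_to (fun k hk => Finset.mem_range.2 (hmem k hk).1) BB
    simp only [hav]
    rw [Finset.sum_add_distrib, ← Finset.mul_sum, ← Finset.mul_sum, h1]
  -- final assembly
  have hURtotal : (α - β) * ∑ p ∈ URs, gf p
      ≤ ∑ q ∈ Finset.range m, ∑ p ∈ pool q, av p := by
    rw [hURfib, Finset.mul_sum]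
    exact Finset.sum_le_sum hqall
  have hURs0 : 0 ≤ ∑ p ∈ URs, gf p := Finset.sum_nonneg (fun p _ => hgf0 p)
  have hCR0 : 0 ≤ ∑ p ∈ (Finset.range n).filter (fun p => ∃ u ∈ kept, u.1 = p), gf p :=
    Finset.sum_nonneg (fun p _ => hgf0 p)
  calc (α - β) * ∑ k ∈ Hp, x k
      = (α - β) * (∑ p ∈ (Finset.range n).filter (fun p => ∃ u ∈ kept, u.1 = p), gf p)
        + (α - β) * (∑ p ∈ URs, gf p) := by
        rw [← hfib, hsplit, hUR0]; ring
    _ ≤ (α - β) * (L * kept.card) + ((1 - α) * ∑ p ∈ Finset.range n, (L - Xf p)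
        + (1/2) * ∑ k ∈ cells, BB k) := by
        have e1 : (α - β) * (∑ p ∈ (Finset.range n).filter (fun p => ∃ u ∈ kept, u.1 = p), gf p)
            ≤ (α - β) * (L * kept.card) := mul_le_mul_of_nonneg_left hCR hab
        have e2 : (α - β) * (∑ p ∈ URs, gf p)
            ≤ (1 - α) * ∑ p ∈ Finset.range n, (L - Xf p) + (1/2) * ∑ k ∈ cells, BB k := by
          rw [← havtotal]
          exact le_trans hURtotal hbig
        linarith
    _ = (α - β) * L * kept.card + (1 - α) * ∑ p ∈ Finset.range n, (L - Xf p)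
        + (1/2) * ∑ k ∈ cells, BB k := by ring

end Core

namespace Core

set_option maxHeartbeats 1600000

lemma filter_fst_image_swap (s : Finset (ℕ × ℕ)) (q : ℕ) :
    (s.image Prod.swap).filter (fun k => k.1 = q)
      = (s.filter (fun k => k.2 = q)).image Prod.swap := by
  ext k
  simp only [Finset.mem_filter, Finset.mem_image]
  constructor
  · rintro ⟨⟨a, ha, rfl⟩, hq⟩
    exact ⟨a, ⟨ha, hq⟩, rfl⟩
  · rintro ⟨a, ⟨ha, hq⟩, rfl⟩
    exact ⟨⟨a, ha, rfl⟩, hq⟩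

lemma sum_image_swap (s : Finset (ℕ × ℕ)) (f : ℕ × ℕ → ℝ) :
    ∑ k ∈ s.image Prod.swap, f k = ∑ k ∈ s, f k.swap :=
  Finset.sum_image (fun a _ b _ h => Prod.swap_injective h)

lemma mem_image_swap (s : Finset (ℕ × ℕ)) (k : ℕ × ℕ) :
    k ∈ s.image Prod.swap ↔ k.swap ∈ s := by
  simp only [Finset.mem_image]
  constructor
  · rintro ⟨a, ha, rfl⟩; simpa using ha
  · intro h; exact ⟨k.swap, h, by simp⟩

theorem core (n m : ℕ) (L Lr α β : ℝ)
    (hL : 0 < L) (hLr : 0 ≤ Lr) (hα : 0 < α) (hα7 : α ≤ 1/7) (hβ0 : 0 ≤ β) (hβα : β ≤ α)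
    (cells : Finset (ℕ × ℕ)) (c x y : ℕ × ℕ → ℝ) (same : ℕ × ℕ → Prop)
    (hmem : ∀ k ∈ cells, k.1 < n ∧ k.2 < m)
    (hcomp : ∀ k ∈ cells, ∀ k' ∈ cells, (k.1 ≤ k'.1 ∧ k.2 ≤ k'.2) ∨ (k'.1 ≤ k.1 ∧ k'.2 ≤ k.2))
    (hc0 : ∀ k ∈ cells, 0 ≤ c k) (hcx : ∀ k ∈ cells, c k ≤ x k) (hcy : ∀ k ∈ cells, c k ≤ y k)
    (hxL : ∀ k ∈ cells, x k ≤ L) (hyL : ∀ k ∈ cells, y k ≤ L)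
    (hbound : ∀ k ∈ cells, (same k ∧ 2*c k ≤ (1-β)*(x k + y k))
      ∨ 2*c k ≤ (1-α)*(x k + y k) ∨ c k ≤ Lr)
    (hrow : ∀ p, ∑ k ∈ cells.filter (fun k => k.1 = p), x k ≤ L)
    (hcol : ∀ q, ∑ k ∈ cells.filter (fun k => k.2 = q), y k ≤ L) :
    ∃ J : List (ℕ × ℕ),
      J.Chain' (fun u v => u.1 ≤ v.1 ∧ u.2 ≤ v.2 ∧ u ≠ v) ∧
      (∀ u ∈ J, u ∈ cells ∧ same u) ∧
      (∀ u ∈ J, ∀ v ∈ J, (u.1 = v.1 → v.2 ≤ u.2 + 2) ∧ (u.2 = v.2 → v.1 ≤ u.1 + 2)) ∧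
      ∑ k ∈ cells, 2 * c k
        ≤ (1-α)*(((n:ℝ)+m)*L) + 2*(α-β)*L*J.length + 2*(cells.card:ℝ)*Lr ∧
      ∑ k ∈ cells, 2 * c k ≤ (1-β)*(((n:ℝ)+m)*L) + 2*(cells.card:ℝ)*Lr := by
  classical
  have hx0 : ∀ k ∈ cells, 0 ≤ x k := fun k hk => le_trans (hc0 k hk) (hcx k hk)
  have hy0 : ∀ k ∈ cells, 0 ≤ y k := fun k hk => le_trans (hc0 k hk) (hcy k hk)
  set Hplus : ℕ × ℕ → Prop :=
    fun k => same k ∧ (1-α)*(x k + y k) < 2*c k ∧ 2*c k ≤ (1-β)*(x k + y k) with hHplus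
  -- sorted list of cells
  set leB : ℕ × ℕ → ℕ × ℕ → Bool :=
    fun k k' => decide (k.1 < k'.1 ∨ (k.1 = k'.1 ∧ k.2 ≤ k'.2)) with hleB
  have htrans : ∀ (a b c : ℕ × ℕ), leB a b = true → leB b c = true → leB a c = true := by
    intro a b c'
    simp only [hleB, decide_eq_true_eq]
    omega
  have htotal : ∀ (a b : ℕ × ℕ), (leB a b || leB b a) = true := by
    intro a b
    simp only [hleB, Bool.or_eq_true, decide_eq_true_eq]
    omega
  set ℓ : List (ℕ × ℕ) := (cells.toList).mergeSort leB with hℓ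
  have hperm : ℓ.Perm cells.toList := List.mergeSort_perm _ _
  have hmemℓ : ∀ k, k ∈ ℓ ↔ k ∈ cells := by
    intro k
    rw [hperm.mem_iff, Finset.mem_toList]
  have hnd : ℓ.Nodup := hperm.symm.nodup (Finset.nodup_toList cells)
  have hPWle : ℓ.Pairwise (fun a b => leB a b = true) :=
    List.pairwise_mergeSort htrans htotal (cells.toList)
  have hPW : ℓ.Pairwise R := by
    refine (hPWle.and hnd).imp_of_mem ?_
    intro a b ha hb hab
    rcases hab with ⟨hle, hne⟩
    simp only [hleB, decide_eq_true_eq] at hle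
    rcases hcomp a ((hmemℓ a).1 ha) b ((hmemℓ b).1 hb) with ⟨h1, h2⟩ | ⟨h1, h2⟩
    · exact ⟨h1, h2, hne⟩
    · rcases hle with hlt | ⟨heq, hle2⟩
      · omega
      · exact ⟨le_of_eq heq, hle2, hne⟩
  set Hl : List (ℕ × ℕ) := ℓ.filter (fun k => decide (Hplus k)) with hHl
  have hHlsub : List.Sublist Hl ℓ := List.filter_sublist
  have hmemHl : ∀ k, k ∈ Hl ↔ k ∈ cells ∧ Hplus k := by
    intro k
    rw [hHl, List.mem_filter, hmemℓ, decide_eq_true_eq]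
  have hPWHl : Hl.Pairwise R := hPW.sublist hHlsub
  set keptL : List (ℕ × ℕ) := greedy [] Hl with hkeptL
  have hkeptsub : List.Sublist keptL Hl := greedy_sublist Hl
  have hkeptPW : keptL.Pairwise R := hPWHl.sublist hkeptsub
  have hgood : Good keptL := greedy_window Hl hPWHl
  set HpF : Finset (ℕ × ℕ) := cells.filter Hplus with hHpF
  set keptF : Finset (ℕ × ℕ) := keptL.toFinset with hkeptF
  have hkmem : ∀ u, u ∈ keptF ↔ u ∈ keptL := fun u => List.mem_toFinset
  have hk1 : keptF ⊆ HpF := by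
    intro u hu
    have := (hmemHl u).1 (hkeptsub.mem ((hkmem u).1 hu))
    exact Finset.mem_filter.2 this
  have hk3 : ∀ t ∈ HpF, t ∉ keptF → ∃ u ∈ keptF,
      (u.1 = t.1 ∧ u.2 + 2 < t.2) ∨ (u.2 = t.2 ∧ u.1 + 2 < t.1) := by
    intro t ht htn
    have htHl : t ∈ Hl := (hmemHl t).2 (by
      rcases Finset.mem_filter.1 ht with ⟨h1, h2⟩; exact ⟨h1, h2⟩)
    have htn' : t ∉ keptL := fun hc => htn ((hkmem t).2 hc)
    rcases greedy_discard Hl [] t htHl htn' with ⟨u, hu, hviol⟩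
    exact ⟨u, (hkmem u).2 hu, hviol⟩
  have hHsub : HpF ⊆ cells := Finset.filter_subset _ _
  have hHbal : ∀ k ∈ HpF, (1 - α) * (x k + y k) < 2 * c k :=
    fun k hk => (Finset.mem_filter.1 hk).2.2.1
  -- row side application
  have hrowside := rowside n m L α β hL hα hα7 hβ0 hβα cells c x y hmem hcomp
    hc0 hcx hcy hxL hrow hcol HpF hHsub hHbal keptF hk1 hk3
  -- transposed (column side) application
  have hmem' : ∀ k ∈ cells.image Prod.swap, k.1 < m ∧ k.2 < n := by
    intro k hk
    have := hmem k.swap ((mem_image_swap cells k).1 hk)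
    exact ⟨this.2, this.1⟩
  have hcomp' : ∀ k ∈ cells.image Prod.swap, ∀ k' ∈ cells.image Prod.swap,
      (k.1 ≤ k'.1 ∧ k.2 ≤ k'.2) ∨ (k'.1 ≤ k.1 ∧ k'.2 ≤ k.2) := by
    intro k hk k' hk'
    rcases hcomp k.swap ((mem_image_swap cells k).1 hk) k'.swap
      ((mem_image_swap cells k').1 hk') with ⟨h1, h2⟩ | ⟨h1, h2⟩
    · exact Or.inl ⟨h2, h1⟩
    · exact Or.inr ⟨h2, h1⟩
  have hrow' : ∀ q, ∑ k ∈ (cells.image Prod.swap).filter (fun k => k.1 = q),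
      (fun k => y k.swap) k ≤ L := by
    intro q
    rw [filter_fst_image_swap, sum_image_swap]
    simpa using hcol q
  have hcol' : ∀ p, ∑ k ∈ (cells.image Prod.swap).filter (fun k => k.2 = p),
      (fun k => x k.swap) k ≤ L := by
    intro p
    have : (cells.image Prod.swap).filter (fun k => k.2 = p)
        = (cells.filter (fun k => k.1 = p)).image Prod.swap := by
      ext k
      simp only [Finset.mem_filter, Finset.mem_image]
      constructor
      · rintro ⟨⟨a, ha, rfl⟩, hq⟩
        exact ⟨a, ⟨ha, hq⟩, rfl⟩
      · rintro ⟨a, ⟨ha, hq⟩, rfl⟩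
        exact ⟨⟨a, ha, rfl⟩, hq⟩
    rw [this, sum_image_swap]
    simpa using hrow p
  have hcolside := rowside m n L α β hL hα hα7 hβ0 hβα (cells.image Prod.swap)
    (fun k => c k.swap) (fun k => y k.swap) (fun k => x k.swap)
    hmem' hcomp'
    (fun k hk => hc0 k.swap ((mem_image_swap cells k).1 hk))
    (fun k hk => hcy k.swap ((mem_image_swap cells k).1 hk))
    (fun k hk => hcx k.swap ((mem_image_swap cells k).1 hk))
    (fun k hk => hyL k.swap ((mem_image_swap cells k).1 hk))
    hrow' hcol'
    (HpF.image Prod.swap)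
    (Finset.image_subset_image hHsub)
    (by
      intro k hk
      have := hHbal k.swap ((mem_image_swap HpF k).1 hk)
      linarith)
    (keptF.image Prod.swap)
    (Finset.image_subset_image hk1)
    (by
      intro t ht htn
      have ht' : t.swap ∈ HpF := (mem_image_swap HpF t).1 ht
      have htn' : t.swap ∉ keptF := fun hc => htn ((mem_image_swap keptF t).2 hc)
      rcases hk3 t.swap ht' htn' with ⟨u, hu, hviol | hviol⟩
      · refine ⟨u.swap, (mem_image_swap keptF u.swap).2 (by simpa using hu), Or.inr ?_⟩
        simpa using hviol
      · refine ⟨u.swap, (mem_image_swap keptF u.swap).2 (by simpa using hu), Or.inl ?_⟩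
        simpa using hviol)
  -- translate the transposed conclusion
  rw [sum_image_swap HpF] at hcolside
  rw [Finset.card_image_of_injective keptF Prod.swap_injective] at hcolside
  have htr1 : ∀ q, ∑ k ∈ (cells.image Prod.swap).filter (fun k => k.1 = q),
      (fun k => y k.swap) k = ∑ k ∈ cells.filter (fun k => k.2 = q), y k := by
    intro q
    rw [filter_fst_image_swap, sum_image_swap]
    simp
  have htr2 : ∑ k ∈ cells.image Prod.swap,
      max 0 ((1-α) * ((fun k => y k.swap) k + (fun k => x k.swap) k) - 2 * (fun k => c k.swap) k)
      = ∑ k ∈ cells, max 0 ((1-α) * (x k + y k) - 2 * c k) := by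
    rw [sum_image_swap]
    apply Finset.sum_congr rfl
    intro k _
    simp only [Prod.swap_swap]
    ring_nf
  rw [htr2] at hcolside
  have htr3 : ∑ q ∈ Finset.range m,
      (L - ∑ k ∈ (cells.image Prod.swap).filter (fun k => k.1 = q), y k.swap)
      = ∑ q ∈ Finset.range m, (L - ∑ k ∈ cells.filter (fun k => k.2 = q), y k) := by
    apply Finset.sum_congr rfl
    intro q _
    have := htr1 q
    simp only at this
    rw [this]
  rw [htr3] at hcolside
  simp only [Prod.swap_swap] at hcolside
  -- final algebra
  set BB : ℕ × ℕ → ℝ := fun k => max 0 ((1-α)*(x k + y k) - 2*c k) with hBB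
  set NotF : Finset (ℕ × ℕ) := cells.filter (fun k => ¬ Hplus k) with hNotF
  have hsplitsum : ∑ k ∈ cells, 2*c k
      = ∑ k ∈ cells, ((1-α)*(x k + y k))
        + ((∑ k ∈ HpF, (2*c k - (1-α)*(x k + y k)))
          + (∑ k ∈ NotF, (2*c k - (1-α)*(x k + y k)))) := by
    rw [hHpF, hNotF, Finset.sum_filter_add_sum_filter_not cells Hplus
      (fun k => 2*c k - (1-α)*(x k + y k))]
    rw [← Finset.sum_add_distrib]
    apply Finset.sum_congr rfl
    intro k _
    ring
  have key1 : ∑ k ∈ HpF, (2*c k - (1-α)*(x k + y k))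
      ≤ (α-β) * (∑ k ∈ HpF, x k) + (α-β) * (∑ k ∈ HpF, y k) := by
    have hpt : ∀ k ∈ HpF, (2*c k - (1-α)*(x k + y k)) ≤ (α-β)*x k + (α-β)*y k := by
      intro k hk
      have h2 := (Finset.mem_filter.1 hk).2.2.2
      linarith
    have h1 := Finset.sum_le_sum hpt
    rwa [Finset.sum_add_distrib, ← Finset.mul_sum, ← Finset.mul_sum] at h1
  have keyBB0 : ∀ k ∈ HpF, BB k = 0 := by
    intro k hk
    have h2 := (Finset.mem_filter.1 hk).2.2.1
    rw [hBB]
    simp only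
    rw [max_eq_left (by linarith)]
  have key5 : ∑ k ∈ cells, BB k = ∑ k ∈ NotF, BB k := by
    rw [← Finset.sum_filter_add_sum_filter_not cells Hplus BB, ← hHpF, ← hNotF]
    rw [Finset.sum_eq_zero keyBB0, zero_add]
  have key4 : ∑ k ∈ NotF, (2*c k - (1-α)*(x k + y k))
      ≤ 2*Lr*(cells.card:ℝ) - ∑ k ∈ NotF, BB k := by
    have hpt : ∀ k ∈ NotF, (2*c k - (1-α)*(x k + y k)) ≤ 2*Lr - BB k := by
      intro k hk
      rcases Finset.mem_filter.1 hk with ⟨hkc, hknot⟩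
      have hxy0 : 0 ≤ x k + y k := by
        have := hx0 k hkc; have := hy0 k hkc; linarith
      have hBBk : BB k = max 0 ((1-α)*(x k + y k) - 2*c k) := by rw [hBB]
      by_cases he : 2*c k - (1-α)*(x k + y k) ≤ 0
      · rw [hBBk, max_eq_right (by linarith)]
        linarith
      · push_neg at he
        rw [hBBk, max_eq_left (by linarith)]
        have hcLr : c k ≤ Lr := by
          rcases hbound k hkc with ⟨hsame, hbd⟩ | hbd | hbd
          · exfalso
            exact hknot ⟨hsame, by linarith, hbd⟩
          · exfalso; linarith
          · exact hbd
        nlinarith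
    have h1 := Finset.sum_le_sum hpt
    have hsplit2 : ∑ k ∈ NotF, (2*Lr - BB k) = 2*Lr*(NotF.card:ℝ) - ∑ k ∈ NotF, BB k := by
      rw [Finset.sum_sub_distrib, Finset.sum_const, nsmul_eq_mul]
      ring
    rw [hsplit2] at h1
    have h2 : (NotF.card : ℝ) ≤ (cells.card : ℝ) := by
      exact_mod_cast Finset.card_le_card (Finset.filter_subset _ _)
    nlinarith
  have geomx : ∑ p ∈ Finset.range n, (L - ∑ k ∈ cells.filter (fun k => k.1 = p), x k)
      = n*L - ∑ k ∈ cells, x k := by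
    rw [Finset.sum_sub_distrib, Finset.sum_const, Finset.card_range, nsmul_eq_mul]
    rw [Finset.sum_fiberwise_of_maps_to (fun k hk => Finset.mem_range.2 (hmem k hk).1) x]
  have geomy : ∑ q ∈ Finset.range m, (L - ∑ k ∈ cells.filter (fun k => k.2 = q), y k)
      = m*L - ∑ k ∈ cells, y k := by
    rw [Finset.sum_sub_distrib, Finset.sum_const, Finset.card_range, nsmul_eq_mul]
    rw [Finset.sum_fiberwise_of_maps_to (fun k hk => Finset.mem_range.2 (hmem k hk).2) y]
  have hsumxy : ∑ k ∈ cells, ((1-α)*(x k + y k))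
      = (1-α) * (∑ k ∈ cells, x k + ∑ k ∈ cells, y k) := by
    rw [← Finset.sum_add_distrib, ← Finset.mul_sum]
  have hcard : (keptF.card : ℝ) ≤ (keptL.length : ℝ) := by
    exact_mod_cast List.toFinset_card_le keptL
  have hab : (0:ℝ) ≤ α - β := by linarith
  have habL : (0:ℝ) ≤ (α-β)*L := by nlinarith
  have hkl : (α-β)*L*(keptF.card:ℝ) ≤ (α-β)*L*(keptL.length:ℝ) :=
    mul_le_mul_of_nonneg_left hcard habL
  refine ⟨keptL, hkeptPW.isChain, ?_, ?_, ?_, ?_⟩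
  · intro u hu
    have := (hmemHl u).1 (hkeptsub.mem hu)
    exact ⟨this.1, this.2.1⟩
  · intro u hu v hv
    exact hgood u hu v hv
  · -- main inequality
    rw [geomx] at hrowside
    rw [geomy] at hcolside
    rw [hsplitsum, hsumxy]
    have e5 : (1/2) * ∑ k ∈ cells, BB k + (1/2) * ∑ k ∈ cells, BB k
        = ∑ k ∈ NotF, BB k := by rw [key5]; ring
    have hrs : (α - β) * ∑ k ∈ HpF, x k ≤ (α - β) * L * ↑keptF.card
        + (1 - α) * (n*L - ∑ k ∈ cells, x k) + 1/2 * ∑ k ∈ cells, BB k := hrowside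
    have hcs : (α - β) * ∑ k ∈ HpF, y k ≤ (α - β) * L * ↑keptF.card
        + (1 - α) * (m*L - ∑ k ∈ cells, y k) + 1/2 * ∑ k ∈ cells, BB k := hcolside
    have hBBN : ∑ k ∈ NotF, BB k = ∑ k ∈ NotF, max 0 ((1-α)*(x k + y k) - 2*c k) := rfl
    nlinarith [key1, key4, hrs, hcs, hkl, e5]
  · -- the (1-β) inequality
    have hpt : ∀ k ∈ cells, 2*c k ≤ (1-β)*(x k + y k) + 2*Lr := by
      intro k hk
      have hxy0 : 0 ≤ x k + y k := by
        have := hx0 k hk; have := hy0 k hk; linarith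
      rcases hbound k hk with ⟨_, hbd⟩ | hbd | hbd
      · linarith
      · nlinarith
      · nlinarith
    have h1 := Finset.sum_le_sum hpt
    rw [Finset.sum_add_distrib, Finset.sum_const, nsmul_eq_mul] at h1
    have h2 : ∑ k ∈ cells, x k + ∑ k ∈ cells, y k ≤ (n:ℝ)*L + m*L := by
      have d1 : (0:ℝ) ≤ ∑ p ∈ Finset.range n,
          (L - ∑ k ∈ cells.filter (fun k => k.1 = p), x k) :=
        Finset.sum_nonneg (fun p _ => by have := hrow p; linarith)
      have d2 : (0:ℝ) ≤ ∑ q ∈ Finset.range m,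
          (L - ∑ k ∈ cells.filter (fun k => k.2 = q), y k) :=
        Finset.sum_nonneg (fun q _ => by have := hcol q; linarith)
      rw [geomx] at d1; rw [geomy] at d2
      linarith
    have h3 : (1-β) * (∑ k ∈ cells, x k + ∑ k ∈ cells, y k) ≤ (1-β)*((n:ℝ)*L + m*L) := by
      apply mul_le_mul_of_nonneg_left h2
      linarith
    have h4 : ∑ k ∈ cells, (1-β)*(x k + y k)
        = (1-β) * (∑ k ∈ cells, x k + ∑ k ∈ cells, y k) := by
      rw [← Finset.sum_add_distrib, ← Finset.mul_sum]
    have : (1-β)*(((n:ℝ)+m)*L) = (1-β)*((n:ℝ)*L + m*L) := by ring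
    rw [this]
    calc ∑ k ∈ cells, 2*c k ≤ ∑ k ∈ cells, ((1-β)*(x k + y k)) + (cells.card:ℝ)*(2*Lr) := h1
      _ ≤ (1-β)*((n:ℝ)*L + m*L) + 2*(cells.card:ℝ)*Lr := by
          rw [h4]; linarith


end Core

namespace Core

open Paper

set_option maxHeartbeats 1000000

lemma cell_analysis {Λ : Type*} (L : ℕ) (hL : 0 < L)
    (Ca Da : List Λ) (hCa : Ca.length = L) (hDa : Da.length = L)
    (a' b' : List Λ) (p q : ℕ)
    (ha' : ∀ r, r < L → a'[p*L + r]? = Ca[r]?)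
    (hb' : ∀ r, r < L → b'[q*L + r]? = Da[r]?)
    (I : List (ℕ × ℕ)) (hIpw : I.Pairwise (fun u v => u.1 < v.1 ∧ u.2 < v.2))
    (hIok : ∀ u ∈ I, a'[u.1]? = b'[u.2]?)
    (S : List (ℕ × ℕ)) (hSsub : S.Sublist I)
    (hSce : ∀ u ∈ S, u.1 / L = p ∧ u.2 / L = q)
    (hS : S ≠ [])
    (γ R : ℝ) (hR : 0 < R) (hγ1 : γ ≤ 1)
    (hfb : ∀ C D : List Λ, C <:+: Ca → D <:+: Da → (L:ℝ)/R ≤ C.length →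
      (L:ℝ)/R ≤ D.length → γ ≤ Paper.fbar C D) :
    let ilo := (S.head hS).1
    let jlo := (S.head hS).2
    let ihi := (S.getLast hS).1
    let jhi := (S.getLast hS).2
    S.length ≤ ihi + 1 - ilo ∧ S.length ≤ jhi + 1 - jlo ∧
    1 ≤ ihi + 1 - ilo ∧ ihi + 1 - ilo ≤ L ∧ 1 ≤ jhi + 1 - jlo ∧ jhi + 1 - jlo ≤ L ∧
    (2*(S.length:ℝ) ≤ (1-γ)*(((ihi + 1 - ilo : ℕ):ℝ) + ((jhi + 1 - jlo : ℕ):ℝ))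
      ∨ (S.length:ℝ) ≤ (L:ℝ)/R) := by
  intro ilo jlo ihi jhi
  have hpw : S.Pairwise (fun u v => u.1 < v.1 ∧ u.2 < v.2) := hIpw.sublist hSsub
  have hhd : ∀ u ∈ S, ilo ≤ u.1 ∧ jlo ≤ u.2 := by
    intro u hu
    rcases pairwise_head hpw hS u hu with rfl | h
    · exact ⟨le_refl _, le_refl _⟩
    · exact ⟨le_of_lt h.1, le_of_lt h.2⟩
  have hlst : ∀ u ∈ S, u.1 ≤ ihi ∧ u.2 ≤ jhi := by
    intro u hu
    rcases pairwise_getLast hpw hS u hu with rfl | h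
    · exact ⟨le_refl _, le_refl _⟩
    · exact ⟨le_of_lt h.1, le_of_lt h.2⟩
  have hblock : ∀ u ∈ S, p*L ≤ u.1 ∧ u.1 < p*L + L ∧ q*L ≤ u.2 ∧ u.2 < q*L + L := by
    intro u hu
    obtain ⟨h1, h2⟩ := hSce u hu
    have hA1 : p * L ≤ u.1 := (Nat.le_div_iff_mul_le hL).1 (le_of_eq h1.symm)
    have hA2 : u.1 < p * L + L := by
      have h3 := (Nat.div_lt_iff_lt_mul hL).1 (by omega : u.1 / L < p + 1)
      have h4 : (p+1) * L = p*L + L := by ring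
      omega
    have hB1 : q * L ≤ u.2 := (Nat.le_div_iff_mul_le hL).1 (le_of_eq h2.symm)
    have hB2 : u.2 < q * L + L := by
      have h3 := (Nat.div_lt_iff_lt_mul hL).1 (by omega : u.2 / L < q + 1)
      have h4 : (q+1) * L = q*L + L := by ring
      omega
    exact ⟨hA1, hA2, hB1, hB2⟩
  have hheadS : S.head hS ∈ S := List.head_mem hS
  have hlastS : S.getLast hS ∈ S := List.getLast_mem hS
  have hil : ilo ≤ ihi := (hlst _ hheadS).1
  have hjl : jlo ≤ jhi := (hlst _ hheadS).2
  have hb1 := hblock _ hheadS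
  have hb2 := hblock _ hlastS
  have hcx : S.length ≤ ihi + 1 - ilo := by
    have h1 : (S.map Prod.fst).Pairwise (· < ·) := hpw.map _ (fun _ _ h => h.1)
    have := length_le_span h1 ilo ihi
      (by intro v hv; rcases List.mem_map.1 hv with ⟨u, hu, rfl⟩; exact (hhd u hu).1)
      (by intro v hv; rcases List.mem_map.1 hv with ⟨u, hu, rfl⟩; exact (hlst u hu).1)
    simpa using this
  have hcy : S.length ≤ jhi + 1 - jlo := by
    have h1 : (S.map Prod.snd).Pairwise (· < ·) := hpw.map _ (fun _ _ h => h.2)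
    have := length_le_span h1 jlo jhi
      (by intro v hv; rcases List.mem_map.1 hv with ⟨u, hu, rfl⟩; exact (hhd u hu).2)
      (by intro v hv; rcases List.mem_map.1 hv with ⟨u, hu, rfl⟩; exact (hlst u hu).2)
    simpa using this
  have hx1 : 1 ≤ ihi + 1 - ilo := by omega
  have hxL : ihi + 1 - ilo ≤ L := by omega
  have hy1 : 1 ≤ jhi + 1 - jlo := by omega
  have hyL : jhi + 1 - jlo ≤ L := by omega
  refine ⟨hcx, hcy, hx1, hxL, hy1, hyL, ?_⟩
  by_cases hhx : (L:ℝ)/R ≤ ((ihi + 1 - ilo : ℕ):ℝ)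
  · by_cases hhy : (L:ℝ)/R ≤ ((jhi + 1 - jlo : ℕ):ℝ)
    · -- heavy cell
      left
      set xN := ihi + 1 - ilo with hxN
      set yN := jhi + 1 - jlo with hyN
      set C : List Λ := (Ca.drop (ilo - p*L)).take xN with hC
      set D : List Λ := (Da.drop (jlo - q*L)).take yN with hD
      have hClen : C.length = xN := by
        rw [hC, List.length_take, List.length_drop, hCa]
        omega
      have hDlen : D.length = yN := by
        rw [hD, List.length_take, List.length_drop, hDa]
        omega
      have hCget : ∀ u ∈ S, C[u.1 - ilo]? = a'[u.1]? := by
        intro u hu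
        have hb := hblock u hu
        have h1 := (hhd u hu).1
        have h2 := (hlst u hu).1
        rw [hC, List.getElem?_take, if_pos (show u.1 - ilo < xN by omega), List.getElem?_drop]
        have e1 : ilo - p*L + (u.1 - ilo) = u.1 - p*L := by omega
        rw [e1]
        have e2 := ha' (u.1 - p*L) (by omega)
        have e3 : p*L + (u.1 - p*L) = u.1 := by omega
        rw [e3] at e2
        exact e2.symm
      have hDget : ∀ u ∈ S, D[u.2 - jlo]? = b'[u.2]? := by
        intro u hu
        have hb := hblock u hu
        have h1 := (hhd u hu).2
        have h2 := (hlst u hu).2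
        rw [hD, List.getElem?_take, if_pos (show u.2 - jlo < yN by omega), List.getElem?_drop]
        have e1 : jlo - q*L + (u.2 - jlo) = u.2 - q*L := by omega
        rw [e1]
        have e2 := hb' (u.2 - q*L) (by omega)
        have e3 : q*L + (u.2 - q*L) = u.2 := by omega
        rw [e3] at e2
        exact e2.symm
      have hmatch : IsMatch C D (S.map (fun u => (u.1 - ilo, u.2 - jlo))) := by
        constructor
        · apply List.Pairwise.isChain
          rw [List.pairwise_map]
          refine hpw.imp_of_mem ?_
          intro u v hu hv huv
          have h1 := (hhd u hu).1
          have h2 := (hhd u hu).2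
          exact ⟨by simp; omega, by simp; omega⟩
        · intro w hw
          rcases List.mem_map.1 hw with ⟨u, hu, rfl⟩
          have h2 := (hlst u hu)
          have h1 := (hhd u hu)
          refine ⟨by rw [hClen]; simp; omega, by rw [hDlen]; simp; omega, ?_⟩
          simp only
          rw [hCget u hu, hDget u hu]
          exact hIok u (hSsub.mem hu)
      have hfbCD : γ ≤ Paper.fbar C D := by
        apply hfb C D (drop_take_infix Ca _ _) (drop_take_infix Da _ _)
        · rw [hClen]; exact hhx
        · rw [hDlen]; exact hhy
      have hlenpos : 0 < (C.length : ℝ) + D.length := by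
        rw [hClen, hDlen]
        have : (1:ℝ) ≤ (xN:ℝ) := by exact_mod_cast hx1
        have : (1:ℝ) ≤ (yN:ℝ) := by exact_mod_cast hy1
        linarith
      have := two_mul_le_of_fbar_ge hfbCD hlenpos hmatch
      rw [hClen, hDlen, List.length_map] at this
      exact this
    · right
      push_neg at hhy
      have h1 : ((S.length : ℕ):ℝ) ≤ ((jhi + 1 - jlo : ℕ):ℝ) := by exact_mod_cast hcy
      linarith
  · right
    push_neg at hhx
    have h1 : ((S.length : ℕ):ℝ) ≤ ((ihi + 1 - ilo : ℕ):ℝ) := by exact_mod_cast hcx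
    linarith

end Core

open Paper List Core

set_option maxHeartbeats 2000000


/-- **Symbol by block replacement.** Let `A, B : Σ → Λ^L` assign to each
symbol a block of length `L`, and let `a, b` be strings over `Σ`. If, for all symbols
`s` of `a` and `t` of `b`, all consecutive substrings `C` of `A s` and `D` of `B t` of
length at least `L/R` satisfy `f̄(C,D) ≥ α` when `s ≠ t` and `f̄(C,D) ≥ β` when `s = t`
(where `0 < α < 1/7`, `0 ≤ β < 1/7`, `β ≤ α`, `R > 0`), then
`f̄(A(a₁)⋯A(aₙ), B(b₁)⋯B(bₘ)) > α·f̃ + β·(1−f̃) − 2/R` where `f̃ = f̃(a,b)`. -/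
theorem statement11 {σ Λ : Type*} (L : ℕ) (hL : 0 < L)
    (A B : σ → List Λ) (hA : ∀ s, (A s).length = L) (hB : ∀ t, (B t).length = L)
    (a b : List σ) (α β R : ℝ)
    (hα : 0 < α) (hα' : α < 1/7) (hβ : 0 ≤ β) (hβ' : β < 1/7) (hβα : β ≤ α) (hR : 0 < R)
    (hsep : ∀ s ∈ a, ∀ t ∈ b, s ≠ t → ∀ C D : List Λ, C <:+: A s → D <:+: B t →
      (L : ℝ) / R ≤ C.length → (L : ℝ) / R ≤ D.length → α ≤ fbar C D)
    (hsame : ∀ s ∈ a, ∀ t ∈ b, s = t → ∀ C D : List Λ, C <:+: A s → D <:+: B t →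
      (L : ℝ) / R ≤ C.length → (L : ℝ) / R ≤ D.length → β ≤ fbar C D) :
    α * ftilde a b + β * (1 - ftilde a b) - 2 / R <
      fbar ((a.map A).flatten) ((b.map B).flatten) := by
  classical
  have hF0 : 0 ≤ ftilde a b := le_max_left _ _
  have hF1 : ftilde a b ≤ 1 := by
    apply max_le (by norm_num)
    have h1 : 0 ≤ 2 * (maxApproxMatch a b : ℝ) / ((a.length : ℝ) + b.length) := by positivity
    linarith
  have h2R : 0 < 2 / R := by positivity
  by_cases hnm : a.length = 0 ∨ b.length = 0
  · -- degenerate case : one string empty, fbar = 1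
    have hM : maxMatch ((a.map A).flatten) ((b.map B).flatten) = 0 := by
      rcases hnm with h | h
      · have ha0 : a = [] := List.length_eq_zero_iff.1 h
        subst ha0
        simpa using maxMatch_eq_zero_left ((b.map B).flatten)
      · have hb0 : b = [] := List.length_eq_zero_iff.1 h
        subst hb0
        simpa using maxMatch_eq_zero_right ((a.map A).flatten)
    have hfb : fbar ((a.map A).flatten) ((b.map B).flatten) = 1 := by
      unfold fbar
      rw [hM]
      simp
    rw [hfb]
    have h1 : α * ftilde a b ≤ α := by nlinarith
    have h2 : β * (1 - ftilde a b) ≤ β := by nlinarith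
    linarith
  push_neg at hnm
  obtain ⟨hn0, hm0⟩ := hnm
  have hn : 1 ≤ a.length := Nat.one_le_iff_ne_zero.2 hn0
  have hm : 1 ≤ b.length := Nat.one_le_iff_ne_zero.2 hm0
  set a' : List Λ := (a.map A).flatten with ha'
  set b' : List Λ := (b.map B).flatten with hb'
  have ha'len : a'.length = a.length * L := flatten_length A L hA a
  have hb'len : b'.length = b.length * L := flatten_length B L hB b
  obtain ⟨I, hI, hIlen⟩ := exists_maxMatch a' b'
  have hIpw : I.Pairwise (fun u v : ℕ × ℕ => u.1 < v.1 ∧ u.2 < v.2) := isMatch_pairwise hI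
  set Sf : ℕ × ℕ → List (ℕ × ℕ) := fun k => I.filter (fun u => (u.1 / L, u.2 / L) = k) with hSf
  set cells : Finset (ℕ × ℕ) :=
    ((Finset.range a.length) ×ˢ (Finset.range b.length)).filter (fun k => Sf k ≠ []) with hcells
  set cF : ℕ × ℕ → ℝ := fun k => ((Sf k).length : ℝ) with hcF
  set xN : ℕ × ℕ → ℕ := fun k =>
    if h : Sf k ≠ [] then ((Sf k).getLast h).1 + 1 - ((Sf k).head h).1 else 0 with hxN
  set yN : ℕ × ℕ → ℕ := fun k =>
    if h : Sf k ≠ [] then ((Sf k).getLast h).2 + 1 - ((Sf k).head h).2 else 0 with hyN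
  set xF : ℕ × ℕ → ℝ := fun k => ((xN k : ℕ) : ℝ) with hxF
  set yF : ℕ × ℕ → ℝ := fun k => ((yN k : ℕ) : ℝ) with hyF
  set sameF : ℕ × ℕ → Prop := fun k => a[k.1]? = b[k.2]? with hsameF
  have hSsub : ∀ k, (Sf k).Sublist I := fun k => List.filter_sublist
  have hSmem : ∀ k u, u ∈ Sf k ↔ u ∈ I ∧ (u.1 / L, u.2 / L) = k := by
    intro k u
    rw [hSf]
    simp only [List.mem_filter, decide_eq_true_eq]
  have hmemc : ∀ k ∈ cells, k.1 < a.length ∧ k.2 < b.length := by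
    intro k hk
    rcases Finset.mem_filter.1 hk with ⟨hk1, _⟩
    rcases Finset.mem_product.1 hk1 with ⟨h1, h2⟩
    exact ⟨Finset.mem_range.1 h1, Finset.mem_range.1 h2⟩
  have hSne : ∀ k ∈ cells, Sf k ≠ [] := fun k hk => (Finset.mem_filter.1 hk).2
  -- comparability of members of I
  have hPor : ∀ u ∈ I, ∀ v ∈ I, u = v ∨ (u.1 < v.1 ∧ u.2 < v.2) ∨ (v.1 < u.1 ∧ v.2 < u.2) := by
    intro u hu v hv
    by_cases he : u = v
    · exact Or.inl he
    · have h2 : I.Pairwise (fun u v : ℕ × ℕ =>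
          (u.1 < v.1 ∧ u.2 < v.2) ∨ (v.1 < u.1 ∧ v.2 < u.2)) := hIpw.imp Or.inl
      haveI : Std.Symm (fun u v : ℕ × ℕ =>
          (u.1 < v.1 ∧ u.2 < v.2) ∨ (v.1 < u.1 ∧ v.2 < u.2)) := ⟨fun u v h => h.symm⟩
      exact Or.inr (h2.forall hu hv he)
  -- comparability of cells
  have hcomp : ∀ k ∈ cells, ∀ k' ∈ cells,
      (k.1 ≤ k'.1 ∧ k.2 ≤ k'.2) ∨ (k'.1 ≤ k.1 ∧ k'.2 ≤ k.2) := by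
    intro k hk k' hk'
    set u := (Sf k).head (hSne k hk) with hu
    set v := (Sf k').head (hSne k' hk') with hv
    have hus : u ∈ Sf k := List.head_mem _
    have hvs : v ∈ Sf k' := List.head_mem _
    have huI := (hSmem k u).1 hus
    have hvI := (hSmem k' v).1 hvs
    rcases hPor u huI.1 v hvI.1 with he | ⟨h1, h2⟩ | ⟨h1, h2⟩
    · left
      rw [← huI.2, ← hvI.2, he]
      exact ⟨le_refl _, le_refl _⟩
    · left
      rw [← huI.2, ← hvI.2]
      exact ⟨Nat.div_le_div_right (le_of_lt h1), Nat.div_le_div_right (le_of_lt h2)⟩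
    · right
      rw [← huI.2, ← hvI.2]
      exact ⟨Nat.div_le_div_right (le_of_lt h1), Nat.div_le_div_right (le_of_lt h2)⟩
  -- block-range facts for members of cells
  have hdiv : ∀ (v w : ℕ), v / L = w → w * L ≤ v ∧ v < w * L + L := by
    intro v w h1
    constructor
    · exact (Nat.le_div_iff_mul_le hL).1 (le_of_eq h1.symm)
    · have h3 := (Nat.div_lt_iff_lt_mul hL).1 (by omega : v / L < w + 1)
      have h4 : (w+1) * L = w*L + L := by ring
      omega
  have hheadblock : ∀ k ∈ cells, ∀ u ∈ Sf k,
      k.1 * L ≤ u.1 ∧ u.1 < k.1 * L + L ∧ k.2 * L ≤ u.2 ∧ u.2 < k.2 * L + L := by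
    intro k hk u hu
    have h1 := (hSmem k u).1 hu
    have e1 : u.1 / L = k.1 := by rw [← h1.2]
    have e2 : u.2 / L = k.2 := by rw [← h1.2]
    obtain ⟨a1, a2⟩ := hdiv u.1 k.1 e1
    obtain ⟨b1, b2⟩ := hdiv u.2 k.2 e2
    exact ⟨a1, a2, b1, b2⟩
  have hSpw : ∀ k, (Sf k).Pairwise (fun u v : ℕ × ℕ => u.1 < v.1 ∧ u.2 < v.2) :=
    fun k => hIpw.sublist (hSsub k)
  -- per-cell analysis
  have hcell : ∀ k ∈ cells,
      (Sf k).length ≤ xN k ∧ (Sf k).length ≤ yN k ∧ 1 ≤ xN k ∧ xN k ≤ L ∧ 1 ≤ yN k ∧ yN k ≤ L ∧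
      ((sameF k ∧ 2*cF k ≤ (1-β)*(xF k + yF k)) ∨ 2*cF k ≤ (1-α)*(xF k + yF k)
        ∨ cF k ≤ (L:ℝ)/R) := by
    intro k hk
    obtain ⟨hp, hq⟩ := hmemc k hk
    have hS := hSne k hk
    have hce : ∀ u ∈ Sf k, u.1 / L = k.1 ∧ u.2 / L = k.2 := by
      intro u hu
      have h1 := ((hSmem k u).1 hu).2
      constructor <;> rw [← h1]
    have hIok2 : ∀ u ∈ I, a'[u.1]? = b'[u.2]? := fun u hu => (hI.2 u hu).2.2
    have ha'idx : ∀ r, r < L → a'[k.1*L + r]? = (A (a[k.1]'hp))[r]? :=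
      fun r hr => flatten_getElem? A L hL hA a k.1 r hp hr
    have hb'idx : ∀ r, r < L → b'[k.2*L + r]? = (B (b[k.2]'hq))[r]? :=
      fun r hr => flatten_getElem? B L hL hB b k.2 r hq hr
    have hxNk : xN k = ((Sf k).getLast hS).1 + 1 - ((Sf k).head hS).1 := by
      rw [hxN]; exact dif_pos hS
    have hyNk : yN k = ((Sf k).getLast hS).2 + 1 - ((Sf k).head hS).2 := by
      rw [hyN]; exact dif_pos hS
    have hcFk : cF k = ((Sf k).length : ℝ) := rfl
    by_cases hsm : a[k.1]'hp = b[k.2]'hq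
    · have hga := cell_analysis L hL (A (a[k.1]'hp)) (B (b[k.2]'hq)) (hA _) (hB _)
        a' b' k.1 k.2 ha'idx hb'idx I hIpw hIok2 (Sf k) (hSsub k) hce hS β R hR
        (by linarith)
        (hsame _ (List.getElem_mem hp) _ (List.getElem_mem hq) hsm)
      simp only at hga
      obtain ⟨g1, g2, g3, g4, g5, g6, g7⟩ := hga
      refine ⟨by omega, by omega, by omega, by omega, by omega, by omega, ?_⟩
      rcases g7 with h7 | h7
      · left
        constructor
        · show a[k.1]? = b[k.2]?
          rw [List.getElem?_eq_getElem hp, List.getElem?_eq_getElem hq, hsm]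
        · rw [hcFk, hxF, hyF]
          simp only
          rw [hxNk, hyNk]
          exact h7
      · right; right
        rw [hcFk]
        exact h7
    · have hga := cell_analysis L hL (A (a[k.1]'hp)) (B (b[k.2]'hq)) (hA _) (hB _)
        a' b' k.1 k.2 ha'idx hb'idx I hIpw hIok2 (Sf k) (hSsub k) hce hS α R hR
        (by linarith)
        (hsep _ (List.getElem_mem hp) _ (List.getElem_mem hq) hsm)
      simp only at hga
      obtain ⟨g1, g2, g3, g4, g5, g6, g7⟩ := hga
      refine ⟨by omega, by omega, by omega, by omega, by omega, by omega, ?_⟩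
      rcases g7 with h7 | h7
      · right; left
        rw [hcFk, hxF, hyF]
        simp only
        rw [hxNk, hyNk]
        exact h7
      · right; right
        rw [hcFk]
        exact h7
  have hc0 : ∀ k ∈ cells, 0 ≤ cF k := fun k _ => Nat.cast_nonneg _
  have hcxF : ∀ k ∈ cells, cF k ≤ xF k := by
    intro k hk
    have := (hcell k hk).1
    simp only [hcF, hxF, hyF]
    exact_mod_cast this
  have hcyF : ∀ k ∈ cells, cF k ≤ yF k := by
    intro k hk
    have := (hcell k hk).2.1
    simp only [hcF, hxF, hyF]
    exact_mod_cast this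
  have hxLF : ∀ k ∈ cells, xF k ≤ (L:ℝ) := by
    intro k hk
    have := (hcell k hk).2.2.2.1
    simp only [hcF, hxF, hyF]
    exact_mod_cast this
  have hyLF : ∀ k ∈ cells, yF k ≤ (L:ℝ) := by
    intro k hk
    have := (hcell k hk).2.2.2.2.2.1
    simp only [hcF, hxF, hyF]
    exact_mod_cast this
  have hboundF : ∀ k ∈ cells, (sameF k ∧ 2*cF k ≤ (1-β)*(xF k + yF k))
      ∨ 2*cF k ≤ (1-α)*(xF k + yF k) ∨ cF k ≤ (L:ℝ)/R :=
    fun k hk => (hcell k hk).2.2.2.2.2.2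
  -- row and column span sums
  have hordrow : ∀ p, ∀ k ∈ cells.filter (fun k => k.1 = p), ∀ k' ∈ cells.filter (fun k => k.1 = p),
      k ≠ k' → (∀ u ∈ Sf k, ∀ v ∈ Sf k', u.1 < v.1) ∨ (∀ u ∈ Sf k', ∀ v ∈ Sf k, u.1 < v.1) := by
    intro p k hk k' hk'  hne
    obtain ⟨hkc, hkp⟩ := Finset.mem_filter.1 hk
    obtain ⟨hkc', hkp'⟩ := Finset.mem_filter.1 hk'
    have hq2 : k.2 ≠ k'.2 := by
      intro h
      exact hne (Prod.ext (by rw [hkp, hkp']) h)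
    have main : ∀ (kk kk' : ℕ × ℕ), kk ∈ cells → kk' ∈ cells → kk.2 < kk'.2 →
        ∀ u ∈ Sf kk, ∀ v ∈ Sf kk', u.1 < v.1 := by
      intro kk kk' hkk hkk' hlt u hu v hv
      have hu' := (hSmem kk u).1 hu
      have hv' := (hSmem kk' v).1 hv
      have hunev : u ≠ v := by
        intro h
        rw [h] at hu'
        rw [hu'.2] at hv'
        exact absurd hv'.2 (by intro hcc; rw [hcc] at hlt; omega)
      rcases hPor u hu'.1 v hv'.1 with he | ⟨h1, h2⟩ | ⟨h1, h2⟩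
      · exact absurd he hunev
      · exact h1
      · exfalso
        have : v.2 / L ≤ u.2 / L := Nat.div_le_div_right (le_of_lt h2)
        have e1 : u.2 / L = kk.2 := by rw [← hu'.2]
        have e2 : v.2 / L = kk'.2 := by rw [← hv'.2]
        omega
    rcases Nat.lt_or_ge k.2 k'.2 with hlt | hge
    · exact Or.inl (main k k' hkc hkc' hlt)
    · have hlt : k'.2 < k.2 := by omega
      exact Or.inr (main k' k hkc' hkc hlt)
  have hrowN : ∀ p, ∑ k ∈ cells.filter (fun k => k.1 = p), xN k ≤ L := by
    intro p
    have hcong : ∀ k ∈ cells.filter (fun k => k.1 = p),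
        xN k = ((fun k => if h : Sf k ≠ [] then ((Sf k).getLast h).1 else 0) k) + 1
          - ((fun k => if h : Sf k ≠ [] then ((Sf k).head h).1 else 0) k) := by
      intro k hk
      have hS := hSne k (Finset.mem_filter.1 hk).1
      rw [hxN]
      simp only [dif_pos hS]
    rw [Finset.sum_congr rfl hcong]
    apply sum_spans_le _ _ _ (p*L) L hL
    · intro k hk
      obtain ⟨hkc, hkp⟩ := Finset.mem_filter.1 hk
      have hS := hSne k hkc
      simp only [dif_pos hS]
      have hh := hheadblock k hkc _ (List.head_mem hS)
      have hl := hheadblock k hkc _ (List.getLast_mem hS)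
      have hord : ((Sf k).head hS).1 ≤ ((Sf k).getLast hS).1 := by
        rcases pairwise_getLast (hSpw k) hS _ (List.head_mem hS) with he | hlt
        · rw [← he]
        · exact le_of_lt hlt.1
      rw [hkp] at hh hl
      exact ⟨hh.1, hord, hl.2.1⟩
    · intro k hk k' hk' hne
      obtain ⟨hkc, _⟩ := Finset.mem_filter.1 hk
      obtain ⟨hkc', _⟩ := Finset.mem_filter.1 hk'
      have hS := hSne k hkc
      have hS' := hSne k' hkc'
      simp only [dif_pos hS, dif_pos hS']
      rcases hordrow p k hk k' hk' hne with h | h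
      · exact Or.inl (h _ (List.getLast_mem hS) _ (List.head_mem hS'))
      · exact Or.inr (h _ (List.getLast_mem hS') _ (List.head_mem hS))
  have hordcol : ∀ q, ∀ k ∈ cells.filter (fun k => k.2 = q), ∀ k' ∈ cells.filter (fun k => k.2 = q),
      k ≠ k' → (∀ u ∈ Sf k, ∀ v ∈ Sf k', u.2 < v.2) ∨ (∀ u ∈ Sf k', ∀ v ∈ Sf k, u.2 < v.2) := by
    intro q k hk k' hk' hne
    obtain ⟨hkc, hkq⟩ := Finset.mem_filter.1 hk
    obtain ⟨hkc', hkq'⟩ := Finset.mem_filter.1 hk'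
    have hq1 : k.1 ≠ k'.1 := by
      intro h
      exact hne (Prod.ext h (by rw [hkq, hkq']))
    have main : ∀ (kk kk' : ℕ × ℕ), kk ∈ cells → kk' ∈ cells → kk.1 < kk'.1 →
        ∀ u ∈ Sf kk, ∀ v ∈ Sf kk', u.2 < v.2 := by
      intro kk kk' hkk hkk' hlt u hu v hv
      have hu' := (hSmem kk u).1 hu
      have hv' := (hSmem kk' v).1 hv
      have hunev : u ≠ v := by
        intro h
        rw [h] at hu'
        rw [hu'.2] at hv'
        exact absurd hv'.2 (by intro hcc; rw [hcc] at hlt; omega)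
      rcases hPor u hu'.1 v hv'.1 with he | ⟨h1, h2⟩ | ⟨h1, h2⟩
      · exact absurd he hunev
      · exact h2
      · exfalso
        have : v.1 / L ≤ u.1 / L := Nat.div_le_div_right (le_of_lt h1)
        have e1 : u.1 / L = kk.1 := by rw [← hu'.2]
        have e2 : v.1 / L = kk'.1 := by rw [← hv'.2]
        omega
    rcases Nat.lt_or_ge k.1 k'.1 with hlt | hge
    · exact Or.inl (main k k' hkc hkc' hlt)
    · have hlt : k'.1 < k.1 := by omega
      exact Or.inr (main k' k hkc' hkc hlt)
  have hcolN : ∀ q, ∑ k ∈ cells.filter (fun k => k.2 = q), yN k ≤ L := by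
    intro q
    have hcong : ∀ k ∈ cells.filter (fun k => k.2 = q),
        yN k = ((fun k => if h : Sf k ≠ [] then ((Sf k).getLast h).2 else 0) k) + 1
          - ((fun k => if h : Sf k ≠ [] then ((Sf k).head h).2 else 0) k) := by
      intro k hk
      have hS := hSne k (Finset.mem_filter.1 hk).1
      rw [hyN]
      simp only [dif_pos hS]
    rw [Finset.sum_congr rfl hcong]
    apply sum_spans_le _ _ _ (q*L) L hL
    · intro k hk
      obtain ⟨hkc, hkq⟩ := Finset.mem_filter.1 hk
      have hS := hSne k hkc
      simp only [dif_pos hS]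
      have hh := hheadblock k hkc _ (List.head_mem hS)
      have hl := hheadblock k hkc _ (List.getLast_mem hS)
      have hord : ((Sf k).head hS).2 ≤ ((Sf k).getLast hS).2 := by
        rcases pairwise_getLast (hSpw k) hS _ (List.head_mem hS) with he | hlt
        · rw [← he]
        · exact le_of_lt hlt.2
      rw [hkq] at hh hl
      exact ⟨hh.2.2.1, hord, hl.2.2.2⟩
    · intro k hk k' hk' hne
      obtain ⟨hkc, _⟩ := Finset.mem_filter.1 hk
      obtain ⟨hkc', _⟩ := Finset.mem_filter.1 hk'
      have hS := hSne k hkc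
      have hS' := hSne k' hkc'
      simp only [dif_pos hS, dif_pos hS']
      rcases hordcol q k hk k' hk' hne with h | h
      · exact Or.inl (h _ (List.getLast_mem hS) _ (List.head_mem hS'))
      · exact Or.inr (h _ (List.getLast_mem hS') _ (List.head_mem hS))
  have hrowF : ∀ p, ∑ k ∈ cells.filter (fun k => k.1 = p), xF k ≤ (L:ℝ) := by
    intro p
    have h1 := hrowN p
    simp only [hxF]
    exact_mod_cast h1
  have hcolF : ∀ q, ∑ k ∈ cells.filter (fun k => k.2 = q), yF k ≤ (L:ℝ) := by
    intro q
    have h1 := hcolN q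
    simp only [hyF]
    exact_mod_cast h1
  -- total count
  have hmap : ∀ u ∈ I, ((u.1 / L, u.2 / L) : ℕ × ℕ)
      ∈ (Finset.range a.length) ×ˢ (Finset.range b.length) := by
    intro u hu
    have h1 := (hI.2 u hu).1
    have h2 := (hI.2 u hu).2.1
    rw [ha'len] at h1
    rw [hb'len] at h2
    rw [Finset.mem_product, Finset.mem_range, Finset.mem_range]
    exact ⟨(Nat.div_lt_iff_lt_mul hL).2 h1, (Nat.div_lt_iff_lt_mul hL).2 h2⟩
  have htotN : ∑ k ∈ cells, (Sf k).length = I.length := by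
    have h1 := length_eq_sum_filter I (fun u => (u.1 / L, u.2 / L))
      ((Finset.range a.length) ×ˢ (Finset.range b.length)) hmap
    rw [← h1]
    rw [hcells]
    rw [← Finset.sum_filter_add_sum_filter_not
      ((Finset.range a.length) ×ˢ (Finset.range b.length)) (fun k => Sf k ≠ [])
      (fun k => (Sf k).length)]
    have h2 : ∑ k ∈ ((Finset.range a.length) ×ˢ (Finset.range b.length)).filter
        (fun k => ¬ Sf k ≠ []), (Sf k).length = 0 := by
      apply Finset.sum_eq_zero
      intro k hk
      have := (Finset.mem_filter.1 hk).2
      push_neg at this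
      rw [hSf] at this ⊢
      rw [this]
      rfl
    rw [h2]
    simp [hSf]
  have htotF : ∑ k ∈ cells, 2 * cF k = 2 * ((maxMatch a' b' : ℕ) : ℝ) := by
    rw [← hIlen, ← htotN]
    rw [← Finset.mul_sum]
    congr 1
    rw [hcF]
    push_cast
    rfl
  -- apply the core combinatorial theorem
  have hLpos : (0:ℝ) < (L:ℝ) := by exact_mod_cast hL
  obtain ⟨J, hJchain, hJmem, hJwin, hineq1, hineq2⟩ :=
    core a.length b.length (L:ℝ) ((L:ℝ)/R) α β hLpos (by positivity)
      hα (le_of_lt hα') hβ hβα cells cF xF yF sameF hmemc hcomp hc0 hcxF hcyF hxLF hyLF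
      hboundF hrowF hcolF
  -- J is an approximate match of a and b
  have hJpw : J.Pairwise (fun u v : ℕ × ℕ => u.1 ≤ v.1 ∧ u.2 ≤ v.2 ∧ u ≠ v) :=
    List.isChain_iff_pairwise.1 hJchain
  have hJap : IsApproxMatch a b J := by
    refine ⟨hJchain, ?_, ?_⟩
    · intro u hu
      obtain ⟨huc, hus⟩ := hJmem u hu
      obtain ⟨h1, h2⟩ := hmemc u huc
      exact ⟨h1, h2, hus⟩
    · intro u hu
      constructor
      · set l' := J.filter (fun v => decide (v.1 = u.1)) with hl'
        have hul' : u ∈ l' := by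
          rw [hl', List.mem_filter]
          exact ⟨hu, by simp⟩
        have hne : l' ≠ [] := List.ne_nil_of_mem hul'
        have hpwl' : l'.Pairwise (fun u v : ℕ × ℕ => u.1 ≤ v.1 ∧ u.2 ≤ v.2 ∧ u ≠ v) :=
          hJpw.sublist (List.filter_sublist)
        have hheadmem : l'.head hne ∈ l' := List.head_mem _
        have hheadJ : l'.head hne ∈ J := (List.mem_filter.1 hheadmem).1
        have hheadr : (l'.head hne).1 = u.1 := by
          have := (List.mem_filter.1 hheadmem).2
          simpa using this
        refine ⟨(l'.head hne).2, ?_⟩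
        intro v hv hv1
        have hvl' : v ∈ l' := by
          rw [hl', List.mem_filter]
          exact ⟨hv, by simp [hv1]⟩
        have hle : (l'.head hne).2 ≤ v.2 := by
          rcases pairwise_head hpwl' hne v hvl' with he | hrel
          · rw [← he]
          · exact hrel.2.1
        have hge : v.2 ≤ (l'.head hne).2 + 2 :=
          (hJwin (l'.head hne) hheadJ v hv).1 (by rw [hheadr, hv1])
        simp only [Set.mem_insert_iff, Set.mem_singleton_iff]
        omega
      · set l' := J.filter (fun v => decide (v.2 = u.2)) with hl'
        have hul' : u ∈ l' := by
          rw [hl', List.mem_filter]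
          exact ⟨hu, by simp⟩
        have hne : l' ≠ [] := List.ne_nil_of_mem hul'
        have hpwl' : l'.Pairwise (fun u v : ℕ × ℕ => u.1 ≤ v.1 ∧ u.2 ≤ v.2 ∧ u ≠ v) :=
          hJpw.sublist (List.filter_sublist)
        have hheadmem : l'.head hne ∈ l' := List.head_mem _
        have hheadJ : l'.head hne ∈ J := (List.mem_filter.1 hheadmem).1
        have hheadr : (l'.head hne).2 = u.2 := by
          have := (List.mem_filter.1 hheadmem).2
          simpa using this
        refine ⟨(l'.head hne).1, ?_⟩
        intro v hv hv1
        have hvl' : v ∈ l' := by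
          rw [hl', List.mem_filter]
          exact ⟨hv, by simp [hv1]⟩
        have hle : (l'.head hne).1 ≤ v.1 := by
          rcases pairwise_head hpwl' hne v hvl' with he | hrel
          · rw [← he]
          · exact hrel.1
        have hge : v.1 ≤ (l'.head hne).1 + 2 :=
          (hJwin (l'.head hne) hheadJ v hv).2 (by rw [hheadr, hv1])
        simp only [Set.mem_insert_iff, Set.mem_singleton_iff]
        omega
  have hKJ : (J.length : ℝ) ≤ ((maxApproxMatch a b : ℕ) : ℝ) := by
    exact_mod_cast le_maxApproxMatch hJap
  -- final arithmetic
  have hcardN := cells_card_le a.length b.length hn hm cells hmemc hcomp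
  have hcard : (cells.card : ℝ) ≤ (a.length:ℝ) + b.length - 1 := by
    have h1 : ((cells.card : ℕ):ℝ) ≤ ((a.length + b.length - 1 : ℕ):ℝ) := by
      exact_mod_cast hcardN
    have h2 : ((a.length + b.length - 1 : ℕ):ℝ) = (a.length:ℝ) + b.length - 1 := by
      have h3 : 1 ≤ a.length + b.length := by omega
      push_cast [h3]
      ring
    rw [h2] at h1
    exact h1
  set nm : ℝ := (a.length:ℝ) + b.length with hnm'
  have hnm1 : (1:ℝ) ≤ nm := by
    rw [hnm']
    have : (1:ℝ) ≤ (a.length:ℝ) := by exact_mod_cast hn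
    have : (0:ℝ) ≤ (b.length:ℝ) := by positivity
    linarith
  set d : ℝ := nm * L with hd
  have hdpos : 0 < d := by
    rw [hd]
    nlinarith
  have hLR : 0 < (L:ℝ)/R := by positivity
  set M : ℕ := maxMatch a' b' with hM
  set K : ℕ := maxApproxMatch a b with hK
  rw [htotF] at hineq1 hineq2
  -- strictify the card term
  have hcardterm : 2*(cells.card:ℝ)*((L:ℝ)/R) < (2/R)*d := by
    have e1 : (2/R)*d = 2*nm*((L:ℝ)/R) := by
      rw [hd]; field_simp
    rw [e1]
    have e2 : 2*(cells.card:ℝ)*((L:ℝ)/R) ≤ 2*(nm - 1)*((L:ℝ)/R) := by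
      apply mul_le_mul_of_nonneg_right _ (le_of_lt hLR)
      rw [hnm']
      linarith [hcard]
    nlinarith
  have hd_eq : (1-α)*(((a.length:ℝ)+b.length)*(L:ℝ)) = (1-α)*d := by rw [hd, hnm']
  have hd_eq2 : (1-β)*(((a.length:ℝ)+b.length)*(L:ℝ)) = (1-β)*d := by rw [hd, hnm']
  rw [hd_eq] at hineq1
  rw [hd_eq2] at hineq2
  have habL : (0:ℝ) ≤ 2*(α-β)*(L:ℝ) := by nlinarith
  have hstep1 : 2*((M:ℕ):ℝ) < (1-α)*d + (α-β)*(2*((K:ℕ):ℝ)/nm)*d + (2/R)*d := by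
    have e1 : 2*(α-β)*(L:ℝ)*(J.length:ℝ) ≤ 2*(α-β)*(L:ℝ)*((K:ℕ):ℝ) :=
      mul_le_mul_of_nonneg_left hKJ habL
    have e2 : (α-β)*(2*((K:ℕ):ℝ)/nm)*d = 2*(α-β)*(L:ℝ)*((K:ℕ):ℝ) := by
      rw [hd]
      have : nm ≠ 0 := by linarith
      field_simp
    rw [e2]
    calc 2*((M:ℕ):ℝ) ≤ (1-α)*d + 2*(α-β)*(L:ℝ)*(J.length:ℝ) + 2*(cells.card:ℝ)*((L:ℝ)/R) :=
          hineq1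
      _ < (1-α)*d + 2*(α-β)*(L:ℝ)*((K:ℕ):ℝ) + (2/R)*d := by linarith [e1, hcardterm]
  have hstep2 : 2*((M:ℕ):ℝ) < (1-β)*d + (2/R)*d := by
    calc 2*((M:ℕ):ℝ) ≤ (1-β)*d + 2*(cells.card:ℝ)*((L:ℝ)/R) := hineq2
      _ < (1-β)*d + (2/R)*d := by linarith [hcardterm]
  have hdiv1 : 2*((M:ℕ):ℝ)/d < (1-α) + (α-β)*(2*((K:ℕ):ℝ)/nm) + 2/R := by
    rw [div_lt_iff₀ hdpos]
    nlinarith [hstep1]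
  have hdiv2 : 2*((M:ℕ):ℝ)/d < (1-β) + 2/R := by
    rw [div_lt_iff₀ hdpos]
    nlinarith [hstep2]
  have hfbar : fbar a' b' = 1 - 2*((M:ℕ):ℝ)/d := by
    unfold fbar
    rw [← hM]
    congr 1
    rw [hd, hnm', ha'len, hb'len]
    push_cast
    ring_nf
  rw [hfbar]
  have hftld : ftilde a b = max 0 (1 - 2*((K:ℕ):ℝ)/nm) := by
    unfold ftilde
    rw [← hK, hnm']
  rcases le_or_gt (1 - 2*((K:ℕ):ℝ)/nm) 0 with hc | hc
  · have hFt : ftilde a b = 0 := by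
      rw [hftld]
      exact max_eq_left hc
    rw [hFt]
    have : α * 0 + β * (1 - 0) - 2/R = β - 2/R := by ring
    rw [this]
    linarith [hdiv2]
  · have hFt : ftilde a b = 1 - 2*((K:ℕ):ℝ)/nm := by
      rw [hftld]
      exact max_eq_right (le_of_lt hc)
    rw [hFt]
    nlinarith [hdiv1]
end

section
/- Let Σ and Λ be alphabets, let L be a positive integer, let A : Σ → Λ^L assign to each symbol a block of length L, and let a = a_1 ⋯ a_n ∈ Σ^n and b = b_1 ⋯ b_m ∈ Σ^m. Assume α ∈ (0, 1/7), R > 0, and that f̄(C, D) ≥ α for all substrings C of A(a_i) and D of A(b_j) consisting of consecutive symbols with a_i ≠ b_j and |C|, |D| ≥ L/R. Then, with f̃ = f̃(a_1 a_2 ⋯ a_n, b_1 b_2 ⋯ b_m), we have f̄(A(a_1)A(a_2)⋯A(a_n), A(b_1)A(b_2)⋯A(b_m)) > α·f̃ − 2/R. -/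
open MeasureTheory

open Paper List

namespace Aux
open Paper

instance : IsTrans (ℕ × ℕ) (fun p q => p.1 < q.1 ∧ p.2 < q.2) :=
  ⟨fun _ _ _ h1 h2 => ⟨h1.1.trans h2.1, h1.2.trans h2.2⟩⟩

instance : IsTrans (ℕ × ℕ) (fun p q : ℕ × ℕ => p.1 ≤ q.1 ∧ p.2 ≤ q.2 ∧ p ≠ q) := by
  constructor
  rintro ⟨a1,a2⟩ ⟨b1,b2⟩ ⟨c1,c2⟩ ⟨h1, h2, h3⟩ ⟨g1, g2, g3⟩
  refine ⟨h1.trans g1, h2.trans g2, ?_⟩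
  simp only [ne_eq, Prod.mk.injEq, not_and] at *
  omega

variable {σ : Type*}

lemma isMatch_pairwise {a b : List σ} {I : List (ℕ × ℕ)} (h : IsMatch a b I) :
    I.Pairwise (fun p q => p.1 < q.1 ∧ p.2 < q.2) :=
  List.isChain_iff_pairwise.mp h.1

lemma isMatch_of_pairwise {a b : List σ} {I : List (ℕ × ℕ)}
    (h1 : I.Pairwise (fun p q => p.1 < q.1 ∧ p.2 < q.2))
    (h2 : ∀ p ∈ I, p.1 < a.length ∧ p.2 < b.length ∧ a[p.1]? = b[p.2]?) :
    IsMatch a b I := ⟨List.isChain_iff_pairwise.mpr h1, h2⟩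

/-- a strictly increasing list of naturals in `[lo, lo+c)` has length at most `c`. -/
lemma length_le_of_pairwise_lt (c : ℕ) (l : List ℕ) (h : l.Pairwise (· < ·))
    (lo : ℕ) (hb : ∀ k ∈ l, lo ≤ k ∧ k < lo + c) : l.length ≤ c := by
  induction c generalizing l lo with
  | zero =>
    cases l with
    | nil => simp
    | cons x t => exact absurd (hb x (by simp)) (by omega)
  | succ c ih =>
    cases l with
    | nil => simp
    | cons x t =>
      have hx := hb x (by simp)
      have ht : t.length ≤ c := by
        refine ih t (h.sublist (List.sublist_cons_self x t)) (x+1) (fun k hk => ?_)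
        have := (List.pairwise_cons.mp h).1 k hk
        have := (hb k (by simp [hk]))
        omega
      simpa using Nat.succ_le_succ ht

lemma matchSet_nonempty (a b : List σ) : {r | ∃ I, IsMatch a b I ∧ I.length = r}.Nonempty :=
  ⟨0, [], ⟨List.isChain_nil, by simp⟩, rfl⟩

lemma isMatch_length_le_left {a b : List σ} {I : List (ℕ × ℕ)} (h : IsMatch a b I) :
    I.length ≤ a.length := by
  have := length_le_of_pairwise_lt a.length (I.map (·.1))
    ((isMatch_pairwise h).map _ (fun p q hpq => hpq.1)) 0
    (by
      intro k hk
      simp only [List.mem_map] at hk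
      obtain ⟨p, hp, rfl⟩ := hk
      exact ⟨Nat.zero_le _, by simpa using (h.2 p hp).1⟩)
  simpa using this

lemma isMatch_length_le_right {a b : List σ} {I : List (ℕ × ℕ)} (h : IsMatch a b I) :
    I.length ≤ b.length := by
  have := length_le_of_pairwise_lt b.length (I.map (·.2))
    ((isMatch_pairwise h).map _ (fun p q hpq => hpq.2)) 0
    (by
      intro k hk
      simp only [List.mem_map] at hk
      obtain ⟨p, hp, rfl⟩ := hk
      exact ⟨Nat.zero_le _, by simpa using (h.2 p hp).2.1⟩)
  simpa using this

lemma matchSet_bddAbove (a b : List σ) : BddAbove {r | ∃ I, IsMatch a b I ∧ I.length = r} := by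
  refine ⟨a.length, fun r hr => ?_⟩
  obtain ⟨I, hI, rfl⟩ := hr
  exact isMatch_length_le_left hI

lemma le_maxMatch {a b : List σ} {I : List (ℕ × ℕ)} (h : IsMatch a b I) :
    I.length ≤ maxMatch a b :=
  le_csSup (matchSet_bddAbove a b) ⟨I, h, rfl⟩

lemma maxMatch_le_left (a b : List σ) : maxMatch a b ≤ a.length :=
  csSup_le (matchSet_nonempty a b) (fun r hr => by
    obtain ⟨I, hI, rfl⟩ := hr; exact isMatch_length_le_left hI)

lemma maxMatch_le_right (a b : List σ) : maxMatch a b ≤ b.length :=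
  csSup_le (matchSet_nonempty a b) (fun r hr => by
    obtain ⟨I, hI, rfl⟩ := hr; exact isMatch_length_le_right hI)

lemma exists_maxMatch (a b : List σ) : ∃ I, IsMatch a b I ∧ I.length = maxMatch a b :=
  Nat.sSup_mem (matchSet_nonempty a b) (matchSet_bddAbove a b)

lemma fbar_nonneg (a b : List σ) : 0 ≤ fbar a b := by
  unfold fbar
  rcases Nat.eq_zero_or_pos (a.length + b.length) with h | h
  · rw [show ((a.length : ℝ) + b.length) = 0 by
      have h1 : a.length = 0 := by omega
      have h2 : b.length = 0 := by omega
      rw [h1, h2]; norm_num]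
    norm_num
  · have h1 := maxMatch_le_left a b
    have h2 := maxMatch_le_right a b
    have hpos : (0:ℝ) < (a.length : ℝ) + b.length := by
      have : (0:ℕ) < a.length + b.length := h
      exact_mod_cast this
    rw [sub_nonneg, div_le_one hpos]
    have : (maxMatch a b : ℝ) ≤ a.length := by exact_mod_cast h1
    have : (maxMatch a b : ℝ) ≤ b.length := by exact_mod_cast h2
    linarith


lemma approxSet_nonempty (a b : List σ) :
    {r | ∃ I, IsApproxMatch a b I ∧ I.length = r}.Nonempty :=
  ⟨0, [], ⟨List.isChain_nil, by simp, by simp⟩, rfl⟩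

lemma isApproxMatch_length_le {a b : List σ} {I : List (ℕ × ℕ)} (h : IsApproxMatch a b I) :
    I.length ≤ a.length * b.length := by
  classical
  have hpw : I.Pairwise (fun p q : ℕ × ℕ => p.1 ≤ q.1 ∧ p.2 ≤ q.2 ∧ p ≠ q) :=
    List.isChain_iff_pairwise.mp h.1
  have hnd : I.Nodup := hpw.imp (fun hpq => hpq.2.2)
  have hsub : I.toFinset ⊆ Finset.range a.length ×ˢ Finset.range b.length := by
    intro p hp
    rw [List.mem_toFinset] at hp
    have := h.2.1 p hp
    simp only [Finset.mem_product, Finset.mem_range]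
    exact ⟨this.1, this.2.1⟩
  calc I.length = I.toFinset.card := (List.toFinset_card_of_nodup hnd).symm
    _ ≤ (Finset.range a.length ×ˢ Finset.range b.length).card := Finset.card_le_card hsub
    _ = a.length * b.length := by simp

lemma approxSet_bddAbove (a b : List σ) :
    BddAbove {r | ∃ I, IsApproxMatch a b I ∧ I.length = r} := by
  refine ⟨a.length * b.length, fun r hr => ?_⟩
  obtain ⟨I, hI, rfl⟩ := hr
  exact isApproxMatch_length_le hI

lemma le_maxApproxMatch {a b : List σ} {I : List (ℕ × ℕ)} (h : IsApproxMatch a b I) :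
    I.length ≤ maxApproxMatch a b :=
  le_csSup (approxSet_bddAbove a b) ⟨I, h, rfl⟩

/-- A strict match is an approximate match. -/
lemma isApproxMatch_of_isMatch {a b : List σ} {I : List (ℕ × ℕ)} (h : IsMatch a b I) :
    IsApproxMatch a b I := by
  have hpw := isMatch_pairwise h
  refine ⟨List.isChain_iff_pairwise.mpr (hpw.imp ?_), h.2, ?_⟩
  · intro p q hpq
    refine ⟨hpq.1.le, hpq.2.le, ?_⟩
    intro hh; rw [hh] at hpq; exact lt_irrefl _ hpq.1
  · have hne : ∀ p ∈ I, ∀ q ∈ I, p ≠ q → p.1 ≠ q.1 ∧ p.2 ≠ q.2 := by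
      have hsymm : Symmetric (fun p q : ℕ × ℕ => p.1 ≠ q.1 ∧ p.2 ≠ q.2) := by
        intro p q hpq; exact ⟨hpq.1.symm, hpq.2.symm⟩
      haveI : Std.Symm (fun p q : ℕ × ℕ => p.1 ≠ q.1 ∧ p.2 ≠ q.2) := ⟨fun _ _ h => hsymm h⟩
      have := (hpw.imp (S := fun p q : ℕ × ℕ => p.1 ≠ q.1 ∧ p.2 ≠ q.2) (fun {p q} hpq => ⟨Nat.ne_of_lt hpq.1, Nat.ne_of_lt hpq.2⟩)).forall
      intro p hp q hq hne; exact this hp hq hne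
    intro p hp
    constructor
    · refine ⟨p.2, fun q hq hq1 => ?_⟩
      have : q = p := by
        by_contra hc
        exact (hne q hq p hp hc).1 hq1
      simp [this]
    · refine ⟨p.1, fun q hq hq2 => ?_⟩
      have : q = p := by
        by_contra hc
        exact (hne q hq p hp hc).2 hq2
      simp [this]

lemma maxMatch_empty_right (a : List σ) : maxMatch a ([] : List σ) = 0 := by
  refine Nat.le_zero.mp (csSup_le (matchSet_nonempty _ _) ?_)
  rintro r ⟨I, hI, rfl⟩
  simpa using isMatch_length_le_right hI

lemma fbar_empty_right (a : List σ) : fbar a ([] : List σ) = 1 := by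
  simp [fbar, maxMatch_empty_right]

lemma maxMatch_empty_left (b : List σ) : maxMatch ([] : List σ) b = 0 := by
  refine Nat.le_zero.mp (csSup_le (matchSet_nonempty _ _) ?_)
  rintro r ⟨I, hI, rfl⟩
  simpa using isMatch_length_le_left hI

lemma fbar_empty_left (b : List σ) : fbar ([] : List σ) b = 1 := by
  simp [fbar, maxMatch_empty_left]

lemma ftilde_le_one (a b : List σ) : ftilde a b ≤ 1 := by
  unfold ftilde
  have : 2 * (maxApproxMatch a b : ℝ) / (a.length + b.length) ≥ 0 := by positivity
  rw [max_le_iff]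
  constructor <;> linarith

lemma ftilde_nonneg (a b : List σ) : 0 ≤ ftilde a b := le_max_left _ _


variable {Λ : Type*}

lemma length_flatten_map (L : ℕ) (A : σ → List Λ) (hA : ∀ s, (A s).length = L) (a : List σ) :
    ((a.map A).flatten).length = a.length * L := by
  induction a with
  | nil => simp
  | cons x t ih =>
    simp only [List.map_cons, List.flatten_cons, List.length_append, ih, hA x, List.length_cons]
    ring

lemma getElem?_flatten_map (L : ℕ) (A : σ → List Λ) (hA : ∀ s, (A s).length = L)
    (a : List σ) (i t : ℕ) (hi : i < a.length) (ht : t < L) :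
    ((a.map A).flatten)[i*L + t]? = (A (a[i]'hi))[t]? := by
  induction a generalizing i with
  | nil => simp at hi
  | cons x xs ih =>
    cases i with
    | zero =>
      simp only [List.map_cons, List.flatten_cons, List.getElem?_append, hA x]
      simp [ht]
    | succ i =>
      simp only [List.map_cons, List.flatten_cons]
      rw [List.getElem?_append_right (by rw [hA x]; nlinarith)]
      have heq : (i+1)*L + t - (A x).length = i*L + t := by rw [hA x]; ring_nf; omega
      rw [heq]
      have hi' : i < xs.length := by simpa using hi
      rw [ih i hi']
      simp

lemma le_getLast_of_pairwise {l : List (ℕ × ℕ)}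
    (hl : l.Pairwise (fun p q => p.1 < q.1 ∧ p.2 < q.2))
    (hne : l ≠ []) : ∀ p ∈ l, p.1 ≤ (l.getLast hne).1 ∧ p.2 ≤ (l.getLast hne).2 := by
  induction l with
  | nil => simp
  | cons x t ih =>
    intro p hp
    cases t with
    | nil =>
      simp only [List.mem_singleton] at hp
      subst hp; simp [List.getLast]
    | cons y s =>
      rw [List.getLast_cons (by simp)]
      rcases List.mem_cons.mp hp with rfl | hp'
      · have hmem := List.getLast_mem (l := y :: s) (by simp)
        have := (List.pairwise_cons.mp hl).1 _ hmem
        exact ⟨this.1.le, this.2.le⟩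
      · exact ih (List.pairwise_cons.mp hl).2 (by simp) p hp'

lemma head_le_of_pairwise {l : List (ℕ × ℕ)}
    (hl : l.Pairwise (fun p q => p.1 < q.1 ∧ p.2 < q.2))
    (hne : l ≠ []) : ∀ p ∈ l, (l.head hne).1 ≤ p.1 ∧ (l.head hne).2 ≤ p.2 := by
  cases l with
  | nil => simp at hne
  | cons x t =>
    intro p hp
    rcases List.mem_cons.mp hp with rfl | hp'
    · simp
    · have := (List.pairwise_cons.mp hl).1 p hp'
      exact ⟨this.1.le, this.2.le⟩

lemma maxMatch_le_of_fbar {C D : List Λ} {α : ℝ} (hα : α ≤ fbar C D)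
    (hpos : 0 < C.length + D.length) :
    (maxMatch C D : ℝ) ≤ (1 - α) * ((C.length : ℝ) + D.length) / 2 := by
  unfold fbar at hα
  have hpos' : (0:ℝ) < (C.length : ℝ) + D.length := by exact_mod_cast hpos
  have := (div_le_iff₀ hpos').mp (by linarith : 2 * (maxMatch C D : ℝ) / ((C.length:ℝ) + D.length) ≤ 1 - α)
  linarith


/-- The potential function used in the recursion. -/
noncomputable def piFn (α : ℝ) (L : ℕ) (e : Option (ℕ × ℕ)) (x y : ℕ) : ℝ :=
  match e with
  | none => 0
  | some (u, v) => α * max 0 (max (((u:ℝ)+1)*(L:ℝ) - (x:ℝ)) (((v:ℝ)+1)*(L:ℝ) - (y:ℝ)))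

lemma piFn_nonneg {α : ℝ} (hα : 0 ≤ α) (L : ℕ) (e : Option (ℕ × ℕ)) (x y : ℕ) :
    0 ≤ piFn α L e x y := by
  match e with
  | none => exact le_refl 0
  | some (u, v) => exact mul_nonneg hα (le_max_left _ _)

lemma piFn_mono {α : ℝ} (hα : 0 ≤ α) (L : ℕ) (e : Option (ℕ × ℕ)) {x y x' y' : ℕ}
    (hx : x ≤ x') (hy : y ≤ y') : piFn α L e x' y' ≤ piFn α L e x y := by
  match e with
  | none => exact le_refl 0
  | some (u, v) =>
    apply mul_le_mul_of_nonneg_left _ hα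
    apply max_le_max (le_refl 0)
    have hx' : (x:ℝ) ≤ (x':ℝ) := by exact_mod_cast hx
    have hy' : (y:ℝ) ≤ (y':ℝ) := by exact_mod_cast hy
    exact max_le_max (by linarith) (by linarith)

/-- State constraint for the recursion. -/
def eInv (L : ℕ) (e : Option (ℕ × ℕ)) (x y : ℕ) (I : List (ℕ × ℕ)) : Prop :=
  match e with
  | none => True
  | some (u, v) => u*L < x ∧ v*L < y ∧ ∀ p ∈ I, ¬(p.1/L = u ∧ p.2/L = v)

/-- Output constraint for the recursion. -/
def eJ (e : Option (ℕ × ℕ)) (J : List (ℕ × ℕ)) : Prop :=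
  match e with
  | none => True
  | some (u, v) => ∀ q ∈ J, u < q.1 ∧ v < q.2

lemma isMatch_sublist {a b : List σ} {I J : List (ℕ × ℕ)} (hJ : J <+ I)
    (h : IsMatch a b I) : IsMatch a b J :=
  isMatch_of_pairwise ((isMatch_pairwise h).sublist hJ) (fun p hp => h.2 p (hJ.mem hp))

lemma max_shift {W m : ℝ} (h : m ≤ W) (h0 : 0 ≤ m) : m + max 0 (W - m) ≤ max 0 W := by
  rcases le_total 0 (W - m) with h' | h'
  · rw [max_eq_right h']
    have : m + (W - m) = W := by ring
    rw [this]
    exact le_max_right _ _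
  · rw [max_eq_left h']
    have : 0 ≤ W := h0.trans h
    rw [max_eq_right this]
    linarith


/-- Count bound for a group of matched pairs inside a single pair of blocks with
distinct symbols: transported to a match between infixes, and bounded via `hsep`. -/
lemma block_count_bound {Λ : Type*} (L : ℕ) (hL : 0 < L)
    (A : σ → List Λ) (hA : ∀ s, (A s).length = L)
    (a b : List σ) (α R : ℝ) (hα1 : α ≤ 1) (hR : 0 < R)
    (hsep : ∀ s ∈ a, ∀ t ∈ b, s ≠ t → ∀ C D : List Λ, C <:+: A s → D <:+: A t →
      (L : ℝ) / R ≤ C.length → (L : ℝ) / R ≤ D.length → α ≤ fbar C D)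
    (g : List (ℕ × ℕ)) (i j : ℕ) (hia : i < a.length) (hjb : j < b.length)
    (hpg : g.Pairwise (fun p q : ℕ × ℕ => p.1 < q.1 ∧ p.2 < q.2))
    (lo hi lo2 hi2 : ℕ)
    (hbnd : ∀ p ∈ g, lo ≤ p.1 ∧ p.1 ≤ hi ∧ lo2 ≤ p.2 ∧ p.2 ≤ hi2)
    (hsym : ∀ p ∈ g, ((a.map A).flatten)[p.1]? = ((b.map A).flatten)[p.2]?)
    (hloi : i*L ≤ lo) (hhii : hi < i*L + L) (hloj : j*L ≤ lo2) (hhij : hi2 < j*L + L)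
    (hlohi : lo ≤ hi) (hlohi2 : lo2 ≤ hi2)
    (hst : a[i]'hia ≠ b[j]'hjb)
    (hbigC : (L:ℝ)/R ≤ ((hi+1-lo : ℕ) : ℝ)) (hbigD : (L:ℝ)/R ≤ ((hi2+1-lo2 : ℕ) : ℝ)) :
    (g.length : ℝ) ≤ (1-α) * (((hi+1-lo : ℕ) : ℝ) + ((hi2+1-lo2 : ℕ) : ℝ)) / 2 := by
  set s := a[i]'hia with hs_def
  set tb := b[j]'hjb with htb_def
  set C := ((A s).drop (lo - i*L)).take (hi+1-lo) with hC_def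
  set D := ((A tb).drop (lo2 - j*L)).take (hi2+1-lo2) with hD_def
  have hCinfix : C <:+: A s := ((List.take_prefix _ _).isInfix).trans ((List.drop_suffix _ _).isInfix)
  have hDinfix : D <:+: A tb := ((List.take_prefix _ _).isInfix).trans ((List.drop_suffix _ _).isInfix)
  have hClen : C.length = hi+1-lo := by
    simp only [hC_def, List.length_take, List.length_drop, hA s]
    omega
  have hDlen : D.length = hi2+1-lo2 := by
    simp only [hD_def, List.length_take, List.length_drop, hA tb]
    omega
  -- the transported match
  set g₂ := g.map (fun p => (p.1 - lo, p.2 - lo2)) with hg2_def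
  have hg₂ : IsMatch C D g₂ := by
    apply isMatch_of_pairwise
    · rw [hg2_def, List.pairwise_map]
      apply hpg.imp_of_mem
      intro p q hp hq hpq
      have h1 := hbnd p hp
      have h2 := hbnd q hq
      constructor <;> simp <;> omega
    · intro p2 hp2
      rw [hg2_def, List.mem_map] at hp2
      obtain ⟨p, hp, rfl⟩ := hp2
      obtain ⟨b1, b2, b3, b4⟩ := hbnd p hp
      refine ⟨by rw [hClen]; simp; omega, by rw [hDlen]; simp; omega, ?_⟩
      have hgetC : C[p.1 - lo]? = (A s)[p.1 - i*L]? := by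
        rw [hC_def, List.getElem?_take, if_pos (by omega), List.getElem?_drop]
        congr 1
        omega
      have hgetD : D[p.2 - lo2]? = (A tb)[p.2 - j*L]? := by
        rw [hD_def, List.getElem?_take, if_pos (by omega), List.getElem?_drop]
        congr 1
        omega
      have hflatC : ((a.map A).flatten)[p.1]? = (A s)[p.1 - i*L]? := by
        have := getElem?_flatten_map L A hA a i (p.1 - i*L) hia (by omega)
        rw [← this]
        congr 1
        omega
      have hflatD : ((b.map A).flatten)[p.2]? = (A tb)[p.2 - j*L]? := by
        have := getElem?_flatten_map L A hA b j (p.2 - j*L) hjb (by omega)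
        rw [← this]
        congr 1
        omega
      simp only [hgetC, hgetD, ← hflatC, ← hflatD]
      exact hsym p hp
  have hg2len : g₂.length = g.length := by simp [hg2_def]
  have hfbar : α ≤ fbar C D := by
    apply hsep s (List.getElem_mem hia) tb (List.getElem_mem hjb) hst C D hCinfix hDinfix
    · rw [hClen]; exact hbigC
    · rw [hDlen]; exact hbigD
  have hmm : (g.length : ℝ) ≤ (maxMatch C D : ℝ) := by
    rw [← hg2len]
    exact_mod_cast le_maxMatch hg₂
  have hpos : 0 < C.length + D.length := by rw [hClen]; omega
  have := maxMatch_le_of_fbar hfbar hpos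
  rw [hClen, hDlen] at this
  linarith


lemma piFn_none (α : ℝ) (L : ℕ) (x y : ℕ) : piFn α L none x y = 0 := rfl

lemma piFn_some (α : ℝ) (L : ℕ) (u v x y : ℕ) :
    piFn α L (some (u,v)) x y
      = α * max 0 (max (((u:ℝ)+1)*(L:ℝ) - (x:ℝ)) (((v:ℝ)+1)*(L:ℝ) - (y:ℝ))) := rfl

lemma eJ_nil (e : Option (ℕ × ℕ)) : eJ e ([] : List (ℕ × ℕ)) := by
  rcases e with _ | ⟨u, v⟩
  · trivial
  · intro q hq; simp at hq

lemma eInv_sub (L : ℕ) (e : Option (ℕ × ℕ)) {x y x' y' : ℕ} {I r : List (ℕ × ℕ)}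
    (h : eInv L e x y I) (hx : x ≤ x') (hy : y ≤ y') (hr : ∀ p ∈ r, p ∈ I) :
    eInv L e x' y' r := by
  rcases e with _ | ⟨u, v⟩
  · trivial
  · obtain ⟨h1, h2, h3⟩ := h
    exact ⟨by omega, by omega, fun p hp => h3 p (hr p hp)⟩

set_option maxHeartbeats 4000000 in
lemma rec_bound {Λ : Type*} (L : ℕ) (hL : 0 < L)
    (A : σ → List Λ) (hA : ∀ s, (A s).length = L)
    (a b : List σ) (α R : ℝ) (hα : 0 < α) (hα1 : α ≤ 1) (hR : 0 < R)
    (hsep : ∀ s ∈ a, ∀ t ∈ b, s ≠ t → ∀ C D : List Λ, C <:+: A s → D <:+: A t →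
      (L : ℝ) / R ≤ C.length → (L : ℝ) / R ≤ D.length → α ≤ fbar C D) :
    ∀ N (I : List (ℕ × ℕ)), I.length ≤ N →
      IsMatch ((a.map A).flatten) ((b.map A).flatten) I → I ≠ [] →
      ∀ (x y : ℕ) (e : Option (ℕ × ℕ)),
      (∀ p ∈ I, x ≤ p.1 ∧ y ≤ p.2) → eInv L e x y I →
      ∃ J, IsMatch a b J ∧ eJ e J ∧
        (I.length : ℝ) ≤ (1 - α) * (((a.length : ℝ)*L - x) + ((b.length : ℝ)*L - y)) / 2
          + α * L * J.length + piFn α L e x y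
          + ((a.length : ℝ) + (b.length : ℝ) - 1 - ((x/L : ℕ) : ℝ) - ((y/L : ℕ) : ℝ)) * ((L:ℝ) / R) := by
  intro N
  induction N with
  | zero =>
    intro I hlen _ hne
    exact absurd (List.length_eq_zero_iff.mp (Nat.le_zero.mp hlen)) hne
  | succ N ih =>
    intro I hlenN hI hne x y e hxy heinv
    obtain ⟨h, t, rfl⟩ := List.exists_cons_of_ne_nil hne
    have hflatA : ((a.map A).flatten).length = a.length * L := length_flatten_map L A hA a
    have hflatB : ((b.map A).flatten).length = b.length * L := length_flatten_map L A hA b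
    have hpw : (h :: t).Pairwise (fun p q : ℕ×ℕ => p.1 < q.1 ∧ p.2 < q.2) := isMatch_pairwise hI
    set i := h.1 / L with hi_def
    set j := h.2 / L with hj_def
    set P : ℕ × ℕ → Bool := fun p => p.1 / L == i && p.2 / L == j with hP_def
    set g : List (ℕ×ℕ) := h :: t.takeWhile P with hg_def
    set r : List (ℕ×ℕ) := t.dropWhile P with hr_def
    have hgr : g ++ r = h :: t := by
      rw [hg_def, hr_def, List.cons_append, List.takeWhile_append_dropWhile]
    have hg_sub : g <+ h :: t := by rw [← hgr]; exact List.sublist_append_left _ _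
    have hr_sub : r <+ h :: t := by rw [← hgr]; exact List.sublist_append_right _ _
    have hgI := isMatch_sublist hg_sub hI
    have hrI := isMatch_sublist hr_sub hI
    have hpg := isMatch_pairwise hgI
    have hhg : h ∈ g := by rw [hg_def]; exact List.mem_cons_self
    have hblk : ∀ p ∈ g, p.1 / L = i ∧ p.2 / L = j := by
      intro p hp
      rw [hg_def, List.mem_cons] at hp
      rcases hp with rfl | hp'
      · exact ⟨rfl, rfl⟩
      · have := List.mem_takeWhile_imp hp'
        rw [hP_def] at this
        simpa using this
    have hpw' : (g ++ r).Pairwise (fun p q : ℕ×ℕ => p.1 < q.1 ∧ p.2 < q.2) := by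
      rw [hgr]; exact hpw
    obtain ⟨-, hrpw, hcross⟩ := List.pairwise_append.mp hpw'
    have hgne : g ≠ [] := by rw [hg_def]; exact List.cons_ne_nil _ _
    set gl := g.getLast hgne with hgl_def
    have hgl_mem : gl ∈ g := List.getLast_mem hgne
    have hg_le : ∀ p ∈ g, p.1 ≤ gl.1 ∧ p.2 ≤ gl.2 := le_getLast_of_pairwise hpg hgne
    have hg_ge : ∀ p ∈ g, h.1 ≤ p.1 ∧ h.2 ≤ p.2 := by
      have hhead : g.head hgne = h := rfl
      have := head_le_of_pairwise hpg hgne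
      rw [hhead] at this
      exact this
    have hmemg : ∀ p ∈ g, p.1 < a.length * L ∧ p.2 < b.length * L ∧
        ((a.map A).flatten)[p.1]? = ((b.map A).flatten)[p.2]? := by
      intro p hp
      have := hgI.2 p hp
      rwa [hflatA, hflatB] at this
    have hdiv : ∀ (k c : ℕ), k / L = c → c * L ≤ k ∧ k < c * L + L := by
      intro k c hk
      constructor
      · exact (Nat.le_div_iff_mul_le hL).mp (le_of_eq hk.symm)
      · have h1 : k < (c+1) * L := (Nat.div_lt_iff_lt_mul hL).mp (by omega)
        have h2 : (c+1)*L = c*L + L := by ring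
        omega
    have hgblk : ∀ p ∈ g, i*L ≤ p.1 ∧ p.1 < i*L + L ∧ j*L ≤ p.2 ∧ p.2 < j*L + L := by
      intro p hp
      obtain ⟨h1, h2⟩ := hblk p hp
      obtain ⟨a1, a2⟩ := hdiv _ _ h1
      obtain ⟨b1, b2⟩ := hdiv _ _ h2
      exact ⟨a1, a2, b1, b2⟩
    have hia : i < a.length := by
      have h1 := (hmemg h hhg).1
      rw [hi_def]
      exact (Nat.div_lt_iff_lt_mul hL).mpr (by omega)
    have hjb : j < b.length := by
      have h1 := (hmemg h hhg).2.1
      rw [hj_def]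
      exact (Nat.div_lt_iff_lt_mul hL).mpr (by omega)
    set cN := gl.1 + 1 - h.1 with hcN_def
    set dN := gl.2 + 1 - h.2 with hdN_def
    have hh_le_gl := hg_le h hhg
    have hgl_blk := hgblk gl hgl_mem
    have hh_blk := hgblk h hhg
    have hcN_pos : 1 ≤ cN := by omega
    have hdN_pos : 1 ≤ dN := by omega
    have hcN_le_L : cN ≤ L := by omega
    have hdN_le_L : dN ≤ L := by omega
    have hglen1 : g.length ≤ cN := by
      have := length_le_of_pairwise_lt cN (g.map (·.1))
        (List.Pairwise.map (·.1) (fun p q hpq => hpq.1) hpg) h.1 (by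
          intro k hk
          rw [List.mem_map] at hk
          obtain ⟨p, hp, rfl⟩ := hk
          have := hg_ge p hp
          have := hg_le p hp
          omega)
      simpa using this
    have hglen2 : g.length ≤ dN := by
      have := length_le_of_pairwise_lt dN (g.map (·.2))
        (List.Pairwise.map (·.2) (fun p q hpq => hpq.2) hpg) h.2 (by
          intro k hk
          rw [List.mem_map] at hk
          obtain ⟨p, hp, rfl⟩ := hk
          have := hg_ge p hp
          have := hg_le p hp
          omega)
      simpa using this
    have hxh := hxy h (List.mem_cons_self)
    have hxdiv : x / L ≤ i := by
      rw [hi_def]; exact Nat.div_le_div_right hxh.1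
    have hydiv : y / L ≤ j := by
      rw [hj_def]; exact Nat.div_le_div_right hxh.2
    -- the count bound from hsep in the distinct-symbols case
    have hg_count : ¬ (a[i]'hia = b[j]'hjb) → (L:ℝ)/R ≤ (cN:ℝ) → (L:ℝ)/R ≤ (dN:ℝ) →
        (g.length : ℝ) ≤ (1-α) * ((cN:ℝ) + (dN:ℝ)) / 2 := by
      intro hst hbigC hbigD
      have := block_count_bound L hL A hA a b α R hα1 hR hsep g i j hia hjb hpg
        h.1 gl.1 h.2 gl.2
        (fun p hp => ⟨(hg_ge p hp).1, (hg_le p hp).1, (hg_ge p hp).2, (hg_le p hp).2⟩)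
        (fun p hp => (hmemg p hp).2.2)
        (by omega) (by omega) (by omega) (by omega) (by omega) (by omega) hst
        (by rw [show gl.1 + 1 - h.1 = cN from rfl]; exact hbigC)
        (by rw [show gl.2 + 1 - h.2 = dN from rfl]; exact hbigD)
      rw [show gl.1 + 1 - h.1 = cN from rfl, show gl.2 + 1 - h.2 = dN from rfl] at this
      exact this
    -- real casts of basic facts
    have hniL : gl.1 < a.length * L := (hmemg gl hgl_mem).1
    have hmjL : gl.2 < b.length * L := (hmemg gl hgl_mem).2.1
    have hβ1 : x / L + y / L + 2 ≤ a.length + b.length := by omega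
    have hglengr : g.length + r.length = t.length + 1 := by
      have := congrArg List.length hgr
      simp at this
      omega
    rcases eq_or_ne r [] with hrnil | hrne
    · -- r = [] : I = g
      have hIg : (h :: t).length = g.length := by
        rw [← hgr, hrnil]; simp
      by_cases hst : a[i]'hia = b[j]'hjb
      · -- equal symbols: maybe emit
        rcases (show e = none ∨ (∃ u v, e = some (u,v) ∧ u < i ∧ v < j) ∨
            (∃ u v, e = some (u,v) ∧ ¬(u < i ∧ v < j)) from by
          rcases e with _ | ⟨u, v⟩
          · exact Or.inl rfl
          · by_cases hc : u < i ∧ v < j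
            · exact Or.inr (Or.inl ⟨u, v, rfl, hc.1, hc.2⟩)
            · exact Or.inr (Or.inr ⟨u, v, rfl, hc⟩)) with
          hcase | hcase | hcase
        · -- e = none: emit (i,j), r empty
          subst hcase
          have hLR0 : (0:ℝ) ≤ (L:ℝ)/R := by positivity
          have hβr : (1:ℝ) ≤ (a.length:ℝ) + b.length - 1 - ((x/L : ℕ):ℝ) - ((y/L : ℕ):ℝ) := by
            have h1 : ((x/L : ℕ):ℝ) + ((y/L : ℕ):ℝ) + 2 ≤ (a.length:ℝ) + b.length := by
              exact_mod_cast hβ1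
            linarith
          have hβprod : (0:ℝ) ≤ ((a.length:ℝ) + b.length - 1 - ((x/L : ℕ):ℝ) - ((y/L : ℕ):ℝ)) * ((L:ℝ)/R) :=
            mul_nonneg (by linarith) hLR0
          have hpi0 : 0 ≤ piFn α L none x y := piFn_nonneg hα.le L none x y
          have hcr : (cN:ℝ) ≤ (a.length:ℝ)*L - x := by
            have h1 : x + cN ≤ a.length * L := by omega
            have h2 : (x:ℝ) + cN ≤ (a.length:ℝ)*L := by exact_mod_cast h1
            linarith
          have hdr : (dN:ℝ) ≤ (b.length:ℝ)*L - y := by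
            have h1 : y + dN ≤ b.length * L := by omega
            have h2 : (y:ℝ) + dN ≤ (b.length:ℝ)*L := by exact_mod_cast h1
            linarith
          have hμc : (g.length:ℝ) ≤ (cN:ℝ) := by exact_mod_cast hglen1
          have hμd : (g.length:ℝ) ≤ (dN:ℝ) := by exact_mod_cast hglen2
          have hcL : (cN:ℝ) ≤ (L:ℝ) := by exact_mod_cast hcN_le_L
          have hdL : (dN:ℝ) ≤ (L:ℝ) := by exact_mod_cast hdN_le_L
          have hJm : IsMatch a b [(i, j)] := by
            refine isMatch_of_pairwise (by simp) ?_
            intro p hp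
            simp only [List.mem_singleton] at hp
            subst hp
            refine ⟨hia, hjb, ?_⟩
            rw [List.getElem?_eq_getElem hia, List.getElem?_eq_getElem hjb, hst]
          refine ⟨[(i, j)], hJm, trivial, ?_⟩
          rw [piFn_none]
          rw [hIg]
          have key1 : (1-α) * (g.length:ℝ) ≤ (1-α) * ((((a.length:ℝ)*L - x) + ((b.length:ℝ)*L - y))/2) :=
            mul_le_mul_of_nonneg_left (by linarith) (by linarith)
          have key2 : α * (g.length:ℝ) ≤ α * L := mul_le_mul_of_nonneg_left (by linarith) hα.le
          simp only [List.length_singleton]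
          push_cast
          linarith [key1, key2, hpi0, hβprod]
        · -- emit with e = some
          obtain ⟨u, v, rfl, hui, hvj⟩ := hcase
          have hLR0 : (0:ℝ) ≤ (L:ℝ)/R := by positivity
          have hβr : (1:ℝ) ≤ (a.length:ℝ) + b.length - 1 - ((x/L : ℕ):ℝ) - ((y/L : ℕ):ℝ) := by
            have h1 : ((x/L : ℕ):ℝ) + ((y/L : ℕ):ℝ) + 2 ≤ (a.length:ℝ) + b.length := by
              exact_mod_cast hβ1
            linarith
          have hβprod : (0:ℝ) ≤ ((a.length:ℝ) + b.length - 1 - ((x/L : ℕ):ℝ) - ((y/L : ℕ):ℝ)) * ((L:ℝ)/R) :=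
            mul_nonneg (by linarith) hLR0
          have hpi0 : 0 ≤ piFn α L (some (u,v)) x y := piFn_nonneg hα.le L (some (u,v)) x y
          have hcr : (cN:ℝ) ≤ (a.length:ℝ)*L - x := by
            have h1 : x + cN ≤ a.length * L := by omega
            have h2 : (x:ℝ) + cN ≤ (a.length:ℝ)*L := by exact_mod_cast h1
            linarith
          have hdr : (dN:ℝ) ≤ (b.length:ℝ)*L - y := by
            have h1 : y + dN ≤ b.length * L := by omega
            have h2 : (y:ℝ) + dN ≤ (b.length:ℝ)*L := by exact_mod_cast h1
            linarith
          have hμc : (g.length:ℝ) ≤ (cN:ℝ) := by exact_mod_cast hglen1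
          have hμd : (g.length:ℝ) ≤ (dN:ℝ) := by exact_mod_cast hglen2
          have hcL : (cN:ℝ) ≤ (L:ℝ) := by exact_mod_cast hcN_le_L
          have hdL : (dN:ℝ) ≤ (L:ℝ) := by exact_mod_cast hdN_le_L
          have hJm : IsMatch a b [(i, j)] := by
            refine isMatch_of_pairwise (by simp) ?_
            intro p hp
            simp only [List.mem_singleton] at hp
            subst hp
            refine ⟨hia, hjb, ?_⟩
            rw [List.getElem?_eq_getElem hia, List.getElem?_eq_getElem hjb, hst]
          refine ⟨[(i, j)], hJm, ?_, ?_⟩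
          · intro q hq
            simp only [List.mem_singleton] at hq
            subst hq
            exact ⟨hui, hvj⟩
          rw [hIg]
          have key1 : (1-α) * (g.length:ℝ) ≤ (1-α) * ((((a.length:ℝ)*L - x) + ((b.length:ℝ)*L - y))/2) :=
            mul_le_mul_of_nonneg_left (by linarith) (by linarith)
          have key2 : α * (g.length:ℝ) ≤ α * L := mul_le_mul_of_nonneg_left (by linarith) hα.le
          simp only [List.length_singleton]
          push_cast
          linarith [key1, key2, hpi0, hβprod]
        · -- non-emit, r empty
          obtain ⟨u, v, rfl, hc⟩ := hcase
          have heinv' := heinv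
          obtain ⟨huL, hvL, hne_uv'⟩ := heinv'
          have hne_uv : ¬(i = u ∧ j = v) := by
            intro hh
            exact hne_uv' h (List.mem_cons_self) ⟨hh.1, hh.2⟩
          have hu_le : u ≤ i := by
            by_contra hcon
            push_neg at hcon
            have h1 : (i+1)*L ≤ u*L := Nat.mul_le_mul_right L (by omega)
            have h2 : (i+1)*L = i*L + L := by ring
            omega
          have hv_le : v ≤ j := by
            by_contra hcon
            push_neg at hcon
            have h1 : (j+1)*L ≤ v*L := Nat.mul_le_mul_right L (by omega)
            have h2 : (j+1)*L = j*L + L := by ring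
            omega
          have hrowcol : (i = u ∧ v < j) ∨ (u < i ∧ j = v) := by omega
          have hLR0 : (0:ℝ) ≤ (L:ℝ)/R := by positivity
          have hβr : (1:ℝ) ≤ (a.length:ℝ) + b.length - 1 - ((x/L : ℕ):ℝ) - ((y/L : ℕ):ℝ) := by
            have h1 : ((x/L : ℕ):ℝ) + ((y/L : ℕ):ℝ) + 2 ≤ (a.length:ℝ) + b.length := by
              exact_mod_cast hβ1
            linarith
          have hβprod : (0:ℝ) ≤ ((a.length:ℝ) + b.length - 1 - ((x/L : ℕ):ℝ) - ((y/L : ℕ):ℝ)) * ((L:ℝ)/R) :=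
            mul_nonneg (by linarith) hLR0
          have hpi0 : 0 ≤ piFn α L (some (u,v)) x y := piFn_nonneg hα.le L (some (u,v)) x y
          have hcr : (cN:ℝ) ≤ (a.length:ℝ)*L - x := by
            have h1 : x + cN ≤ a.length * L := by omega
            have h2 : (x:ℝ) + cN ≤ (a.length:ℝ)*L := by exact_mod_cast h1
            linarith
          have hdr : (dN:ℝ) ≤ (b.length:ℝ)*L - y := by
            have h1 : y + dN ≤ b.length * L := by omega
            have h2 : (y:ℝ) + dN ≤ (b.length:ℝ)*L := by exact_mod_cast h1
            linarith
          have hμc : (g.length:ℝ) ≤ (cN:ℝ) := by exact_mod_cast hglen1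
          have hμd : (g.length:ℝ) ≤ (dN:ℝ) := by exact_mod_cast hglen2
          have hcL : (cN:ℝ) ≤ (L:ℝ) := by exact_mod_cast hcN_le_L
          have hdL : (dN:ℝ) ≤ (L:ℝ) := by exact_mod_cast hdN_le_L
          refine ⟨[], isMatch_of_pairwise (by simp) (by simp), eJ_nil _, ?_⟩
          rw [hIg, piFn_some]
          have key1 : (1-α) * (g.length:ℝ) ≤ (1-α) * ((((a.length:ℝ)*L - x) + ((b.length:ℝ)*L - y))/2) :=
            mul_le_mul_of_nonneg_left (by linarith) (by linarith)
          rcases hrowcol with ⟨hiu, hvj⟩ | ⟨hui, hjv⟩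
          · have hWc : (cN:ℝ) ≤ ((u:ℝ)+1)*L - x := by
              have h1 : x + cN ≤ u*L + L := by rw [← hiu]; omega
              have h2 : (x:ℝ) + cN ≤ (u:ℝ)*L + L := by exact_mod_cast h1
              nlinarith
            have key2 : α * (g.length:ℝ) ≤ α * max 0 (max (((u:ℝ)+1)*(L:ℝ) - (x:ℝ)) (((v:ℝ)+1)*(L:ℝ) - (y:ℝ))) := by
              apply mul_le_mul_of_nonneg_left _ hα.le
              exact le_trans (by linarith) ((le_max_left _ _).trans (le_max_right 0 _))
            simp only [List.length_nil]
            push_cast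
            linarith [key1, key2, hβprod]
          · have hVd : (dN:ℝ) ≤ ((v:ℝ)+1)*L - y := by
              have h1 : y + dN ≤ v*L + L := by rw [← hjv]; omega
              have h2 : (y:ℝ) + dN ≤ (v:ℝ)*L + L := by exact_mod_cast h1
              nlinarith
            have key2 : α * (g.length:ℝ) ≤ α * max 0 (max (((u:ℝ)+1)*(L:ℝ) - (x:ℝ)) (((v:ℝ)+1)*(L:ℝ) - (y:ℝ))) := by
              apply mul_le_mul_of_nonneg_left _ hα.le
              exact le_trans (by linarith) ((le_max_right _ _).trans (le_max_right 0 _))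
            simp only [List.length_nil]
            push_cast
            linarith [key1, key2, hβprod]
      · -- distinct symbols, r empty
        have hLR0 : (0:ℝ) ≤ (L:ℝ)/R := by positivity
        have hβr : (1:ℝ) ≤ (a.length:ℝ) + b.length - 1 - ((x/L : ℕ):ℝ) - ((y/L : ℕ):ℝ) := by
          have h1 : ((x/L : ℕ):ℝ) + ((y/L : ℕ):ℝ) + 2 ≤ (a.length:ℝ) + b.length := by
            exact_mod_cast hβ1
          linarith
        have hβprod : (0:ℝ) ≤ ((a.length:ℝ) + b.length - 1 - ((x/L : ℕ):ℝ) - ((y/L : ℕ):ℝ)) * ((L:ℝ)/R) :=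
          mul_nonneg (by linarith) hLR0
        have hpi0 : 0 ≤ piFn α L e x y := piFn_nonneg hα.le L e x y
        have hcr : (cN:ℝ) ≤ (a.length:ℝ)*L - x := by
          have h1 : x + cN ≤ a.length * L := by omega
          have h2 : (x:ℝ) + cN ≤ (a.length:ℝ)*L := by exact_mod_cast h1
          linarith
        have hdr : (dN:ℝ) ≤ (b.length:ℝ)*L - y := by
          have h1 : y + dN ≤ b.length * L := by omega
          have h2 : (y:ℝ) + dN ≤ (b.length:ℝ)*L := by exact_mod_cast h1
          linarith
        have hμc : (g.length:ℝ) ≤ (cN:ℝ) := by exact_mod_cast hglen1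
        have hμd : (g.length:ℝ) ≤ (dN:ℝ) := by exact_mod_cast hglen2
        have hcL : (cN:ℝ) ≤ (L:ℝ) := by exact_mod_cast hcN_le_L
        have hdL : (dN:ℝ) ≤ (L:ℝ) := by exact_mod_cast hdN_le_L
        refine ⟨[], isMatch_of_pairwise (by simp) (by simp), eJ_nil _, ?_⟩
        rw [hIg]
        by_cases hbig : ((L:ℝ)/R ≤ (cN:ℝ) ∧ (L:ℝ)/R ≤ (dN:ℝ))
        · have hgb := hg_count hst hbig.1 hbig.2
          have key1 : (1-α) * ((cN:ℝ) + dN) ≤ (1-α) * (((a.length:ℝ)*L - x) + ((b.length:ℝ)*L - y)) :=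
            mul_le_mul_of_nonneg_left (by linarith) (by linarith)
          simp only [List.length_nil]
          push_cast
          linarith [key1, hβprod, hpi0]
        · have hsm : (g.length:ℝ) ≤ (L:ℝ)/R := by
            rcases not_and_or.mp hbig with hb | hb
            · push_neg at hb; linarith
            · push_neg at hb; linarith
          have key1 : (0:ℝ) ≤ (1-α) * (((a.length:ℝ)*L - x) + ((b.length:ℝ)*L - y)) :=
            mul_nonneg (by linarith) (by linarith)
          have key2 : (1:ℝ) * ((L:ℝ)/R) ≤ ((a.length:ℝ) + b.length - 1 - ((x/L : ℕ):ℝ) - ((y/L : ℕ):ℝ)) * ((L:ℝ)/R) :=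
            mul_le_mul_of_nonneg_right hβr hLR0
          simp only [List.length_nil]
          push_cast
          linarith [key1, key2, hpi0]
    · -- r ≠ []
      set rh := r.head hrne with hrh_def
      have hrh_mem : rh ∈ r := List.head_mem hrne
      set i₂ := rh.1 / L with hi2_def
      set j₂ := rh.2 / L with hj2_def
      have hPrh : P rh = false := List.head_dropWhile_not P (l := t) _
      have hne_blk : ¬ (i₂ = i ∧ j₂ = j) := by
        rw [hP_def] at hPrh
        simpa [hi2_def, hj2_def] using hPrh
      have hcross_gl : ∀ p ∈ r, gl.1 < p.1 ∧ gl.2 < p.2 := fun p hp => hcross gl hgl_mem p hp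
      have hrh_le : ∀ p ∈ r, rh.1 ≤ p.1 ∧ rh.2 ≤ p.2 := head_le_of_pairwise hrpw hrne
      have hii₂ : i ≤ i₂ := by
        have h1 : gl.1 ≤ rh.1 := (hcross_gl rh hrh_mem).1.le
        have h2 : gl.1 / L = i := (hblk gl hgl_mem).1
        rw [hi2_def, ← h2]
        exact Nat.div_le_div_right h1
      have hjj₂ : j ≤ j₂ := by
        have h1 : gl.2 ≤ rh.2 := (hcross_gl rh hrh_mem).2.le
        have h2 : gl.2 / L = j := (hblk gl hgl_mem).2
        rw [hj2_def, ← h2]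
        exact Nat.div_le_div_right h1
      have hrh_blk : i₂ * L ≤ rh.1 ∧ j₂ * L ≤ rh.2 := by
        obtain ⟨c1, -⟩ := hdiv rh.1 i₂ rfl
        obtain ⟨c2, -⟩ := hdiv rh.2 j₂ rfl
        exact ⟨c1, c2⟩
      set x' := max (gl.1 + 1) (i₂ * L) with hx'_def
      set y' := max (gl.2 + 1) (j₂ * L) with hy'_def
      have hxy' : ∀ p ∈ r, x' ≤ p.1 ∧ y' ≤ p.2 := by
        intro p hp
        have h1 := hcross_gl p hp
        have h2 := hrh_le p hp
        have h3 := hrh_blk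
        constructor
        · exact max_le (by omega) (by omega)
        · exact max_le (by omega) (by omega)
      have hx'divL : i₂ ≤ x' / L := (Nat.le_div_iff_mul_le hL).mpr (le_max_right _ _)
      have hy'divL : j₂ ≤ y' / L := (Nat.le_div_iff_mul_le hL).mpr (le_max_right _ _)
      have hβ2 : x / L + y / L + 1 ≤ x' / L + y' / L := by
        have : i + j + 1 ≤ i₂ + j₂ := by omega
        omega
      have hrlen : r.length ≤ N := by
        have hlen' : t.length + 1 ≤ N + 1 := by simpa using hlenN
        have hg1 : 1 ≤ g.length := by rw [hg_def]; simp
        omega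
      have hxx' : x ≤ x' := by
        have := hxh.1
        have := hh_le_gl.1
        omega
      have hyy' : y ≤ y' := by
        have := hxh.2
        have := hh_le_gl.2
        omega
      have hΔx : x + cN ≤ x' := by
        have := hxh.1
        omega
      have hΔy : y + dN ≤ y' := by
        have := hxh.2
        omega
      have hlenI : ((h :: t).length : ℝ) = (g.length : ℝ) + (r.length : ℝ) := by
        have h1 : (h::t).length = g.length + r.length := by
          rw [List.length_cons]; omega
        rw [h1]; push_cast; ring
      by_cases hst : a[i]'hia = b[j]'hjb
      · rcases (show e = none ∨ (∃ u v, e = some (u,v) ∧ u < i ∧ v < j) ∨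
            (∃ u v, e = some (u,v) ∧ ¬(u < i ∧ v < j)) from by
          rcases e with _ | ⟨u, v⟩
          · exact Or.inl rfl
          · by_cases hc : u < i ∧ v < j
            · exact Or.inr (Or.inl ⟨u, v, rfl, hc.1, hc.2⟩)
            · exact Or.inr (Or.inr ⟨u, v, rfl, hc⟩)) with
          hcase | hcase | hcase
        · -- emit, e = none
          subst hcase
          have hLR0 : (0:ℝ) ≤ (L:ℝ)/R := by positivity
          have hpi0 : 0 ≤ piFn α L none x y := piFn_nonneg hα.le L none x y
          have hμc : (g.length:ℝ) ≤ (cN:ℝ) := by exact_mod_cast hglen1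
          have hμd : (g.length:ℝ) ≤ (dN:ℝ) := by exact_mod_cast hglen2
          have hcL : (cN:ℝ) ≤ (L:ℝ) := by exact_mod_cast hcN_le_L
          have hdL : (dN:ℝ) ≤ (L:ℝ) := by exact_mod_cast hdN_le_L
          have hΔxr : (x:ℝ) + cN ≤ (x':ℝ) := by exact_mod_cast hΔx
          have hΔyr : (y:ℝ) + dN ≤ (y':ℝ) := by exact_mod_cast hΔy
          have hdivx : ((x/L : ℕ):ℝ) ≤ ((x'/L : ℕ):ℝ) := by exact_mod_cast Nat.div_le_div_right hxx'
          have hdivy : ((y/L : ℕ):ℝ) ≤ ((y'/L : ℕ):ℝ) := by exact_mod_cast Nat.div_le_div_right hyy'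
          have hβm : ((a.length:ℝ) + b.length - 1 - ((x'/L : ℕ):ℝ) - ((y'/L : ℕ):ℝ)) * ((L:ℝ)/R)
              ≤ ((a.length:ℝ) + b.length - 1 - ((x/L : ℕ):ℝ) - ((y/L : ℕ):ℝ)) * ((L:ℝ)/R) :=
            mul_le_mul_of_nonneg_right (by linarith) hLR0
          have hEinv : eInv L (some (i, j)) x' y' r := by
            refine ⟨?_, ?_, ?_⟩
            · have hx'ge : gl.1 + 1 ≤ x' := le_max_left _ _
              omega
            · have hy'ge : gl.2 + 1 ≤ y' := le_max_left _ _
              omega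
            · intro p hp
              have h1 : i₂ ≤ p.1 / L := by
                rw [hi2_def]
                exact Nat.div_le_div_right (hrh_le p hp).1
              have h2 : j₂ ≤ p.2 / L := by
                rw [hj2_def]
                exact Nat.div_le_div_right (hrh_le p hp).2
              rintro ⟨e1, e2⟩
              exact hne_blk (by omega)
          obtain ⟨J, hJm, hJe, hJb⟩ := ih r hrlen hrI hrne x' y' (some (i, j)) hxy' hEinv
          have hJm' : IsMatch a b ((i, j) :: J) := by
            refine isMatch_of_pairwise (List.pairwise_cons.mpr ⟨fun q hq => hJe q hq, isMatch_pairwise hJm⟩) ?_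
            intro p hp
            rcases List.mem_cons.mp hp with rfl | hp'
            · refine ⟨hia, hjb, ?_⟩
              rw [List.getElem?_eq_getElem hia, List.getElem?_eq_getElem hjb, hst]
            · exact hJm.2 p hp'
          refine ⟨(i, j) :: J, hJm', ?_, ?_⟩
          · trivial
          rw [hlenI]
          have hμ1 : (g.length:ℝ) ≤ min (cN:ℝ) (dN:ℝ) := le_min hμc hμd
          have hiLx : i*L + cN ≤ x' := by
            have hx'ge : gl.1 + 1 ≤ x' := le_max_left _ _
            omega
          have hjLy : j*L + dN ≤ y' := by
            have hy'ge : gl.2 + 1 ≤ y' := le_max_left _ _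
            omega
          have hA' : ((i:ℝ)+1)*L - x' ≤ (L:ℝ) - cN := by
            have h2 : ((i:ℝ))*L + cN ≤ (x':ℝ) := by exact_mod_cast hiLx
            nlinarith [h2]
          have hB' : ((j:ℝ)+1)*L - y' ≤ (L:ℝ) - dN := by
            have h2 : ((j:ℝ))*L + dN ≤ (y':ℝ) := by exact_mod_cast hjLy
            nlinarith
          have hpi' : piFn α L (some (i, j)) x' y' ≤ α * ((L:ℝ) - min (cN:ℝ) (dN:ℝ)) := by
            rw [piFn_some]
            apply mul_le_mul_of_nonneg_left _ hα.le
            apply max_le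
            · have h3 : min (cN:ℝ) (dN:ℝ) ≤ (L:ℝ) := (min_le_left _ _).trans hcL
              linarith
            · apply max_le
              · linarith [min_le_left (cN:ℝ) (dN:ℝ)]
              · linarith [min_le_right (cN:ℝ) (dN:ℝ)]
          have key1 : (1-α) * ((g.length:ℝ) + (((a.length:ℝ)*L - x') + ((b.length:ℝ)*L - y'))/2)
              ≤ (1-α) * ((((a.length:ℝ)*L - x) + ((b.length:ℝ)*L - y))/2) :=
            mul_le_mul_of_nonneg_left (by linarith) (by linarith)
          have keyα : α * (g.length:ℝ) ≤ α * min (cN:ℝ) (dN:ℝ) := mul_le_mul_of_nonneg_left hμ1 hα.le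
          simp only [List.length_cons]
          push_cast
          linarith [hJb, key1, keyα, hpi', hpi0, hβm]
        · -- emit, e = some
          obtain ⟨u, v, rfl, hui, hvj⟩ := hcase
          have hLR0 : (0:ℝ) ≤ (L:ℝ)/R := by positivity
          have hpi0 : 0 ≤ piFn α L (some (u,v)) x y := piFn_nonneg hα.le L (some (u,v)) x y
          have hμc : (g.length:ℝ) ≤ (cN:ℝ) := by exact_mod_cast hglen1
          have hμd : (g.length:ℝ) ≤ (dN:ℝ) := by exact_mod_cast hglen2
          have hcL : (cN:ℝ) ≤ (L:ℝ) := by exact_mod_cast hcN_le_L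
          have hdL : (dN:ℝ) ≤ (L:ℝ) := by exact_mod_cast hdN_le_L
          have hΔxr : (x:ℝ) + cN ≤ (x':ℝ) := by exact_mod_cast hΔx
          have hΔyr : (y:ℝ) + dN ≤ (y':ℝ) := by exact_mod_cast hΔy
          have hdivx : ((x/L : ℕ):ℝ) ≤ ((x'/L : ℕ):ℝ) := by exact_mod_cast Nat.div_le_div_right hxx'
          have hdivy : ((y/L : ℕ):ℝ) ≤ ((y'/L : ℕ):ℝ) := by exact_mod_cast Nat.div_le_div_right hyy'
          have hβm : ((a.length:ℝ) + b.length - 1 - ((x'/L : ℕ):ℝ) - ((y'/L : ℕ):ℝ)) * ((L:ℝ)/R)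
              ≤ ((a.length:ℝ) + b.length - 1 - ((x/L : ℕ):ℝ) - ((y/L : ℕ):ℝ)) * ((L:ℝ)/R) :=
            mul_le_mul_of_nonneg_right (by linarith) hLR0
          have hEinv : eInv L (some (i, j)) x' y' r := by
            refine ⟨?_, ?_, ?_⟩
            · have hx'ge : gl.1 + 1 ≤ x' := le_max_left _ _
              omega
            · have hy'ge : gl.2 + 1 ≤ y' := le_max_left _ _
              omega
            · intro p hp
              have h1 : i₂ ≤ p.1 / L := by
                rw [hi2_def]
                exact Nat.div_le_div_right (hrh_le p hp).1
              have h2 : j₂ ≤ p.2 / L := by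
                rw [hj2_def]
                exact Nat.div_le_div_right (hrh_le p hp).2
              rintro ⟨e1, e2⟩
              exact hne_blk (by omega)
          obtain ⟨J, hJm, hJe, hJb⟩ := ih r hrlen hrI hrne x' y' (some (i, j)) hxy' hEinv
          have hJm' : IsMatch a b ((i, j) :: J) := by
            refine isMatch_of_pairwise (List.pairwise_cons.mpr ⟨fun q hq => hJe q hq, isMatch_pairwise hJm⟩) ?_
            intro p hp
            rcases List.mem_cons.mp hp with rfl | hp'
            · refine ⟨hia, hjb, ?_⟩
              rw [List.getElem?_eq_getElem hia, List.getElem?_eq_getElem hjb, hst]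
            · exact hJm.2 p hp'
          refine ⟨(i, j) :: J, hJm', ?_, ?_⟩
          · intro q hq
            rcases List.mem_cons.mp hq with rfl | hq'
            · exact ⟨hui, hvj⟩
            · have := hJe q hq'
              exact ⟨by omega, by omega⟩
          rw [hlenI]
          have hμ1 : (g.length:ℝ) ≤ min (cN:ℝ) (dN:ℝ) := le_min hμc hμd
          have hiLx : i*L + cN ≤ x' := by
            have hx'ge : gl.1 + 1 ≤ x' := le_max_left _ _
            omega
          have hjLy : j*L + dN ≤ y' := by
            have hy'ge : gl.2 + 1 ≤ y' := le_max_left _ _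
            omega
          have hA' : ((i:ℝ)+1)*L - x' ≤ (L:ℝ) - cN := by
            have h2 : ((i:ℝ))*L + cN ≤ (x':ℝ) := by exact_mod_cast hiLx
            nlinarith [h2]
          have hB' : ((j:ℝ)+1)*L - y' ≤ (L:ℝ) - dN := by
            have h2 : ((j:ℝ))*L + dN ≤ (y':ℝ) := by exact_mod_cast hjLy
            nlinarith
          have hpi' : piFn α L (some (i, j)) x' y' ≤ α * ((L:ℝ) - min (cN:ℝ) (dN:ℝ)) := by
            rw [piFn_some]
            apply mul_le_mul_of_nonneg_left _ hα.le
            apply max_le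
            · have h3 : min (cN:ℝ) (dN:ℝ) ≤ (L:ℝ) := (min_le_left _ _).trans hcL
              linarith
            · apply max_le
              · linarith [min_le_left (cN:ℝ) (dN:ℝ)]
              · linarith [min_le_right (cN:ℝ) (dN:ℝ)]
          have key1 : (1-α) * ((g.length:ℝ) + (((a.length:ℝ)*L - x') + ((b.length:ℝ)*L - y'))/2)
              ≤ (1-α) * ((((a.length:ℝ)*L - x) + ((b.length:ℝ)*L - y))/2) :=
            mul_le_mul_of_nonneg_left (by linarith) (by linarith)
          have keyα : α * (g.length:ℝ) ≤ α * min (cN:ℝ) (dN:ℝ) := mul_le_mul_of_nonneg_left hμ1 hα.le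
          simp only [List.length_cons]
          push_cast
          linarith [hJb, key1, keyα, hpi', hpi0, hβm]
        · -- non-emit
          obtain ⟨u, v, rfl, hc⟩ := hcase
          have heinv' := heinv
          obtain ⟨huL, hvL, hne_uv'⟩ := heinv'
          have hne_uv : ¬(i = u ∧ j = v) := by
            intro hh
            exact hne_uv' h (List.mem_cons_self) ⟨hh.1, hh.2⟩
          have hu_le : u ≤ i := by
            by_contra hcon
            push_neg at hcon
            have h1 : (i+1)*L ≤ u*L := Nat.mul_le_mul_right L (by omega)
            have h2 : (i+1)*L = i*L + L := by ring
            omega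
          have hv_le : v ≤ j := by
            by_contra hcon
            push_neg at hcon
            have h1 : (j+1)*L ≤ v*L := Nat.mul_le_mul_right L (by omega)
            have h2 : (j+1)*L = j*L + L := by ring
            omega
          have hrowcol : (i = u ∧ v < j) ∨ (u < i ∧ j = v) := by omega
          have hLR0 : (0:ℝ) ≤ (L:ℝ)/R := by positivity
          have hpi0 : 0 ≤ piFn α L (some (u,v)) x y := piFn_nonneg hα.le L (some (u,v)) x y
          have hμc : (g.length:ℝ) ≤ (cN:ℝ) := by exact_mod_cast hglen1
          have hμd : (g.length:ℝ) ≤ (dN:ℝ) := by exact_mod_cast hglen2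
          have hcL : (cN:ℝ) ≤ (L:ℝ) := by exact_mod_cast hcN_le_L
          have hdL : (dN:ℝ) ≤ (L:ℝ) := by exact_mod_cast hdN_le_L
          have hΔxr : (x:ℝ) + cN ≤ (x':ℝ) := by exact_mod_cast hΔx
          have hΔyr : (y:ℝ) + dN ≤ (y':ℝ) := by exact_mod_cast hΔy
          have hdivx : ((x/L : ℕ):ℝ) ≤ ((x'/L : ℕ):ℝ) := by exact_mod_cast Nat.div_le_div_right hxx'
          have hdivy : ((y/L : ℕ):ℝ) ≤ ((y'/L : ℕ):ℝ) := by exact_mod_cast Nat.div_le_div_right hyy'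
          have hβm : ((a.length:ℝ) + b.length - 1 - ((x'/L : ℕ):ℝ) - ((y'/L : ℕ):ℝ)) * ((L:ℝ)/R)
              ≤ ((a.length:ℝ) + b.length - 1 - ((x/L : ℕ):ℝ) - ((y/L : ℕ):ℝ)) * ((L:ℝ)/R) :=
            mul_le_mul_of_nonneg_right (by linarith) hLR0
          have hEinv : eInv L (some (u,v)) x' y' r :=
            eInv_sub L (some (u,v)) heinv hxx' hyy' (fun p hp => hr_sub.mem hp)
          obtain ⟨J, hJm, hJe, hJb⟩ := ih r hrlen hrI hrne x' y' (some (u,v)) hxy' hEinv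
          refine ⟨J, hJm, hJe, ?_⟩
          rw [hlenI]
          have key1 : (1-α) * ((g.length:ℝ) + (((a.length:ℝ)*L - x') + ((b.length:ℝ)*L - y'))/2)
              ≤ (1-α) * ((((a.length:ℝ)*L - x) + ((b.length:ℝ)*L - y))/2) :=
            mul_le_mul_of_nonneg_left (by linarith) (by linarith)
          rcases hrowcol with ⟨hiu, hvj⟩ | ⟨hui, hjv⟩
          · -- row case
            have hWc : (cN:ℝ) ≤ ((u:ℝ)+1)*L - x := by
              have h1 : x + cN ≤ u*L + L := by rw [← hiu]; omega
              have h2 : (x:ℝ) + cN ≤ (u:ℝ)*L + L := by exact_mod_cast h1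
              nlinarith
            have hB'neg : ((v:ℝ)+1)*(L:ℝ) - y' ≤ 0 := by
              have h1 : (v+1)*L ≤ y' := by
                have h2 : (v+1)*L ≤ j*L := Nat.mul_le_mul_right L (by omega)
                have hy'ge : gl.2 + 1 ≤ y' := le_max_left _ _
                omega
              have h3 : ((v:ℝ)+1)*(L:ℝ) ≤ (y':ℝ) := by exact_mod_cast h1
              linarith
            have hkey : α * (cN:ℝ) + piFn α L (some (u,v)) x' y' ≤ piFn α L (some (u,v)) x y := by
              rw [piFn_some, piFn_some]
              set A' := ((u:ℝ)+1)*(L:ℝ) - (x':ℝ) with hA'd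
              set B' := ((v:ℝ)+1)*(L:ℝ) - (y':ℝ) with hB'd
              set W := ((u:ℝ)+1)*(L:ℝ) - (x:ℝ) with hWd
              set B := ((v:ℝ)+1)*(L:ℝ) - (y:ℝ) with hBd
              have s1 : max 0 (max A' B') ≤ max 0 A' :=
                max_le (le_max_left 0 A') (max_le (le_max_right 0 A') (le_trans hB'neg (le_max_left 0 A')))
              have s2 : max 0 A' ≤ max 0 (W - (cN:ℝ)) :=
                max_le_max (le_refl 0) (by rw [hA'd, hWd]; linarith)
              have s3 : (cN:ℝ) + max 0 (W - (cN:ℝ)) ≤ max 0 W :=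
                max_shift (by linarith) (by positivity)
              have s4 : max 0 W ≤ max 0 (max W B) := max_le_max (le_refl 0) (le_max_left W B)
              have := mul_le_mul_of_nonneg_left (a := α) (by linarith : (cN:ℝ) + max 0 (max A' B') ≤ max 0 (max W B)) hα.le
              linarith [this]
            have keyα : α * (g.length:ℝ) ≤ α * (cN:ℝ) := mul_le_mul_of_nonneg_left hμc hα.le
            linarith [hJb, key1, keyα, hkey, hβm]
          · -- col case
            have hVd : (dN:ℝ) ≤ ((v:ℝ)+1)*L - y := by
              have h1 : y + dN ≤ v*L + L := by rw [← hjv]; omega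
              have h2 : (y:ℝ) + dN ≤ (v:ℝ)*L + L := by exact_mod_cast h1
              nlinarith
            have hA'neg : ((u:ℝ)+1)*(L:ℝ) - x' ≤ 0 := by
              have h1 : (u+1)*L ≤ x' := by
                have h2 : (u+1)*L ≤ i*L := Nat.mul_le_mul_right L (by omega)
                have hx'ge : gl.1 + 1 ≤ x' := le_max_left _ _
                omega
              have h3 : ((u:ℝ)+1)*(L:ℝ) ≤ (x':ℝ) := by exact_mod_cast h1
              linarith
            have hkey : α * (dN:ℝ) + piFn α L (some (u,v)) x' y' ≤ piFn α L (some (u,v)) x y := by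
              rw [piFn_some, piFn_some]
              set A' := ((u:ℝ)+1)*(L:ℝ) - (x':ℝ) with hA'd
              set B' := ((v:ℝ)+1)*(L:ℝ) - (y':ℝ) with hB'd
              set W := ((u:ℝ)+1)*(L:ℝ) - (x:ℝ) with hWd
              set B := ((v:ℝ)+1)*(L:ℝ) - (y:ℝ) with hBd
              have s1 : max 0 (max A' B') ≤ max 0 B' :=
                max_le (le_max_left 0 B') (max_le (le_trans hA'neg (le_max_left 0 B')) (le_max_right 0 B'))
              have s2 : max 0 B' ≤ max 0 (B - (dN:ℝ)) :=
                max_le_max (le_refl 0) (by rw [hB'd, hBd]; linarith)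
              have s3 : (dN:ℝ) + max 0 (B - (dN:ℝ)) ≤ max 0 B :=
                max_shift (by linarith) (by positivity)
              have s4 : max 0 B ≤ max 0 (max W B) := max_le_max (le_refl 0) (le_max_right W B)
              have := mul_le_mul_of_nonneg_left (a := α) (by linarith : (dN:ℝ) + max 0 (max A' B') ≤ max 0 (max W B)) hα.le
              linarith [this]
            have keyα : α * (g.length:ℝ) ≤ α * (dN:ℝ) := mul_le_mul_of_nonneg_left hμd hα.le
            linarith [hJb, key1, keyα, hkey, hβm]
      · -- distinct symbols, r ≠ []
        have hLR0 : (0:ℝ) ≤ (L:ℝ)/R := by positivity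
        have hpi0 : 0 ≤ piFn α L e x y := piFn_nonneg hα.le L e x y
        have hμc : (g.length:ℝ) ≤ (cN:ℝ) := by exact_mod_cast hglen1
        have hμd : (g.length:ℝ) ≤ (dN:ℝ) := by exact_mod_cast hglen2
        have hcL : (cN:ℝ) ≤ (L:ℝ) := by exact_mod_cast hcN_le_L
        have hdL : (dN:ℝ) ≤ (L:ℝ) := by exact_mod_cast hdN_le_L
        have hΔxr : (x:ℝ) + cN ≤ (x':ℝ) := by exact_mod_cast hΔx
        have hΔyr : (y:ℝ) + dN ≤ (y':ℝ) := by exact_mod_cast hΔy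
        have hdivx : ((x/L : ℕ):ℝ) ≤ ((x'/L : ℕ):ℝ) := by exact_mod_cast Nat.div_le_div_right hxx'
        have hdivy : ((y/L : ℕ):ℝ) ≤ ((y'/L : ℕ):ℝ) := by exact_mod_cast Nat.div_le_div_right hyy'
        have hβm : ((a.length:ℝ) + b.length - 1 - ((x'/L : ℕ):ℝ) - ((y'/L : ℕ):ℝ)) * ((L:ℝ)/R)
            ≤ ((a.length:ℝ) + b.length - 1 - ((x/L : ℕ):ℝ) - ((y/L : ℕ):ℝ)) * ((L:ℝ)/R) :=
          mul_le_mul_of_nonneg_right (by linarith) hLR0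
        have hEinv : eInv L e x' y' r :=
          eInv_sub L e heinv hxx' hyy' (fun p hp => hr_sub.mem hp)
        obtain ⟨J, hJm, hJe, hJb⟩ := ih r hrlen hrI hrne x' y' e hxy' hEinv
        refine ⟨J, hJm, hJe, ?_⟩
        rw [hlenI]
        have hpim := piFn_mono hα.le L e hxx' hyy'
        by_cases hbig : ((L:ℝ)/R ≤ (cN:ℝ) ∧ (L:ℝ)/R ≤ (dN:ℝ))
        · have hgb := hg_count hst hbig.1 hbig.2
          have key1 : (1-α) * (((cN:ℝ)+dN)/2 + (((a.length:ℝ)*L - x') + ((b.length:ℝ)*L - y'))/2)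
              ≤ (1-α) * ((((a.length:ℝ)*L - x) + ((b.length:ℝ)*L - y))/2) :=
            mul_le_mul_of_nonneg_left (by linarith) (by linarith)
          linarith [hJb, hgb, hpim, hβm, key1]
        · have hsm : (g.length:ℝ) ≤ (L:ℝ)/R := by
            rcases not_and_or.mp hbig with hb | hb
            · push_neg at hb; linarith
            · push_neg at hb; linarith
          have key1 : (1-α) * ((((a.length:ℝ)*L - x') + ((b.length:ℝ)*L - y'))/2)
              ≤ (1-α) * ((((a.length:ℝ)*L - x) + ((b.length:ℝ)*L - y))/2) :=
            mul_le_mul_of_nonneg_left (by linarith) (by linarith)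
          have hβ2r : ((x/L : ℕ):ℝ) + ((y/L : ℕ):ℝ) + 1 ≤ ((x'/L : ℕ):ℝ) + ((y'/L : ℕ):ℝ) := by
            exact_mod_cast hβ2
          have hβm2 : (((a.length:ℝ) + b.length - 1 - ((x'/L : ℕ):ℝ) - ((y'/L : ℕ):ℝ)) + 1) * ((L:ℝ)/R)
              ≤ ((a.length:ℝ) + b.length - 1 - ((x/L : ℕ):ℝ) - ((y/L : ℕ):ℝ)) * ((L:ℝ)/R) :=
            mul_le_mul_of_nonneg_right (by linarith) hLR0
          linarith [hJb, hsm, hpim, key1, hβm2]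

end Aux


/-- Let `A : Σ → Λ^L` assign to each symbol a block of length `L`, and
let `a, b` be strings over `Σ`. If `f̄(C,D) ≥ α` for all consecutive substrings `C` of
`A s` and `D` of `A t` with `s ≠ t` (`s` a symbol of `a`, `t` a symbol of `b`) and
`|C|, |D| ≥ L/R`, where `0 < α < 1/7` and `R > 0`, then
`f̄(A(a₁)⋯A(aₙ), A(b₁)⋯A(bₘ)) > α·f̃(a,b) − 2/R`. -/
theorem statement12 {σ Λ : Type*} (L : ℕ) (hL : 0 < L)
    (A : σ → List Λ) (hA : ∀ s, (A s).length = L)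
    (a b : List σ) (α R : ℝ) (hα : 0 < α) (hα' : α < 1/7) (hR : 0 < R)
    (hsep : ∀ s ∈ a, ∀ t ∈ b, s ≠ t → ∀ C D : List Λ, C <:+: A s → D <:+: A t →
      (L : ℝ) / R ≤ C.length → (L : ℝ) / R ≤ D.length → α ≤ fbar C D) :
    α * ftilde a b - 2 / R < fbar ((a.map A).flatten) ((b.map A).flatten) := by
  classical
  have hα1 : α ≤ 1 := by linarith
  have hft1 := Aux.ftilde_le_one a b
  have hft0 := Aux.ftilde_nonneg a b
  have hprod : α * ftilde a b ≤ α * 1 := mul_le_mul_of_nonneg_left hft1 hα.le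
  have hR2 : (0:ℝ) < 2/R := by positivity
  rcases eq_or_ne a [] with rfl | hane
  · rw [show ((List.map A []).flatten : List Λ) = [] by simp, Aux.fbar_empty_left]
    linarith
  rcases eq_or_ne b [] with rfl | hbne
  · rw [show ((List.map A []).flatten : List Λ) = [] by simp, Aux.fbar_empty_right]
    linarith
  have hn : 0 < a.length := List.length_pos_iff.mpr hane
  have hm : 0 < b.length := List.length_pos_iff.mpr hbne
  set abar := (a.map A).flatten with habar
  set bbar := (b.map A).flatten with hbbar
  have hflatA : abar.length = a.length * L := Aux.length_flatten_map L A hA a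
  have hflatB : bbar.length = b.length * L := Aux.length_flatten_map L A hA b
  set K := maxApproxMatch a b with hK
  set T : ℝ := (a.length : ℝ) + b.length with hT
  have hT2 : (2:ℝ) ≤ T := by
    rw [hT]
    have h1 : (1:ℝ) ≤ (a.length:ℝ) := by exact_mod_cast hn
    have h2 : (1:ℝ) ≤ (b.length:ℝ) := by exact_mod_cast hm
    linarith
  have hTpos : (0:ℝ) < T := by linarith
  have hLpos : (0:ℝ) < (L:ℝ) := by exact_mod_cast hL
  -- key bound on maxMatch
  have hM : (maxMatch abar bbar : ℝ) ≤ (1-α)*T*L/2 + α*L*K + (T-1)*((L:ℝ)/R) := by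
    obtain ⟨I, hIm, hIlen⟩ := Aux.exists_maxMatch abar bbar
    rcases eq_or_ne I [] with rfl | hIne
    · rw [← hIlen]
      simp only [List.length_nil, Nat.cast_zero]
      have h1 : (0:ℝ) ≤ (1-α)*T*L/2 := by
        apply div_nonneg _ (by norm_num)
        exact mul_nonneg (mul_nonneg (by linarith) hTpos.le) hLpos.le
      have h2 : (0:ℝ) ≤ α*(L:ℝ)*(K:ℝ) := by positivity
      have h3 : (0:ℝ) ≤ (T-1)*((L:ℝ)/R) := mul_nonneg (by linarith) (by positivity)
      linarith
    · obtain ⟨J, hJm, -, hJb⟩ :=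
        Aux.rec_bound L hL A hA a b α R hα hα1 hR hsep I.length I le_rfl hIm hIne 0 0 none
          (fun p _ => ⟨Nat.zero_le _, Nat.zero_le _⟩) trivial
      have hJK : (J.length : ℝ) ≤ (K:ℝ) := by
        exact_mod_cast Aux.le_maxApproxMatch (Aux.isApproxMatch_of_isMatch hJm)
      have hJK2 : α*L*(J.length:ℝ) ≤ α*L*(K:ℝ) :=
        mul_le_mul_of_nonneg_left hJK (by positivity)
      rw [← hIlen]
      rw [Aux.piFn_none] at hJb
      simp only [Nat.zero_div, Nat.cast_zero] at hJb
      calc (I.length : ℝ) ≤ _ := hJb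
        _ ≤ (1-α)*T*L/2 + α*L*K + (T-1)*((L:ℝ)/R) := by
          rw [hT]
          push_cast
          linarith [hJK2]
  have hlen_sum : ((abar.length : ℝ) + bbar.length) = T * L := by
    rw [hflatA, hflatB, hT]
    push_cast
    ring
  have hfbar : fbar abar bbar = 1 - 2*(maxMatch abar bbar : ℝ)/(T*L) := by
    rw [fbar, hlen_sum]
  have h1 : 2*(maxMatch abar bbar : ℝ)/(T*L) ≤ (1-α) + 2*α*K/T + 2*(T-1)/(T*R) := by
    rw [div_le_iff₀ (by positivity)]
    have expand : ((1-α) + 2*α*K/T + 2*(T-1)/(T*R)) * (T*L)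
        = (1-α)*T*L + 2*(α*L*K) + 2*((T-1)*((L:ℝ)/R)) := by
      field_simp
    rw [expand]
    linarith [hM]
  have h2 : 2*(T-1)/(T*R) < 2/R := by
    rw [div_lt_div_iff₀ (by positivity) hR]
    nlinarith [hR, hTpos]
  rcases le_or_gt (1 - 2*(K:ℝ)/T) 0 with hf | hf
  · have hfeq : ftilde a b = 0 := by
      rw [ftilde, ← hT]
      exact max_eq_left hf
    rw [hfeq]
    have := Aux.fbar_nonneg abar bbar
    linarith
  · have hfeq : ftilde a b = 1 - 2*(K:ℝ)/T := by
      rw [ftilde, ← hT]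
      exact max_eq_right hf.le
    rw [hfeq, hfbar]
    have hexp : α * (1 - 2*(K:ℝ)/T) = α - 2*(α*(K:ℝ)/T) := by ring
    have hse : 2*α*(K:ℝ)/T = 2*(α*(K:ℝ)/T) := by ring
    rw [hse] at h1
    linarith [h1, h2]
end
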